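/- arXiv:1702.00852 — 15 statements merged into one kernel-verified Lean document; each statement's English description precedes it below -/
import Mathlib

section
/- Let f ∈ H and let f̂ ∈ H satisfy P_S f̂ = P_S f. Then f̂ minimizes ‖g − P_T g‖ over all g ∈ H with P_S g = P_S f (i.e., f̂ solves the sample consistent reconstruction problem inf ‖g − P_T g‖ subject to P_S g = P_S f) if and only if P_{S⊥} P_{T⊥} f̂ = 0. -/
open scoped InnerProductSpace
set_option linter.unusedSectionVars false

section aux
variable {𝕜 H : Type*} [RCLike 𝕜] [NormedAddCommGroup H] [InnerProductSpace 𝕜 H]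
    [CompleteSpace H]

lemma aux_constraint (S : Submodule 𝕜 H) [S.HasOrthogonalProjection] {a b : H} :
    (S.orthogonalProjectionOnto a : H) = (S.orthogonalProjectionOnto b : H) ↔ a - b ∈ Sᗮ := by
  rw [← Submodule.orthogonalProjectionOnto_eq_zero_iff (K := S)]
  constructor
  · intro h
    ext
    simp [map_sub, h]
  · intro h
    have := congrArg (fun x : S => (x : H)) h
    simpa [map_sub, sub_eq_zero] using this

lemma aux_inner_qfhat (S T : Submodule 𝕜 H) [S.HasOrthogonalProjection]
    [T.HasOrthogonalProjection] (x : H) {u : H} (hu : u ∈ Sᗮ)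
    (hq : x - (T.orthogonalProjectionOnto x : H) ∈ S) :
    ⟪x - (T.orthogonalProjectionOnto x : H), u - (T.orthogonalProjectionOnto u : H)⟫_𝕜 = 0 := by
  have h1 : ⟪x - (T.orthogonalProjectionOnto x : H), u⟫_𝕜 = 0 :=
    Submodule.inner_right_of_mem_orthogonal hq hu
  have h2 : ⟪x - (T.orthogonalProjectionOnto x : H), (T.orthogonalProjectionOnto u : H)⟫_𝕜 = 0 :=
    Submodule.inner_left_of_mem_orthogonal (T.orthogonalProjectionOnto u).2
      (Submodule.sub_starProjection_mem_orthogonal x)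
  rw [inner_sub_right, h1, h2, sub_zero]

end aux

/-- Let `f ∈ H` and let `fhat ∈ H` satisfy `P_S fhat = P_S f`. Then `fhat` minimizes
`‖g − P_T g‖` over all `g ∈ H` with `P_S g = P_S f` (i.e. `fhat` solves the sample consistent
reconstruction problem) if and only if `P_{S⊥} P_{T⊥} fhat = 0`. -/
theorem stmt_0 {𝕜 H : Type*} [RCLike 𝕜] [NormedAddCommGroup H] [InnerProductSpace 𝕜 H]
    [CompleteSpace H] (S T : Submodule 𝕜 H)
    [S.HasOrthogonalProjection] [T.HasOrthogonalProjection]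
    (f fhat : H) (hconsist : (S.orthogonalProjectionOnto fhat : H) = (S.orthogonalProjectionOnto f : H)) :
    (∀ g : H, (S.orthogonalProjectionOnto g : H) = (S.orthogonalProjectionOnto f : H) →
        ‖fhat - (T.orthogonalProjectionOnto fhat : H)‖ ≤ ‖g - (T.orthogonalProjectionOnto g : H)‖) ↔
      (Sᗮ.orthogonalProjectionOnto (fhat - (T.orthogonalProjectionOnto fhat : H)) : H) = 0 := by
  set q : H := fhat - (T.orthogonalProjectionOnto fhat : H) with hqdef
  constructor
  · -- minimality → P_{S⊥} q = 0
    intro hmin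
    set w : H := (Sᗮ.orthogonalProjectionOnto q : H) with hwdef
    have hw_mem : w ∈ Sᗮ := (Sᗮ.orthogonalProjectionOnto q).2
    -- ⟪q, w⟫ = ‖w‖²
    have hinner_qw : ⟪q, w⟫_𝕜 = (‖w‖ : 𝕜) ^ 2 := by
      have hsplit : q = w + (q - w) := by abel
      have h0 : ⟪q - w, w⟫_𝕜 = 0 :=
        Submodule.inner_left_of_mem_orthogonal hw_mem
          (Submodule.sub_starProjection_mem_orthogonal (K := Sᗮ) q)
      calc ⟪q, w⟫_𝕜 = ⟪w, w⟫_𝕜 + ⟪q - w, w⟫_𝕜 := by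
            rw [← inner_add_left, show w + (q - w) = q from by abel]
        _ = (‖w‖ : 𝕜) ^ 2 := by rw [h0, add_zero, inner_self_eq_norm_sq_to_K]
    -- candidate g := fhat - w
    set g : H := fhat - w with hgdef
    have hgcon : (S.orthogonalProjectionOnto g : H) = (S.orthogonalProjectionOnto f : H) := by
      rw [← hconsist]
      refine (aux_constraint S).2 ?_
      rw [show g - fhat = -w from by rw [hgdef]; abel]
      exact Sᗮ.neg_mem hw_mem
    have hle := hmin g hgcon
    -- q g = q - (w - P_T w)
    set qw : H := w - (T.orthogonalProjectionOnto w : H) with hqwdef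
    have hqg : g - (T.orthogonalProjectionOnto g : H) = q - qw := by
      simp only [hgdef, hqwdef, hqdef, map_sub, Submodule.coe_sub]
      abel
    -- inner of q with qw
    have hinner : ⟪q, qw⟫_𝕜 = (‖w‖ : 𝕜) ^ 2 := by
      have h2 : ⟪q, (T.orthogonalProjectionOnto w : H)⟫_𝕜 = 0 :=
        Submodule.inner_left_of_mem_orthogonal (T.orthogonalProjectionOnto w).2
          (Submodule.sub_starProjection_mem_orthogonal fhat)
      rw [hqwdef, inner_sub_right, h2, sub_zero, hinner_qw]
    -- ‖qw‖ ≤ ‖w‖ by Pythagoras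
    have hqw_le : ‖qw‖ ≤ ‖w‖ := by
      have h0 : ⟪(T.orthogonalProjectionOnto w : H), qw⟫_𝕜 = 0 :=
        (Submodule.inner_right_of_mem_orthogonal (T.orthogonalProjectionOnto w).2
          (Submodule.sub_starProjection_mem_orthogonal (K := T) w))
      have hpyth := norm_add_sq_eq_norm_sq_add_norm_sq_of_inner_eq_zero _ _ h0
      have hsum : (T.orthogonalProjectionOnto w : H) + qw = w := by rw [hqwdef]; abel
      rw [hsum] at hpyth
      nlinarith [norm_nonneg qw, norm_nonneg ((T.orthogonalProjectionOnto w : H)), norm_nonneg w]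
    -- expand ‖q - qw‖²
    have hexp : ‖q - qw‖ ^ 2 = ‖q‖ ^ 2 - 2 * ‖w‖ ^ 2 + ‖qw‖ ^ 2 := by
      have hre : RCLike.re ⟪q, qw⟫_𝕜 = ‖w‖ ^ 2 := by
        rw [hinner, ← RCLike.ofReal_pow, RCLike.ofReal_re]
      have := norm_sub_sq (𝕜 := 𝕜) q qw
      rw [hre] at this
      linarith
    rw [hqg] at hle
    have hsq : ‖q‖ ^ 2 ≤ ‖q - qw‖ ^ 2 := by
      have := norm_nonneg q
      nlinarith
    have hw0 : ‖w‖ = 0 := by nlinarith [norm_nonneg w, norm_nonneg qw]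
    simpa [hwdef] using norm_eq_zero.1 hw0
  · -- P_{S⊥} q = 0 → minimality
    intro h0 g hg
    have hqS : q ∈ S := by
      have : q ∈ Sᗮᗮ := Submodule.orthogonalProjectionOnto_eq_zero_iff.1 (by ext; exact h0)
      rwa [Submodule.orthogonal_orthogonal] at this
    have hgf : g - fhat ∈ Sᗮ := (aux_constraint S).1 (hg.trans hconsist.symm)
    set d : H := (g - fhat) - (T.orthogonalProjectionOnto (g - fhat) : H) with hddef
    have hqg : g - (T.orthogonalProjectionOnto g : H) = q + d := by
      simp only [hddef, hqdef, map_sub, Submodule.coe_sub]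
      abel
    have hiz : ⟪q, d⟫_𝕜 = 0 := aux_inner_qfhat S T fhat hgf hqS
    have hpyth := norm_add_sq_eq_norm_sq_add_norm_sq_of_inner_eq_zero q d hiz
    rw [hqg]
    nlinarith [norm_nonneg d, norm_nonneg q, norm_nonneg (q + d)]
end

section
/- Let f ∈ H and let f̂ be a sample consistent reconstruction of f. Then f̂ − P_T f̂ belongs to the closed subspace S ∩ T⊥, and the orthogonal decomposition f̂ = P_T f̂ + P_{S∩T⊥} f holds, where P_{S∩T⊥} is the orthogonal projection onto S ∩ T⊥. -/
/-- If `fhat` is a sample consistent reconstruction of `f` (i.e. `P_S fhat = P_S f`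
and `P_{S⊥} P_{T⊥} fhat = 0`), then `fhat − P_T fhat ∈ S ∩ T⊥` and the orthogonal decomposition
`fhat = P_T fhat + P_{S∩T⊥} f` holds. -/
theorem stmt_2 {𝕜 H : Type*} [RCLike 𝕜] [NormedAddCommGroup H] [InnerProductSpace 𝕜 H]
    [CompleteSpace H] (S T : Submodule 𝕜 H)
    [Submodule.HasOrthogonalProjection S] [Submodule.HasOrthogonalProjection T]
    [Submodule.HasOrthogonalProjection (S ⊓ Tᗮ)]
    (f fhat : H)
    (hconsist : (Submodule.orthogonalProjectionOnto S fhat : H) = (Submodule.orthogonalProjectionOnto S f : H))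
    (hmin : (Submodule.orthogonalProjectionOnto Sᗮ (fhat - (Submodule.orthogonalProjectionOnto T fhat : H)) : H) = 0) :
    fhat - (Submodule.orthogonalProjectionOnto T fhat : H) ∈ S ⊓ Tᗮ ∧
      fhat = (Submodule.orthogonalProjectionOnto T fhat : H) + (Submodule.orthogonalProjectionOnto (S ⊓ Tᗮ) f : H) := by
  set w := fhat - (Submodule.orthogonalProjectionOnto T fhat : H) with hw
  have hwS : w ∈ S := by
    have := Submodule.starProjection_add_starProjection_orthogonal (K := S) w
    simp only [Submodule.starProjection_apply] at this
    rw [hmin, add_zero] at this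
    rw [← this]; exact (Submodule.orthogonalProjectionOnto S w).2
  have hwT : w ∈ Tᗮ := Submodule.sub_starProjection_mem_orthogonal fhat
  have hmem : w ∈ S ⊓ Tᗮ := ⟨hwS, hwT⟩
  refine ⟨hmem, ?_⟩
  have hproj : (Submodule.orthogonalProjectionOnto (S ⊓ Tᗮ) f : H) = w := by
    apply Submodule.eq_starProjection_of_mem_orthogonal hmem
    have h1 : f - fhat ∈ Sᗮ := by
      rw [Submodule.mem_orthogonal']
      intro u hu
      have key : f - fhat = (f - (Submodule.orthogonalProjectionOnto S f : H))
          - (fhat - (Submodule.orthogonalProjectionOnto S fhat : H)) := by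
        rw [hconsist]; abel
      rw [key, inner_sub_left, ← Submodule.starProjection_apply, ← Submodule.starProjection_apply,
        Submodule.starProjection_inner_eq_zero f u hu,
        Submodule.starProjection_inner_eq_zero fhat u hu, sub_zero]
    have h2 : (Submodule.orthogonalProjectionOnto T fhat : H) ∈ Tᗮᗮ :=
      T.le_orthogonal_orthogonal (Submodule.orthogonalProjectionOnto T fhat).2
    have : f - w = (f - fhat) + (Submodule.orthogonalProjectionOnto T fhat : H) := by
      rw [hw]; abel
    rw [this]
    apply Submodule.add_mem _
    · exact Submodule.orthogonal_le inf_le_left h1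
    · exact Submodule.orthogonal_le inf_le_right h2
  rw [hproj, hw]; abel
end

section
/- Let f ∈ H, let f̂ be a sample consistent reconstruction of f, let t̂ = P_T f̂, and for 0 ≤ α ≤ 1 set f̂_α = α f̂ + (1 − α) t̂. Then the reconstruction error satisfies ‖f̂_α − f‖² = ‖f̂ − f‖² + (1 − α)² ‖P_{S∩T⊥} f‖². -/
/-- Let `fhat` be a sample consistent reconstruction of `f`, `that = P_T fhat`, and
for `0 ≤ α ≤ 1` set `fα = α • fhat + (1 − α) • that`. Then
`‖fα − f‖² = ‖fhat − f‖² + (1 − α)² ‖P_{S∩T⊥} f‖²`. -/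
theorem stmt_3 {𝕜 H : Type*} [RCLike 𝕜] [NormedAddCommGroup H] [InnerProductSpace 𝕜 H]
    [CompleteSpace H] (S T : Submodule 𝕜 H)
    [Submodule.HasOrthogonalProjection S] [Submodule.HasOrthogonalProjection T]
    [Submodule.HasOrthogonalProjection (S ⊓ Tᗮ)]
    (f fhat : H)
    (hconsist : (Submodule.orthogonalProjectionOnto S fhat : H) = (Submodule.orthogonalProjectionOnto S f : H))
    (hmin : (Submodule.orthogonalProjectionOnto Sᗮ (fhat - (Submodule.orthogonalProjectionOnto T fhat : H)) : H) = 0)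
    (α : ℝ) (hα0 : 0 ≤ α) (hα1 : α ≤ 1) :
    ‖((α : 𝕜) • fhat + ((1 - α : ℝ) : 𝕜) • (Submodule.orthogonalProjectionOnto T fhat : H)) - f‖ ^ 2 =
      ‖fhat - f‖ ^ 2 + (1 - α) ^ 2 * ‖(Submodule.orthogonalProjectionOnto (S ⊓ Tᗮ) f : H)‖ ^ 2 := by
  set that : H := (Submodule.orthogonalProjectionOnto T fhat : H) with hthat
  set d : H := fhat - that with hd
  -- d ∈ S
  have hdS : d ∈ S := by
    have h1 : d - (Submodule.orthogonalProjectionOnto Sᗮ d : H) ∈ Sᗮᗮ :=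
      Submodule.sub_starProjection_mem_orthogonal d
    rw [hmin, sub_zero, Submodule.orthogonal_orthogonal] at h1
    exact h1
  -- d ∈ Tᗮ
  have hdT : d ∈ Tᗮ := by
    have := Submodule.sub_starProjection_mem_orthogonal (K := T) fhat
    simp only [hd, hthat]
    exact this
  -- fhat - f ∈ Sᗮ
  have hfS : fhat - f ∈ Sᗮ := by
    have h1 : fhat - (Submodule.orthogonalProjectionOnto S fhat : H) ∈ Sᗮ := Submodule.sub_starProjection_mem_orthogonal (K := S) fhat
    have h2 : f - (Submodule.orthogonalProjectionOnto S f : H) ∈ Sᗮ := Submodule.sub_starProjection_mem_orthogonal (K := S) f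
    have h3 := Sᗮ.sub_mem h1 h2
    rw [hconsist, sub_sub_sub_cancel_right] at h3
    exact h3
  -- d is the orthogonal projection of f on S ⊓ Tᗮ
  have hdproj : (Submodule.orthogonalProjectionOnto (S ⊓ Tᗮ) f : H) = d := by
    apply Submodule.eq_starProjection_of_mem_of_inner_eq_zero (Submodule.mem_inf.mpr ⟨hdS, hdT⟩)
    intro w hw
    have hw' : w ∈ S ⊓ Tᗮ := hw
    have e1 : (inner 𝕜 (f - fhat) w) = 0 := by
      have := Submodule.inner_left_of_mem_orthogonal hw'.1 (Sᗮ.neg_mem hfS)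
      simpa [neg_sub] using this
    have e2 : (inner 𝕜 that w) = 0 :=
      Submodule.inner_right_of_mem_orthogonal (by rw [hthat]; exact (Submodule.orthogonalProjectionOnto T fhat).2) hw'.2
    have : f - d = (f - fhat) + that := by rw [hd]; abel
    rw [this, inner_add_left, e1, e2, add_zero]
  -- rewrite the vector
  have key : ((α : 𝕜) • fhat + ((1 - α : ℝ) : 𝕜) • that) - f
      = (fhat - f) - ((1 - α : ℝ) : 𝕜) • d := by
    have hc : ((1 - α : ℝ) : 𝕜) = 1 - (α : 𝕜) := by push_cast; ring
    rw [hd, hc]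
    module
  have hinner : (inner 𝕜 (fhat - f) (((1 - α : ℝ) : 𝕜) • d)) = 0 := by
    rw [inner_smul_right, Submodule.inner_left_of_mem_orthogonal hdS hfS, mul_zero]
  rw [key, hdproj, @norm_sub_sq 𝕜, hinner]
  have hnorm : ‖((1 - α : ℝ) : 𝕜) • d‖ = (1 - α) * ‖d‖ := by
    rw [norm_smul, RCLike.norm_ofReal, abs_of_nonneg (by linarith)]
  rw [hnorm]
  simp [mul_pow]
end

section
/- For every f ∈ H, the shortest distance between the sample consistent plane P_S f + S⊥ and the guiding subspace T equals the norm of the projection of f onto S ∩ T⊥; that is, inf{‖(P_S f + x) − t‖ : x ∈ S⊥, t ∈ T} = ‖P_{S∩T⊥} f‖. -/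
/-- For every `f ∈ H`, the shortest distance between the sample consistent plane
`P_S f + S⊥` and the guiding subspace `T` equals `‖P_{S∩T⊥} f‖`:
`inf {‖(P_S f + x) − t‖ : x ∈ S⊥, t ∈ T} = ‖P_{S∩T⊥} f‖`. -/
theorem stmt_4 {𝕜 H : Type*} [RCLike 𝕜] [NormedAddCommGroup H] [InnerProductSpace 𝕜 H]
    [CompleteSpace H] (S T : Submodule 𝕜 H)
    [Submodule.HasOrthogonalProjection S] [Submodule.HasOrthogonalProjection T]
    [Submodule.HasOrthogonalProjection (S ⊓ Tᗮ)] (f : H) :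
    sInf {d : ℝ | ∃ x ∈ Sᗮ, ∃ t ∈ T, d = ‖((S.orthogonalProjectionOnto f : H) + x) - t‖} =
      ‖((S ⊓ Tᗮ).orthogonalProjectionOnto f : H)‖ := by
  set v : H := (S.orthogonalProjectionOnto f : H) with hv
  set K : Submodule 𝕜 H := S ⊓ Tᗮ with hK
  set W : Submodule 𝕜 H := Sᗮ ⊔ T with hW
  have hWorth : Wᗮ = K := by
    rw [hW, ← Submodule.inf_orthogonal, Submodule.orthogonal_orthogonal]
  -- the set is the range of distances from v to W
  have hset : {d : ℝ | ∃ x ∈ Sᗮ, ∃ t ∈ T, d = ‖(v + x) - t‖} =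
      Set.range (fun w : ↥W => dist v (w : H)) := by
    ext d
    constructor
    · rintro ⟨x, hx, t, ht, rfl⟩
      refine ⟨⟨t - x, ?_⟩, ?_⟩
      · exact Submodule.sub_mem _ (Submodule.mem_sup_right ht) (Submodule.mem_sup_left hx)
      · simp only [dist_eq_norm]; congr 1; abel
    · rintro ⟨⟨w, hw⟩, rfl⟩
      rw [hW, Submodule.mem_sup] at hw
      obtain ⟨x, hx, t, ht, rfl⟩ := hw
      exact ⟨-x, Submodule.neg_mem _ hx, t, ht, by simp only [dist_eq_norm]; congr 1; abel⟩
  rw [hset]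
  have hne : Nonempty ↥W := ⟨0⟩
  have h1 : sInf (Set.range (fun w : ↥W => dist v (w : H))) = Metric.infDist v (W : Set H) := by
    rw [Metric.infDist_eq_iInf]; rfl
  rw [h1, ← Metric.infDist_closure]
  have hcl : closure (W : Set H) = ((Kᗮ : Submodule 𝕜 H) : Set H) := by
    rw [← Submodule.topologicalClosure_coe]
    rw [← W.orthogonal_orthogonal_eq_closure, hWorth]
  rw [hcl]
  have hne2 : Nonempty ↥(Kᗮ) := ⟨0⟩
  have hfin : Metric.infDist v ((Kᗮ : Submodule 𝕜 H) : Set H)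
      = ‖v - (Kᗮ.orthogonalProjectionOnto v : H)‖ := by
    rw [Metric.infDist_eq_iInf, Submodule.coe_orthogonalProjectionOnto_apply, Submodule.starProjection_minimal]
    simp_rw [dist_eq_norm]
    rfl
  rw [hfin]
  have h3 : v - (Kᗮ.orthogonalProjectionOnto v : H) = (K.orthogonalProjectionOnto v : H) := by
    have h4 : (Kᗮ.orthogonalProjectionOnto v : H) = v - (K.orthogonalProjectionOnto v : H) :=
      congrArg Subtype.val (Submodule.orthogonalProjectionOnto_orthogonal (K := K) v)
    rw [h4]; abel
  rw [h3]
  congr 1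
  have h5 : K ≤ S := inf_le_left
  rw [hv]
  exact congrArg Subtype.val (Submodule.orthogonalProjectionOnto_starProjection_of_le h5 f)
end

section
/- Let f ∈ H. If f̂₁ and f̂₂ are both sample consistent reconstructions of f, then f̂₁ − f̂₂ ∈ S⊥ ∩ T; conversely, if f̂ is a sample consistent reconstruction of f and w ∈ S⊥ ∩ T, then f̂ + w is also a sample consistent reconstruction of f. Consequently, the set of all sample consistent reconstructions of f is the plane f̂ + (S⊥ ∩ T), and the sample consistent reconstruction of every f ∈ H is unique (whenever it exists) if and only if S⊥ ∩ T = {0}. -/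
/-- `fhat` is a sample consistent reconstruction of `f`: `P_S fhat = P_S f` and
`P_{S⊥} P_{T⊥} fhat = 0`. -/
def IsSCR {𝕜 H : Type*} [RCLike 𝕜] [NormedAddCommGroup H] [InnerProductSpace 𝕜 H]
    (S T : Submodule 𝕜 H) [Submodule.HasOrthogonalProjection S] [Submodule.HasOrthogonalProjection T]
    (f fhat : H) : Prop :=
  (Submodule.orthogonalProjectionOnto S fhat : H) = (Submodule.orthogonalProjectionOnto S f : H) ∧
    (Submodule.orthogonalProjectionOnto Sᗮ (fhat - (Submodule.orthogonalProjectionOnto T fhat : H)) : H) = 0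

private lemma scr_diff {𝕜 H : Type*} [RCLike 𝕜] [NormedAddCommGroup H] [InnerProductSpace 𝕜 H]
    [CompleteSpace H] (S T : Submodule 𝕜 H)
    [Submodule.HasOrthogonalProjection S] [Submodule.HasOrthogonalProjection T]
    (f fhat₁ fhat₂ : H) (h₁ : IsSCR S T f fhat₁) (h₂ : IsSCR S T f fhat₂) :
    fhat₁ - fhat₂ ∈ Sᗮ ⊓ T := by
  set d := fhat₁ - fhat₂ with hd
  have hdS : d ∈ Sᗮ := by
    rw [← Submodule.orthogonalProjectionOnto_eq_zero_iff]
    have : (Submodule.orthogonalProjectionOnto S d : H) = 0 := by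
      simp [hd, map_sub, h₁.1, h₂.1]
    exact_mod_cast this
  -- u := d - P_T d
  set u : H := d - (Submodule.orthogonalProjectionOnto T d : H) with hu
  have huT : u ∈ Tᗮ := Submodule.sub_starProjection_mem_orthogonal d
  have huS : u ∈ S := by
    have h : (Submodule.orthogonalProjectionOnto Sᗮ u : H) = 0 := by
      have := h₁.2
      have h2 := h₂.2
      have : (Submodule.orthogonalProjectionOnto Sᗮ
          ((fhat₁ - (Submodule.orthogonalProjectionOnto T fhat₁ : H)) -
            (fhat₂ - (Submodule.orthogonalProjectionOnto T fhat₂ : H))) : H) = 0 := by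
        rw [map_sub]; push_cast
        rw [this, h2, sub_zero]
      have heq : (fhat₁ - (Submodule.orthogonalProjectionOnto T fhat₁ : H)) -
            (fhat₂ - (Submodule.orthogonalProjectionOnto T fhat₂ : H)) = u := by
        simp only [hu, hd, map_sub]
        push_cast
        abel
      rwa [heq] at this
    have h' : u ∈ Sᗮᗮ := by
      rw [← Submodule.orthogonalProjectionOnto_eq_zero_iff]
      exact_mod_cast h
    rwa [Submodule.orthogonal_orthogonal] at h'
  have hu0 : u = 0 := by
    have h1 : inner 𝕜 u d = (0 : 𝕜) := (Submodule.mem_orthogonal _ _).1 hdS u huS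
    have h2 : inner 𝕜 u ((Submodule.orthogonalProjectionOnto T d : H)) = (0 : 𝕜) :=
      inner_eq_zero_symm.mp (huT _ (Submodule.orthogonalProjectionOnto T d).2)
    have : inner 𝕜 u u = (0 : 𝕜) := by
      rw [hu] at *
      rw [inner_sub_right, h1, h2, sub_zero]
    exact inner_self_eq_zero.mp this
  have hdT : d ∈ T := by
    have hd' : d = (Submodule.orthogonalProjectionOnto T d : H) := sub_eq_zero.mp hu0
    rw [hd']; exact (Submodule.orthogonalProjectionOnto T d).2
  exact ⟨hdS, hdT⟩

/-- differences of sample consistent reconstructions lie in `S⊥ ∩ T`; adding any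
element of `S⊥ ∩ T` to a sample consistent reconstruction yields another one; hence the set of
all sample consistent reconstructions of `f` is the plane `fhat + (S⊥ ∩ T)`, and sample
consistent reconstructions are unique (whenever they exist) iff `S⊥ ∩ T = {0}`. -/
theorem stmt_5 {𝕜 H : Type*} [RCLike 𝕜] [NormedAddCommGroup H] [InnerProductSpace 𝕜 H]
    [CompleteSpace H] (S T : Submodule 𝕜 H)
    [Submodule.HasOrthogonalProjection S] [Submodule.HasOrthogonalProjection T] :
    (∀ f fhat₁ fhat₂ : H, IsSCR S T f fhat₁ → IsSCR S T f fhat₂ → fhat₁ - fhat₂ ∈ Sᗮ ⊓ T) ∧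
    (∀ f fhat w : H, IsSCR S T f fhat → w ∈ Sᗮ ⊓ T → IsSCR S T f (fhat + w)) ∧
    (∀ f fhat : H, IsSCR S T f fhat →
      {g : H | IsSCR S T f g} = {g : H | ∃ w ∈ Sᗮ ⊓ T, g = fhat + w}) ∧
    ((∀ f fhat₁ fhat₂ : H, IsSCR S T f fhat₁ → IsSCR S T f fhat₂ → fhat₁ = fhat₂) ↔
      Sᗮ ⊓ T = ⊥) := by
  have add_scr : ∀ f fhat w : H, IsSCR S T f fhat → w ∈ Sᗮ ⊓ T → IsSCR S T f (fhat + w) := by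
    intro f fhat w hf hw
    obtain ⟨hwS, hwT⟩ := hw
    constructor
    · rw [map_add]
      push_cast
      rw [Submodule.orthogonalProjectionOnto_apply_of_mem_orthogonal hwS]
      simpa using hf.1
    · have hPTw : (Submodule.orthogonalProjectionOnto T w : H) = w :=
        Submodule.starProjection_eq_self_iff.mpr hwT
      have : fhat + w - (Submodule.orthogonalProjectionOnto T (fhat + w) : H) =
          fhat - (Submodule.orthogonalProjectionOnto T fhat : H) := by
        rw [map_add]; push_cast; rw [hPTw]; abel
      rw [this, hf.2]
  refine ⟨scr_diff S T, add_scr, ?_, ?_⟩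
  · intro f fhat hf
    ext g
    simp only [Set.mem_setOf_eq]
    constructor
    · intro hg
      exact ⟨g - fhat, scr_diff S T f g fhat hg hf, by abel⟩
    · rintro ⟨w, hw, rfl⟩
      exact add_scr f fhat w hf hw
  · constructor
    · intro huniq
      rw [Submodule.eq_bot_iff]
      intro w hw
      have h0 : IsSCR S T 0 0 := ⟨rfl, by simp⟩
      have := huniq 0 (0 + w) 0 (add_scr 0 0 w h0 hw) h0
      simpa using this
    · intro hbot f fhat₁ fhat₂ h₁ h₂
      have := scr_diff S T f fhat₁ fhat₂ h₁ h₂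
      rw [hbot, Submodule.mem_bot, sub_eq_zero] at this
      exact this
end

section
/- Let M be a closed subspace of H, let f ∈ T with P_{S⊥} f ∈ M, and suppose x̂ is the unique minimizer of the functional x ↦ ‖P_{T⊥}(x + P_S f)‖² over x ∈ M ∩ S⊥. Then x̂ = P_{S⊥} f, and consequently the reconstruction f̂ = x̂ + P_S f equals f. -/
/-- Let `M` be a closed subspace, `f ∈ T` with `P_{S⊥} f ∈ M`, and suppose `xhat`
is the unique minimizer of `x ↦ ‖P_{T⊥}(x + P_S f)‖²` over `x ∈ M ∩ S⊥`. Then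
`xhat = P_{S⊥} f`, and the reconstruction `fhat = xhat + P_S f` equals `f`. -/
theorem stmt_7 {𝕜 H : Type*} [RCLike 𝕜] [NormedAddCommGroup H] [InnerProductSpace 𝕜 H]
    [CompleteSpace H] (S T M : Submodule 𝕜 H) (hM : IsClosed (M : Set H))
    [Submodule.HasOrthogonalProjection S] [Submodule.HasOrthogonalProjection T]
    (f : H) (hf : f ∈ T) (hfM : (Submodule.orthogonalProjectionOnto Sᗮ f : H) ∈ M)
    (xhat : H) (hxhat : xhat ∈ M ⊓ Sᗮ)
    (hmin : ∀ x ∈ M ⊓ Sᗮ,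
      ‖(xhat + (Submodule.orthogonalProjectionOnto S f : H)) -
          (Submodule.orthogonalProjectionOnto T (xhat + (Submodule.orthogonalProjectionOnto S f : H)) : H)‖ ^ 2 ≤
        ‖(x + (Submodule.orthogonalProjectionOnto S f : H)) -
          (Submodule.orthogonalProjectionOnto T (x + (Submodule.orthogonalProjectionOnto S f : H)) : H)‖ ^ 2)
    (huniq : ∀ x ∈ M ⊓ Sᗮ,
      (∀ y ∈ M ⊓ Sᗮ,
        ‖(x + (Submodule.orthogonalProjectionOnto S f : H)) -
            (Submodule.orthogonalProjectionOnto T (x + (Submodule.orthogonalProjectionOnto S f : H)) : H)‖ ^ 2 ≤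
          ‖(y + (Submodule.orthogonalProjectionOnto S f : H)) -
            (Submodule.orthogonalProjectionOnto T (y + (Submodule.orthogonalProjectionOnto S f : H)) : H)‖ ^ 2) →
      x = xhat) :
    xhat = (Submodule.orthogonalProjectionOnto Sᗮ f : H) ∧ xhat + (Submodule.orthogonalProjectionOnto S f : H) = f := by
  set g : H := (Submodule.orthogonalProjectionOnto Sᗮ f : H) with hg
  have hsum : g + (Submodule.orthogonalProjectionOnto S f : H) = f := by
    rw [add_comm]
    have := S.starProjection_add_starProjection_orthogonal f
    simp only [Submodule.starProjection_apply] at this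
    exact this
  have hgmem : g ∈ M ⊓ Sᗮ := ⟨hfM, (Submodule.orthogonalProjectionOnto Sᗮ f).2⟩
  have hzero : (g + (Submodule.orthogonalProjectionOnto S f : H)) -
      (Submodule.orthogonalProjectionOnto T (g + (Submodule.orthogonalProjectionOnto S f : H)) : H) = 0 := by
    rw [hsum, ← Submodule.starProjection_apply, Submodule.starProjection_eq_self_iff.mpr hf, sub_self]
  have heq : g = xhat := huniq g hgmem (by
    intro y hy
    rw [hzero]
    simpa using sq_nonneg _)
  exact ⟨heq.symm, heq ▸ hsum⟩
end

section
/- Let A be a bounded self-adjoint nonnegative operator on H and suppose 1/ρ := inf{⟨x, A x⟩ / ⟨x, x⟩ : x ∈ P_{S⊥}(range A), x ≠ 0} > 0, where P_{S⊥}(range A) = {P_{S⊥} A y : y ∈ H}. Then for every f ∈ H and every h ∈ range(A) + S there exists f̂ ∈ H with P_{S⊥}(A f̂ − h) = 0 and P_S f̂ = P_S f, and the minimal-norm solution x̂_n of the equivalent problem P_{S⊥}(A(x + P_S f) − h) = 0, x ∈ S⊥, satisfies ‖x̂_n‖² ≤ ρ² ‖P_{S⊥}(h − A P_S f)‖². 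-/
open scoped InnerProductSpace

/-- A coercive bounded operator on a Hilbert space is surjective. -/
lemma aux_surj_of_coercive {𝕜 E : Type*} [RCLike 𝕜] [NormedAddCommGroup E]
    [InnerProductSpace 𝕜 E] [CompleteSpace E] (T : E →L[𝕜] E) (c : ℝ) (hc : 0 < c)
    (hT : ∀ v : E, c * ‖v‖ ^ 2 ≤ RCLike.re (⟪v, T v⟫_𝕜)) : Function.Surjective T := by
  have key : ∀ v : E, c * ‖v‖ ≤ ‖T v‖ := by
    intro v
    have h1 : c * ‖v‖ ^ 2 ≤ ‖v‖ * ‖T v‖ := by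
      calc c * ‖v‖ ^ 2 ≤ RCLike.re (⟪v, T v⟫_𝕜) := hT v
        _ ≤ ‖(⟪v, T v⟫_𝕜)‖ := RCLike.re_le_norm _
        _ ≤ ‖v‖ * ‖T v‖ := norm_inner_le_norm _ _
    rcases eq_or_lt_of_le (norm_nonneg v) with h0 | h0
    · rw [← h0]; simp [norm_nonneg (T v)]
    · nlinarith
  have hanti : AntilipschitzWith (⟨c, hc.le⟩ : NNReal)⁻¹ T :=
    ContinuousLinearMap.antilipschitz_of_bound T (fun v => by
      show ‖v‖ ≤ c⁻¹ * ‖T v‖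
      rw [inv_mul_eq_div, le_div_iff₀ hc]
      linarith [key v])
  have hclosed : IsClosed (LinearMap.range (T : E →ₗ[𝕜] E) : Set E) := by
    have h := hanti.isClosed_range T.uniformContinuous
    have : (LinearMap.range (T : E →ₗ[𝕜] E) : Set E) = Set.range T := by
      ext x; simp
    rw [this]; exact h
  have htop : LinearMap.range (T : E →ₗ[𝕜] E) = ⊤ := by
    have h1 : (LinearMap.range (T : E →ₗ[𝕜] E)).topologicalClosure = LinearMap.range (T : E →ₗ[𝕜] E) :=
      SetLike.coe_injective (by
        rw [Submodule.topologicalClosure_coe]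
        exact hclosed.closure_eq)
    have h2 : (LinearMap.range (T : E →ₗ[𝕜] E)).topologicalClosure = ⊤ := by
      rw [Submodule.topologicalClosure_eq_top_iff]
      rw [Submodule.eq_bot_iff]
      intro u hu
      have h3 : ⟪T u, u⟫_𝕜 = 0 := hu (T u) (LinearMap.mem_range_self _ u)
      have h4 : ⟪u, T u⟫_𝕜 = 0 := by
        rw [← inner_conj_symm, h3, map_zero]
      have h5 : c * ‖u‖ ^ 2 ≤ 0 := by
        simpa [h4] using hT u
      have h6 : ‖u‖ ^ 2 ≤ 0 := by
        by_contra hcon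
        push_neg at hcon
        nlinarith
      have : ‖u‖ = 0 := by nlinarith [norm_nonneg u, sq_nonneg ‖u‖]
      simpa using this
    rw [← h1, h2]
  intro w
  have : w ∈ LinearMap.range (T : E →ₗ[𝕜] E) := htop ▸ Submodule.mem_top
  exact this

/-- Let `A` be a bounded self-adjoint nonnegative operator with
`1/ρ := inf {⟨x, A x⟩/⟨x, x⟩ : x ∈ P_{S⊥}(range A), x ≠ 0} > 0`. Then for every `f` and every
`h ∈ range A + S` there exists `fhat` with `P_{S⊥}(A fhat − h) = 0` and `P_S fhat = P_S f`, and
the minimal-norm solution `xn` of the equivalent problem `P_{S⊥}(A(x + P_S f) − h) = 0`, `x ∈ S⊥`,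
satisfies `‖xn‖² ≤ ρ² ‖P_{S⊥}(h − A P_S f)‖²`. -/
theorem stmt_10 {𝕜 H : Type*} [RCLike 𝕜] [NormedAddCommGroup H] [InnerProductSpace 𝕜 H]
    [CompleteSpace H] (S : Submodule 𝕜 H) [S.HasOrthogonalProjection]
    (A : H →L[𝕜] H) (hA : IsSelfAdjoint A)
    (hApos : ∀ x : H, 0 ≤ RCLike.re (⟪x, A x⟫_𝕜))
    (ρ : ℝ) (hρpos : 0 < ρ)
    (hρ : 1 / ρ = sInf {r : ℝ | ∃ y : H, (Submodule.orthogonalProjectionOnto Sᗮ (A y) : H) ≠ 0 ∧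
      r = RCLike.re (⟪(Submodule.orthogonalProjectionOnto Sᗮ (A y) : H),
            A (Submodule.orthogonalProjectionOnto Sᗮ (A y) : H)⟫_𝕜) /
          RCLike.re (⟪(Submodule.orthogonalProjectionOnto Sᗮ (A y) : H),
            (Submodule.orthogonalProjectionOnto Sᗮ (A y) : H)⟫_𝕜)})
    (f h : H) (hh : ∃ y : H, ∃ s ∈ S, h = A y + s) :
    (∃ fhat : H, (Submodule.orthogonalProjectionOnto Sᗮ (A fhat - h) : H) = 0 ∧
        (Submodule.orthogonalProjectionOnto S fhat : H) = (Submodule.orthogonalProjectionOnto S f : H)) ∧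
    ∀ xn : H, (xn ∈ Sᗮ ∧
        (Submodule.orthogonalProjectionOnto Sᗮ (A (xn + (Submodule.orthogonalProjectionOnto S f : H)) - h) : H) = 0 ∧
        ∀ x : H, x ∈ Sᗮ →
          (Submodule.orthogonalProjectionOnto Sᗮ (A (x + (Submodule.orthogonalProjectionOnto S f : H)) - h) : H) = 0 →
          ‖xn‖ ≤ ‖x‖) →
      ‖xn‖ ^ 2 ≤ ρ ^ 2 * ‖(Submodule.orthogonalProjectionOnto Sᗮ (h - A (Submodule.orthogonalProjectionOnto S f : H)) : H)‖ ^ 2 := by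
  obtain ⟨y, s, hsS, hhy⟩ := hh
  set P : H →L[𝕜] H := Sᗮ.subtypeL.comp (Submodule.orthogonalProjectionOnto Sᗮ) with hPdef
  have hPapply : ∀ x : H, P x = (Submodule.orthogonalProjectionOnto Sᗮ x : H) := fun x => rfl
  have hPmem : ∀ x : H, P x ∈ Sᗮ := fun x => SetLike.coe_mem _
  -- coercivity on the range of P ∘ A
  have hcoer0 : ∀ z : H, (1 / ρ) * ‖P (A z)‖ ^ 2 ≤ RCLike.re (⟪P (A z), A (P (A z))⟫_𝕜) := by
    intro z
    by_cases hz : P (A z) = 0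
    · simp [hz]
    · have hbdd : BddBelow {r : ℝ | ∃ y : H, (Submodule.orthogonalProjectionOnto Sᗮ (A y) : H) ≠ 0 ∧
          r = RCLike.re (⟪(Submodule.orthogonalProjectionOnto Sᗮ (A y) : H),
                A (Submodule.orthogonalProjectionOnto Sᗮ (A y) : H)⟫_𝕜) /
              RCLike.re (⟪(Submodule.orthogonalProjectionOnto Sᗮ (A y) : H),
                (Submodule.orthogonalProjectionOnto Sᗮ (A y) : H)⟫_𝕜)} := by
        refine ⟨0, ?_⟩
        rintro r ⟨w, hw, rfl⟩
        exact div_nonneg (hApos _) inner_self_nonneg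
      have hmem : RCLike.re (⟪P (A z), A (P (A z))⟫_𝕜) / RCLike.re (⟪P (A z), P (A z)⟫_𝕜) ∈
          {r : ℝ | ∃ y : H, (Submodule.orthogonalProjectionOnto Sᗮ (A y) : H) ≠ 0 ∧
          r = RCLike.re (⟪(Submodule.orthogonalProjectionOnto Sᗮ (A y) : H),
                A (Submodule.orthogonalProjectionOnto Sᗮ (A y) : H)⟫_𝕜) /
              RCLike.re (⟪(Submodule.orthogonalProjectionOnto Sᗮ (A y) : H),
                (Submodule.orthogonalProjectionOnto Sᗮ (A y) : H)⟫_𝕜)} := ⟨z, hz, rfl⟩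
      have hle : 1 / ρ ≤ RCLike.re (⟪P (A z), A (P (A z))⟫_𝕜) /
          RCLike.re (⟪P (A z), P (A z)⟫_𝕜) := hρ ▸ csInf_le hbdd hmem
      have hself : RCLike.re (⟪P (A z), P (A z)⟫_𝕜) = ‖P (A z)‖ ^ 2 := inner_self_eq_norm_sq _
      have hpos : (0 : ℝ) < ‖P (A z)‖ ^ 2 := pow_pos (norm_pos_iff.mpr hz) 2
      rw [hself] at hle
      rw [le_div_iff₀ hpos] at hle
      linarith
  -- the closed subspace M
  set M : Submodule 𝕜 H := (LinearMap.range ((P.comp A : H →L[𝕜] H) : H →ₗ[𝕜] H)).topologicalClosure with hMdef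
  haveI : CompleteSpace M := (Submodule.isClosed_topologicalClosure _).completeSpace_coe
  have hrangeM : ∀ z : H, P (A z) ∈ M := fun z =>
    Submodule.le_topologicalClosure _ (LinearMap.mem_range_self _ z)
  have hMS : M ≤ Sᗮ :=
    Submodule.topologicalClosure_minimal _
      (by rintro _ ⟨z, rfl⟩; exact hPmem (A z)) S.isClosed_orthogonal
  -- P acts as identity on Sᗮ when paired in inner products
  have hinnerP : ∀ v w : H, v ∈ Sᗮ → ⟪v, P w⟫_𝕜 = ⟪v, w⟫_𝕜 := by
    intro v w hv
    rw [hPapply]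
    rw [← Submodule.starProjection_apply, ← Submodule.inner_starProjection_left_eq_right]
    congr 1
    exact Submodule.starProjection_eq_self_iff.mpr hv
  -- coercivity on M
  have hcoerM : ∀ v : H, v ∈ M → (1 / ρ) * ‖v‖ ^ 2 ≤ RCLike.re (⟪v, P (A v)⟫_𝕜) := by
    have hclosedset : IsClosed {v : H | (1 / ρ) * ‖v‖ ^ 2 ≤ RCLike.re (⟪v, P (A v)⟫_𝕜)} := by
      apply isClosed_le
      · exact (continuous_const.mul ((continuous_norm).pow 2))
      · exact RCLike.continuous_re.comp (Continuous.inner continuous_id (P.comp A).continuous)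
    have hsub : (LinearMap.range ((P.comp A : H →L[𝕜] H) : H →ₗ[𝕜] H) : Set H) ⊆
        {v : H | (1 / ρ) * ‖v‖ ^ 2 ≤ RCLike.re (⟪v, P (A v)⟫_𝕜)} := by
      rintro _ ⟨z, rfl⟩
      show (1 / ρ) * ‖P (A z)‖ ^ 2 ≤ RCLike.re (⟪P (A z), P (A (P (A z)))⟫_𝕜)
      rw [hinnerP _ _ (hPmem (A z))]
      exact hcoer0 z
    intro v hv
    have : v ∈ closure (LinearMap.range ((P.comp A : H →L[𝕜] H) : H →ₗ[𝕜] H) : Set H) := by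
      rw [hMdef] at hv
      rwa [← Submodule.topologicalClosure_coe]
    exact closure_minimal hsub hclosedset this
  -- the operator T' on M
  have hT'mem : ∀ v : M, P (A (v : H)) ∈ M := fun v => hrangeM (v : H)
  set T' : M →L[𝕜] M := ((P.comp A).comp M.subtypeL).codRestrict M hT'mem with hT'def
  have hT'apply : ∀ v : M, (T' v : H) = P (A (v : H)) := fun v => rfl
  have hcoerT' : ∀ v : M, (1 / ρ) * ‖v‖ ^ 2 ≤ RCLike.re (⟪v, T' v⟫_𝕜) := by
    intro v
    have : ⟪v, T' v⟫_𝕜 = ⟪(v : H), P (A (v : H))⟫_𝕜 := rfl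
    rw [this]
    exact hcoerM (v : H) v.2
  have hsurj : Function.Surjective T' :=
    aux_surj_of_coercive T' (1 / ρ) (by positivity) hcoerT'
  -- solve
  set psf : H := (Submodule.orthogonalProjectionOnto S f : H) with hpsf
  obtain ⟨x, hx⟩ := hsurj ⟨P (A (y - psf)), hrangeM _⟩
  have hxg : P (A (x : H)) = P (A (y - psf)) := by rw [← hT'apply x, hx]
  have hxS : (x : H) ∈ Sᗮ := hMS x.2
  have hPs : P s = 0 := by
    rw [hPapply]
    have : Submodule.orthogonalProjectionOnto Sᗮ s = 0 :=
      Submodule.orthogonalProjectionOnto_apply_of_mem_orthogonal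
        (Submodule.le_orthogonal_orthogonal S hsS)
    rw [this]; rfl
  have hxg' : P (A (x : H)) = P (A y) - P (A psf) := by
    rw [hxg, map_sub, map_sub]
  have hfeas : P (A ((x : H) + psf) - h) = 0 := by
    rw [hhy]
    simp only [map_add, map_sub, hxg', hPs]
    abel
  have hg : P (h - A psf) = P (A (y - psf)) := by
    rw [hhy]
    simp only [map_add, map_sub, hPs]
    abel
  constructor
  · refine ⟨(x : H) + psf, hfeas, ?_⟩
    have h1 : Submodule.orthogonalProjectionOnto S (x : H) = 0 :=
      Submodule.orthogonalProjectionOnto_apply_of_mem_orthogonal hxS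
    have h2 : Submodule.orthogonalProjectionOnto S psf = Submodule.orthogonalProjectionOnto S f :=
      Submodule.orthogonalProjectionOnto_mem_subspace_eq_self (Submodule.orthogonalProjectionOnto S f)
    rw [map_add, h1, h2, zero_add]
  · rintro xn ⟨hxnS, hxnfeas, hxnmin⟩
    have hle : ‖xn‖ ≤ ‖(x : H)‖ := hxnmin (x : H) hxS hfeas
    -- norm bound on x
    have hco : (1 / ρ) * ‖(x : H)‖ ^ 2 ≤ RCLike.re (⟪(x : H), P (A (x : H))⟫_𝕜) :=
      hcoerM (x : H) x.2
    set g : H := P (A (y - psf)) with hgdef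
    have hco2 : (1 / ρ) * ‖(x : H)‖ ^ 2 ≤ ‖(x : H)‖ * ‖g‖ := by
      calc (1 / ρ) * ‖(x : H)‖ ^ 2 ≤ RCLike.re (⟪(x : H), P (A (x : H))⟫_𝕜) := hco
        _ = RCLike.re (⟪(x : H), g⟫_𝕜) := by rw [hxg]
        _ ≤ ‖(⟪(x : H), g⟫_𝕜)‖ := RCLike.re_le_norm _
        _ ≤ ‖(x : H)‖ * ‖g‖ := norm_inner_le_norm _ _
    have hxb : ‖(x : H)‖ ^ 2 ≤ ρ ^ 2 * ‖g‖ ^ 2 := by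
      have h1 : ‖(x : H)‖ ^ 2 ≤ ρ * (‖(x : H)‖ * ‖g‖) := by
        have h2 := mul_le_mul_of_nonneg_left hco2 hρpos.le
        calc ‖(x : H)‖ ^ 2 = ρ * (1 / ρ * ‖(x : H)‖ ^ 2) := by field_simp
          _ ≤ ρ * (‖(x : H)‖ * ‖g‖) := h2
      nlinarith [h1, sq_nonneg (‖(x : H)‖ - ρ * ‖g‖)]
    have hnormeq : ‖(Submodule.orthogonalProjectionOnto Sᗮ (h - A psf) : H)‖ = ‖g‖ := by
      rw [← hPapply, hg]
    rw [hnormeq]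
    calc ‖xn‖ ^ 2 ≤ ‖(x : H)‖ ^ 2 := by
          have := norm_nonneg xn
          nlinarith
      _ ≤ ρ ^ 2 * ‖g‖ ^ 2 := hxb
end

section
/- Let ν := inf{‖P_{T⊥} x‖ / ‖x‖ : x ∈ P_{S⊥}(T⊥), x ≠ 0} and suppose ν > 0. Then for every f ∈ H a sample consistent reconstruction of f exists, the normal (minimal-norm) sample consistent reconstruction f̂_n of f is unique, and it satisfies ‖f̂_n‖² ≤ ‖P_S f‖² + ‖P_{S⊥} P_{T⊥} P_S f‖² / ν⁴. -/
open scoped InnerProductSpace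

private lemma aux_inner_proj {𝕜 H : Type*} [RCLike 𝕜] [NormedAddCommGroup H]
    [InnerProductSpace 𝕜 H] (K : Submodule 𝕜 H) [Submodule.HasOrthogonalProjection K] (v : H) :
    ⟪(Submodule.orthogonalProjectionOnto K v : H), v⟫_𝕜 = (‖(Submodule.orthogonalProjectionOnto K v : H)‖ : 𝕜) ^ 2 := by
  have h2 : ⟪(Submodule.orthogonalProjectionOnto K v : H), v - Submodule.orthogonalProjectionOnto K v⟫_𝕜 = 0 :=
    (Submodule.mem_orthogonal K _).mp (Submodule.sub_starProjection_mem_orthogonal (K := K) v) _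
      (SetLike.coe_mem _)
  have h3 : ⟪(Submodule.orthogonalProjectionOnto K v : H), v⟫_𝕜
      = ⟪(Submodule.orthogonalProjectionOnto K v : H), (Submodule.orthogonalProjectionOnto K v : H)⟫_𝕜
        + ⟪(Submodule.orthogonalProjectionOnto K v : H), v - Submodule.orthogonalProjectionOnto K v⟫_𝕜 := by
    rw [← inner_add_right, add_sub_cancel]
  rw [h3, h2, add_zero, inner_self_eq_norm_sq_to_K]

/-- If `ν := inf {‖P_{T⊥} x‖/‖x‖ : x ∈ P_{S⊥}(T⊥), x ≠ 0} > 0`, then for every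
`f ∈ H` a sample consistent reconstruction exists, the normal (minimal-norm) sample consistent
reconstruction `fn = xn + P_S f` is unique, and satisfies
`‖fn‖² ≤ ‖P_S f‖² + ‖P_{S⊥} P_{T⊥} P_S f‖²/ν⁴`. -/
theorem stmt_11 {𝕜 H : Type*} [RCLike 𝕜] [NormedAddCommGroup H] [InnerProductSpace 𝕜 H]
    [CompleteSpace H] (S T : Submodule 𝕜 H)
    [Submodule.HasOrthogonalProjection S] [Submodule.HasOrthogonalProjection T]
    (ν : ℝ)
    (hν : ν = sInf {r : ℝ | ∃ y ∈ Tᗮ, (Submodule.orthogonalProjectionOnto Sᗮ y : H) ≠ 0 ∧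
      r = ‖(Submodule.orthogonalProjectionOnto Tᗮ ((Submodule.orthogonalProjectionOnto Sᗮ y : H)) : H)‖ /
        ‖(Submodule.orthogonalProjectionOnto Sᗮ y : H)‖})
    (hνpos : 0 < ν) (f : H) :
    (∃ fhat : H, (Submodule.orthogonalProjectionOnto S fhat : H) = (Submodule.orthogonalProjectionOnto S f : H) ∧
        (Submodule.orthogonalProjectionOnto Sᗮ (fhat - (Submodule.orthogonalProjectionOnto T fhat : H)) : H) = 0) ∧
    (∃! xn : H, xn ∈ Sᗮ ∧
        (Submodule.orthogonalProjectionOnto Sᗮ ((xn + (Submodule.orthogonalProjectionOnto S f : H)) -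
          (Submodule.orthogonalProjectionOnto T (xn + (Submodule.orthogonalProjectionOnto S f : H)) : H)) : H) = 0 ∧
        ∀ x : H, x ∈ Sᗮ →
          (Submodule.orthogonalProjectionOnto Sᗮ ((x + (Submodule.orthogonalProjectionOnto S f : H)) -
            (Submodule.orthogonalProjectionOnto T (x + (Submodule.orthogonalProjectionOnto S f : H)) : H)) : H) = 0 →
          ‖xn‖ ≤ ‖x‖) ∧
    (∀ xn : H, (xn ∈ Sᗮ ∧
        (Submodule.orthogonalProjectionOnto Sᗮ ((xn + (Submodule.orthogonalProjectionOnto S f : H)) -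
          (Submodule.orthogonalProjectionOnto T (xn + (Submodule.orthogonalProjectionOnto S f : H)) : H)) : H) = 0 ∧
        ∀ x : H, x ∈ Sᗮ →
          (Submodule.orthogonalProjectionOnto Sᗮ ((x + (Submodule.orthogonalProjectionOnto S f : H)) -
            (Submodule.orthogonalProjectionOnto T (x + (Submodule.orthogonalProjectionOnto S f : H)) : H)) : H) = 0 →
          ‖xn‖ ≤ ‖x‖) →
      ‖xn + (Submodule.orthogonalProjectionOnto S f : H)‖ ^ 2 ≤ ‖(Submodule.orthogonalProjectionOnto S f : H)‖ ^ 2 +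
        ‖(Submodule.orthogonalProjectionOnto Sᗮ
            ((Submodule.orthogonalProjectionOnto S f : H) -
              (Submodule.orthogonalProjectionOnto T (Submodule.orthogonalProjectionOnto S f : H) : H)) : H)‖ ^ 2 / ν ^ 4) := by
  have hν2 : (0:ℝ) < ν ^ 2 := by positivity
  set g : H := (Submodule.orthogonalProjectionOnto S f : H) with hg
  set PS : H →L[𝕜] H := Sᗮ.subtypeL.comp (Submodule.orthogonalProjectionOnto Sᗮ) with hPSdef
  set PT : H →L[𝕜] H := Tᗮ.subtypeL.comp (Submodule.orthogonalProjectionOnto Tᗮ) with hPTdef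
  set L : H →L[𝕜] H := PS.comp PT with hLdef
  have hL : ∀ w : H, (Submodule.orthogonalProjectionOnto Sᗮ (w - (Submodule.orthogonalProjectionOnto T w : H)) : H) = L w := by
    intro w; simp [hLdef, hPSdef, hPTdef]
  simp only [hL]
  set U : Submodule 𝕜 H := Tᗮ.map (PS : H →ₗ[𝕜] H) with hUdef
  set V : Submodule 𝕜 H := U.topologicalClosure with hVdef
  have hLU : ∀ w : H, L w ∈ U := fun w => ⟨PT w, SetLike.coe_mem _, rfl⟩
  have hLV : ∀ w : H, L w ∈ V := fun w => U.le_topologicalClosure (hLU w)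
  have hUS : U ≤ Sᗮ := by rintro _ ⟨y, hy, rfl⟩; exact SetLike.coe_mem _
  have hVS : V ≤ Sᗮ := by
    rw [hVdef]
    exact Submodule.topologicalClosure_minimal U hUS (Submodule.isClosed_orthogonal S)
  -- coercivity on U
  have hcoU : ∀ x ∈ U, ν * ‖x‖ ≤ ‖PT x‖ := by
    rintro _ ⟨y, hy, rfl⟩
    by_cases hx : PS y = 0
    · simp [hx]
    · have hmem : (‖PT (PS y)‖ / ‖PS y‖) ∈ {r : ℝ | ∃ y ∈ Tᗮ, (Submodule.orthogonalProjectionOnto Sᗮ y : H) ≠ 0 ∧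
          r = ‖(Submodule.orthogonalProjectionOnto Tᗮ ((Submodule.orthogonalProjectionOnto Sᗮ y : H)) : H)‖ /
            ‖(Submodule.orthogonalProjectionOnto Sᗮ y : H)‖} := ⟨y, hy, hx, rfl⟩
      have hbdd : BddBelow {r : ℝ | ∃ y ∈ Tᗮ, (Submodule.orthogonalProjectionOnto Sᗮ y : H) ≠ 0 ∧
          r = ‖(Submodule.orthogonalProjectionOnto Tᗮ ((Submodule.orthogonalProjectionOnto Sᗮ y : H)) : H)‖ /
            ‖(Submodule.orthogonalProjectionOnto Sᗮ y : H)‖} := by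
        refine ⟨0, ?_⟩
        rintro r ⟨y, hy, hne, rfl⟩
        positivity
      have hle : ν ≤ ‖PT (PS y)‖ / ‖PS y‖ := hν ▸ csInf_le hbdd hmem
      have hxpos : 0 < ‖PS y‖ := norm_pos_iff.mpr hx
      calc ν * ‖PS y‖ ≤ (‖PT (PS y)‖ / ‖PS y‖) * ‖PS y‖ :=
            mul_le_mul_of_nonneg_right hle hxpos.le
        _ = ‖PT (PS y)‖ := div_mul_cancel₀ _ hxpos.ne'
  have hinner : ∀ x : H, x ∈ Sᗮ → RCLike.re ⟪L x, x⟫_𝕜 = ‖PT x‖ ^ 2 := by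
    intro x hx
    have hx2 : ((Submodule.orthogonalProjectionOnto Sᗮ x : H)) = x := Submodule.starProjection_eq_self_iff.mpr hx
    have h1 : ⟪L x, x⟫_𝕜 = ⟪PT x, x⟫_𝕜 := by
      have h0 : L x = (Submodule.orthogonalProjectionOnto Sᗮ (PT x) : H) := rfl
      rw [h0, ← Submodule.starProjection_apply, Submodule.inner_starProjection_left_eq_right, Submodule.starProjection_apply, hx2]
    have h2 : ⟪PT x, x⟫_𝕜 = (‖PT x‖ : 𝕜) ^ 2 := aux_inner_proj Tᗮ x
    rw [h1, h2, ← RCLike.ofReal_pow, RCLike.ofReal_re]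
  have hcoV : ∀ x ∈ V, ν ^ 2 * ‖x‖ ^ 2 ≤ RCLike.re ⟪L x, x⟫_𝕜 := by
    have hclosed : IsClosed {x : H | ν ^ 2 * ‖x‖ ^ 2 ≤ RCLike.re ⟪L x, x⟫_𝕜} := by
      apply isClosed_le
      · exact continuous_const.mul (continuous_norm.pow 2)
      · exact RCLike.continuous_re.comp (Continuous.inner L.continuous continuous_id)
    have hsub : (U : Set H) ⊆ {x : H | ν ^ 2 * ‖x‖ ^ 2 ≤ RCLike.re ⟪L x, x⟫_𝕜} := by
      intro x hx
      have h1 := hcoU x hx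
      have h2 := hinner x (hUS hx)
      have h3 : (ν * ‖x‖) ^ 2 ≤ ‖PT x‖ ^ 2 := pow_le_pow_left₀ (by positivity) h1 2
      have : ν ^ 2 * ‖x‖ ^ 2 = (ν * ‖x‖) ^ 2 := by ring
      simp only [Set.mem_setOf_eq, this, h2]
      exact h3
    intro x hx
    have hVsub : (V : Set H) ⊆ {x : H | ν ^ 2 * ‖x‖ ^ 2 ≤ RCLike.re ⟪L x, x⟫_𝕜} := by
      rw [hVdef]
      show (closure (U : Set H)) ⊆ _
      exact closure_minimal hsub hclosed
    exact hVsub hx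
  have hlow : ∀ x ∈ V, ν ^ 2 * ‖x‖ ≤ ‖L x‖ := by
    intro x hx
    rcases eq_or_ne x 0 with rfl | hx0
    · simp
    · have h1 := hcoV x hx
      have h2 : RCLike.re ⟪L x, x⟫_𝕜 ≤ ‖L x‖ * ‖x‖ := re_inner_le_norm _ _
      have hxpos : 0 < ‖x‖ := norm_pos_iff.mpr hx0
      have h3 : ν ^ 2 * ‖x‖ * ‖x‖ ≤ ‖L x‖ * ‖x‖ := by nlinarith
      exact le_of_mul_le_mul_right h3 hxpos
  haveI hVcomplete : CompleteSpace V := U.isClosed_topologicalClosure.completeSpace_coe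
  set A : V →L[𝕜] V := (L.comp V.subtypeL).codRestrict V (fun v => hLV v) with hAdef
  have hAsurj : Function.Surjective A := by
    have hanti : AntilipschitzWith ⟨(ν ^ 2)⁻¹, by positivity⟩ A := by
      apply ContinuousLinearMap.antilipschitz_of_bound
      intro w
      have h1 : ν ^ 2 * ‖(w : H)‖ ≤ ‖L ↑w‖ := hlow ↑w w.2
      have h2 : ‖A w‖ = ‖L (w : H)‖ := rfl
      have h3 : ‖w‖ = ‖(w : H)‖ := rfl
      rw [h2, h3]
      change ‖(w : H)‖ ≤ (ν ^ 2)⁻¹ * ‖L ↑w‖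
      rw [inv_mul_eq_div, le_div_iff₀ hν2]
      linarith
    have hrange : IsClosed (Set.range A) := hanti.isClosed_range A.uniformContinuous
    set R : Submodule 𝕜 V := LinearMap.range (A : V →ₗ[𝕜] V) with hRdef
    have hRcoe : (R : Set V) = Set.range A := by
      ext z; simp [hRdef, LinearMap.mem_range]
    haveI : CompleteSpace R := by
      have hcl : IsClosed (R : Set V) := by rw [hRcoe]; exact hrange
      exact hcl.completeSpace_coe
    have hbot : Rᗮ = ⊥ := by
      rw [Submodule.eq_bot_iff]
      intro w hw
      have h0 : ⟪A w, w⟫_𝕜 = 0 :=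
        (Submodule.mem_orthogonal R w).mp hw (A w) ⟨w, rfl⟩
      have h1 : ν ^ 2 * ‖(w : H)‖ ^ 2 ≤ RCLike.re ⟪L ↑w, (w : H)⟫_𝕜 := hcoV ↑w w.2
      have h2 : ⟪L ↑w, (w : H)⟫_𝕜 = ⟪A w, w⟫_𝕜 := rfl
      rw [h2, h0] at h1
      simp only [map_zero] at h1
      have h5 : ν ^ 2 * ‖(w : H)‖ ^ 2 ≤ ν ^ 2 * 0 := by linarith
      have h6 : ‖(w : H)‖ ^ 2 ≤ 0 := le_of_mul_le_mul_left h5 hν2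
      have h7 : ‖(w : H)‖ ^ 2 = 0 := le_antisymm h6 (sq_nonneg _)
      have h3 : ‖(w : H)‖ = 0 := pow_eq_zero_iff two_ne_zero |>.mp h7
      have h4 : (w : H) = 0 := norm_eq_zero.mp h3
      exact Subtype.ext h4
    have hRtop : R = ⊤ := Submodule.orthogonal_eq_bot_iff.mp hbot
    exact LinearMap.range_eq_top.mp hRtop
  obtain ⟨xV, hxV⟩ := hAsurj ⟨-L g, Submodule.neg_mem _ (hLV g)⟩
  set x₀ : H := (xV : H) with hx₀def
  have hx₀V : x₀ ∈ V := xV.2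
  have hx₀S : x₀ ∈ Sᗮ := hVS hx₀V
  have hLx₀ : L x₀ = -L g := congrArg Subtype.val hxV
  have hsol : L (x₀ + g) = 0 := by rw [map_add, hLx₀, neg_add_cancel]
  have hx₀norm : ‖x₀‖ ≤ ‖L g‖ / ν ^ 2 := by
    have h1 := hcoV x₀ hx₀V
    rw [hLx₀] at h1
    have h2 : RCLike.re ⟪-L g, x₀⟫_𝕜 ≤ ‖L g‖ * ‖x₀‖ := by
      calc RCLike.re ⟪-L g, x₀⟫_𝕜 ≤ ‖-L g‖ * ‖x₀‖ := re_inner_le_norm _ _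
        _ = ‖L g‖ * ‖x₀‖ := by rw [norm_neg]
    rw [le_div_iff₀ hν2]
    rcases eq_or_lt_of_le (norm_nonneg x₀) with h0 | h0
    · rw [← h0]; simpa using norm_nonneg (L g)
    · have h3 : ν ^ 2 * ‖x₀‖ ^ 2 ≤ ‖L g‖ * ‖x₀‖ := h1.trans h2
      nlinarith
  -- set up the affine-minimization data
  set N : Submodule 𝕜 H := Sᗮ ⊓ LinearMap.ker (L : H →ₗ[𝕜] H) with hNdef
  have hNmem : ∀ z : H, z ∈ N ↔ z ∈ Sᗮ ∧ L z = 0 := by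
    intro z; simp [hNdef, Submodule.mem_inf, LinearMap.mem_ker]
  have hNclosed : IsClosed (N : Set H) := by
    have hEq : (N : Set H) = (Sᗮ : Set H) ∩ L ⁻¹' {0} := by
      ext z
      simp [hNmem z, Set.mem_inter_iff]
    rw [hEq]
    exact (Submodule.isClosed_orthogonal S).inter (isClosed_singleton.preimage L.continuous)
  haveI : CompleteSpace N := hNclosed.completeSpace_coe
  set v : H := x₀ - (Submodule.orthogonalProjectionOnto N x₀ : H) with hvdef
  have hvperp : v ∈ Nᗮ := by
    rw [hvdef]; exact Submodule.sub_starProjection_mem_orthogonal (K := N) x₀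
  have hprojN := (hNmem _).mp (SetLike.coe_mem (Submodule.orthogonalProjectionOnto N x₀))
  have hsolv : v ∈ Sᗮ ∧ L (v + g) = 0 := by
    constructor
    · rw [hvdef]; exact Submodule.sub_mem _ hx₀S hprojN.1
    · have : L (v + g) = L (x₀ + g) - L ((Submodule.orthogonalProjectionOnto N x₀ : H)) := by
        rw [hvdef, map_add, map_add, map_sub]; abel
      rw [this, hsol, hprojN.2, sub_zero]
  have hkey : ∀ x : H, x ∈ Sᗮ → L (x + g) = 0 → ‖x‖ ^ 2 = ‖v‖ ^ 2 + ‖x - v‖ ^ 2 := by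
    intro x hxS hxL
    have hxv : x - v ∈ N := by
      rw [hNmem]
      refine ⟨Submodule.sub_mem _ hxS hsolv.1, ?_⟩
      have : L (x - v) = L (x + g) - L (v + g) := by
        rw [map_sub, map_add, map_add]; abel
      rw [this, hxL, hsolv.2, sub_zero]
    have hinner0 : ⟪v, x - v⟫_𝕜 = 0 := (Submodule.mem_orthogonal' N v).mp hvperp _ hxv
    calc ‖x‖ ^ 2 = ‖v + (x - v)‖ ^ 2 := by rw [add_sub_cancel]
      _ = ‖v‖ ^ 2 + 2 * RCLike.re ⟪v, x - v⟫_𝕜 + ‖x - v‖ ^ 2 := norm_add_sq (𝕜 := 𝕜) v (x - v)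
      _ = ‖v‖ ^ 2 + ‖x - v‖ ^ 2 := by rw [hinner0]; simp
  have hvmin : ∀ x : H, x ∈ Sᗮ → L (x + g) = 0 → ‖v‖ ≤ ‖x‖ := by
    intro x hxS hxL
    have h1 := hkey x hxS hxL
    have h2 : ‖v‖ ^ 2 ≤ ‖x‖ ^ 2 := by nlinarith [sq_nonneg ‖x - v‖]
    exact (abs_le_of_sq_le_sq' h2 (norm_nonneg _)).2
  refine ⟨⟨x₀ + g, ?_, hsol⟩, ⟨v, ⟨hsolv.1, hsolv.2, hvmin⟩, ?_⟩, ?_⟩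
  · -- P_S (x₀ + g) = P_S f
    have h1 : Submodule.orthogonalProjectionOnto S x₀ = 0 :=
      Submodule.orthogonalProjectionOnto_apply_of_mem_orthogonal hx₀S
    have h2 : Submodule.orthogonalProjectionOnto S g = Submodule.orthogonalProjectionOnto S f := by
      rw [hg]; exact Submodule.orthogonalProjectionOnto_mem_subspace_eq_self (Submodule.orthogonalProjectionOnto S f)
    have : Submodule.orthogonalProjectionOnto S (x₀ + g) = Submodule.orthogonalProjectionOnto S f := by
      rw [map_add, h1, zero_add, h2]
    rw [this, hg]
  · -- uniqueness
    rintro u ⟨huS, huL, humin⟩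
    have h1 := hkey u huS huL
    have h2 : ‖u‖ ≤ ‖v‖ := humin v hsolv.1 hsolv.2
    have h3 : ‖v‖ ≤ ‖u‖ := hvmin u huS huL
    have heq : ‖u‖ = ‖v‖ := le_antisymm h2 h3
    have h4 : ‖u - v‖ ^ 2 ≤ 0 := by rw [heq] at h1; linarith
    have h5 : ‖u - v‖ ^ 2 = 0 := le_antisymm h4 (sq_nonneg _)
    have h6 : ‖u - v‖ = 0 := by
      exact pow_eq_zero_iff (two_ne_zero) |>.mp h5
    exact sub_eq_zero.mp (norm_eq_zero.mp h6)
  · -- the bound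
    rintro xn ⟨hxnS, hxnL, hxnmin⟩
    have h1 : ‖xn‖ ≤ ‖x₀‖ := hxnmin x₀ hx₀S hsol
    have h2 : ‖xn‖ ≤ ‖L g‖ / ν ^ 2 := h1.trans hx₀norm
    have hgS : g ∈ S := by rw [hg]; exact SetLike.coe_mem _
    have hinner0 : RCLike.re ⟪xn, g⟫_𝕜 = 0 := by
      have ha : ⟪g, xn⟫_𝕜 = 0 := (Submodule.mem_orthogonal S xn).mp hxnS g hgS
      have hb : ⟪xn, g⟫_𝕜 = 0 := by rw [← inner_conj_symm, ha, map_zero]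
      rw [hb, map_zero]
    have hexp : ‖xn + g‖ ^ 2 = ‖xn‖ ^ 2 + ‖g‖ ^ 2 := by
      rw [norm_add_sq (𝕜 := 𝕜), hinner0]; ring
    rw [hexp]
    have h3 : ‖xn‖ ^ 2 ≤ (‖L g‖ / ν ^ 2) ^ 2 := pow_le_pow_left₀ (norm_nonneg _) h2 2
    have h4 : (‖L g‖ / ν ^ 2) ^ 2 = ‖L g‖ ^ 2 / ν ^ 4 := by
      rw [div_pow, ← pow_mul]
    linarith
end

section
/- Let ν := inf{‖P_{T⊥} x‖ / ‖x‖ : x ∈ P_{S⊥}(T⊥), x ≠ 0}. If for every f ∈ H there exists a sample consistent reconstruction of f (i.e., some f̂ with P_S f̂ = P_S f and P_{S⊥} P_{T⊥} f̂ = 0), then ν > 0. (Combined with the converse, ν > 0 is necessary and sufficient for the existence of a sample consistent reconstruction for every signal f.) -/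
open Submodule


/-- with `ν := inf {‖P_{T⊥} x‖/‖x‖ : x ∈ P_{S⊥}(T⊥), x ≠ 0}`, if for every `f ∈ H`
there exists a sample consistent reconstruction of `f` (some `fhat` with `P_S fhat = P_S f` and
`P_{S⊥} P_{T⊥} fhat = 0`), then `ν > 0`.  (The conclusion `ν > 0` is expressed by its standard
meaning: the set of ratios is bounded below by some positive constant; this agrees with
`sInf > 0` for a nonempty set and with the convention `inf ∅ = +∞ > 0`.) -/
theorem stmt_12 {𝕜 H : Type*} [RCLike 𝕜] [NormedAddCommGroup H] [InnerProductSpace 𝕜 H]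
    [CompleteSpace H] (S T : Submodule 𝕜 H)
    [S.HasOrthogonalProjection] [T.HasOrthogonalProjection]
    (hex : ∀ f : H, ∃ fhat : H,
      (S.orthogonalProjectionOnto fhat : H) = (S.orthogonalProjectionOnto f : H) ∧
      (Sᗮ.orthogonalProjectionOnto (fhat - (T.orthogonalProjectionOnto fhat : H)) : H) = 0) :
    ∃ ν : ℝ, 0 < ν ∧
      ∀ r ∈ {r : ℝ | ∃ y ∈ Tᗮ, (Sᗮ.orthogonalProjectionOnto y : H) ≠ 0 ∧
        r = ‖(Tᗮ.orthogonalProjectionOnto ((Sᗮ.orthogonalProjectionOnto y : H)) : H)‖ /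
          ‖(Sᗮ.orthogonalProjectionOnto y : H)‖}, ν ≤ r := by
  classical
  set U : Submodule 𝕜 H := S ⊓ Tᗮ with hU
  -- closedness / completeness
  have hScl : IsClosed (S : Set H) := by
    rw [← Submodule.orthogonal_orthogonal S]; exact Submodule.isClosed_orthogonal _
  have hTcl : IsClosed (T : Set H) := by
    rw [← Submodule.orthogonal_orthogonal T]; exact Submodule.isClosed_orthogonal _
  have hUcl : IsClosed (U : Set H) := by
    have : (U : Set H) = (S : Set H) ∩ (Tᗮ : Set H) := rfl
    rw [this]; exact hScl.inter (Submodule.isClosed_orthogonal _)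
  haveI : CompleteSpace T := hTcl.completeSpace_coe
  haveI : CompleteSpace U := hUcl.completeSpace_coe
  haveI : CompleteSpace (Sᗮ : Submodule 𝕜 H) := (Submodule.isClosed_orthogonal _).completeSpace_coe
  -- the sum map
  let φ : (T × U × (Sᗮ : Submodule 𝕜 H)) →L[𝕜] H :=
    T.subtypeL.comp (ContinuousLinearMap.fst 𝕜 _ _) +
    (U.subtypeL.comp (ContinuousLinearMap.fst 𝕜 _ _)).comp (ContinuousLinearMap.snd 𝕜 _ _) +
    ((Sᗮ).subtypeL.comp (ContinuousLinearMap.snd 𝕜 _ _)).comp (ContinuousLinearMap.snd 𝕜 _ _)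
  have hφ : ∀ p : T × U × (Sᗮ : Submodule 𝕜 H), φ p = (p.1 : H) + (p.2.1 : H) + (p.2.2 : H) := by
    intro p; rfl
  have hsurj : Function.Surjective φ := by
    intro f
    obtain ⟨fhat, h1, h2⟩ := hex f
    have hv : fhat - (orthogonalProjectionOnto T fhat : H) ∈ Sᗮᗮ := by
      have := Submodule.orthogonalProjectionOnto_eq_zero_iff (K := Sᗮ)
        (v := fhat - (orthogonalProjectionOnto T fhat : H))
      rw [← this]
      exact Subtype.ext h2
    rw [Submodule.orthogonal_orthogonal] at hv
    have hvT : fhat - (orthogonalProjectionOnto T fhat : H) ∈ Tᗮ :=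
      Submodule.sub_starProjection_mem_orthogonal fhat
    have hw : f - fhat ∈ Sᗮ := by
      have : orthogonalProjectionOnto S (f - fhat) = 0 := by
        ext
        simp [map_sub, h1]
      exact (Submodule.orthogonalProjectionOnto_eq_zero_iff).1 this
    refine ⟨⟨orthogonalProjectionOnto T fhat,
      ⟨fhat - (orthogonalProjectionOnto T fhat : H), ⟨hv, hvT⟩⟩,
      ⟨f - fhat, hw⟩⟩, ?_⟩
    rw [hφ]
    simp only
    abel
  obtain ⟨C, hC, hCpre⟩ := φ.exists_preimage_norm_le hsurj
  refine ⟨(1 + C)⁻¹, by positivity, ?_⟩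
  rintro r ⟨y, hy, hx0, rfl⟩
  set x : H := (orthogonalProjectionOnto Sᗮ y : H) with hxdef
  -- replace y by y' ⊥ U
  set y' : H := y - (orthogonalProjectionOnto U y : H) with hy'def
  have hy'T : y' ∈ Tᗮ := by
    apply Submodule.sub_mem _ hy
    exact ((orthogonalProjectionOnto U y).2 : _ ∈ U).2
  have hy'U : y' ∈ Uᗮ := Submodule.sub_starProjection_mem_orthogonal y
  have hPy' : (orthogonalProjectionOnto Sᗮ y' : H) = x := by
    rw [hy'def, map_sub]
    have : orthogonalProjectionOnto Sᗮ ((orthogonalProjectionOnto U y : H)) = 0 :=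
      Submodule.orthogonalProjectionOnto_apply_of_mem_orthogonal
        (Submodule.le_orthogonal_orthogonal S ((orthogonalProjectionOnto U y).2.1))
    rw [this]
    simp [hxdef]
  -- z = y' - x ∈ S
  set z : H := y' - x with hzdef
  have hzS : z ∈ S := by
    have : y' - (orthogonalProjectionOnto Sᗮ y' : H) ∈ Sᗮᗮ := Submodule.sub_starProjection_mem_orthogonal (K := Sᗮ) y'
    rw [hPy'] at this
    rw [← Submodule.orthogonal_orthogonal S]
    exact this
  have hxS : x ∈ Sᗮ := by rw [← hPy']; exact (orthogonalProjectionOnto Sᗮ y').2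
  have hy'eq : y' = x + z := by rw [hzdef]; abel
  -- bound ‖z‖ ≤ C * ‖x‖
  obtain ⟨p, hpz, hpnorm⟩ := hCpre z
  have ht' : ((p.1 : H)) ∈ T := p.1.2
  have hs' : ((p.2.1 : H)) ∈ U := p.2.1.2
  have hw' : ((p.2.2 : H)) ∈ Sᗮ := p.2.2.2
  have hzsum : (p.1 : H) + (p.2.1 : H) + (p.2.2 : H) = z := by rw [← hφ]; exact hpz
  have hznorm : ‖z‖ ≤ C * ‖x‖ := by
    have key : (‖z‖ : ℝ)^2 = RCLike.re ((inner 𝕜 x (p.2.2 : H) : 𝕜)) := by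
      have h1 : (inner 𝕜 y' (z ) : 𝕜) = (‖z‖ : 𝕜)^2 := by
        rw [hy'eq, inner_add_left]
        rw [inner_left_of_mem_orthogonal hzS hxS]
        rw [inner_self_eq_norm_sq_to_K]
        ring
      have h2 : (inner 𝕜 y' (z ) : 𝕜) = (inner 𝕜 y' (p.2.2 : H) : 𝕜) := by
        rw [← hzsum, inner_add_right, inner_add_right]
        rw [inner_left_of_mem_orthogonal ht' hy'T]
        rw [inner_left_of_mem_orthogonal hs' hy'U]
        ring
      have h3 : (inner 𝕜 y' (p.2.2 : H) : 𝕜) = (inner 𝕜 x (p.2.2 : H) : 𝕜) := by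
        rw [hy'eq, inner_add_left, inner_right_of_mem_orthogonal hzS hw']
        ring
      have := h1.symm.trans (h2.trans h3)
      have := congrArg (RCLike.re) this
      rw [← this]
      rw [← RCLike.ofReal_pow, RCLike.ofReal_re]
    have hcs : RCLike.re ((inner 𝕜 x (p.2.2 : H) : 𝕜)) ≤ ‖x‖ * ‖(p.2.2 : H)‖ := by
      calc RCLike.re ((inner 𝕜 x (p.2.2 : H) : 𝕜)) ≤ ‖(inner 𝕜 x (p.2.2 : H) : 𝕜)‖ := RCLike.re_le_norm _
        _ ≤ ‖x‖ * ‖(p.2.2 : H)‖ := norm_inner_le_norm _ _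
    have hw'norm : ‖(p.2.2 : H)‖ ≤ C * ‖z‖ := by
      calc ‖(p.2.2 : H)‖ = ‖p.2.2‖ := rfl
        _ ≤ ‖p.2‖ := norm_snd_le _
        _ ≤ ‖p‖ := norm_snd_le _
        _ ≤ C * ‖z‖ := hpnorm
    have hsq : ‖z‖^2 ≤ ‖x‖ * (C * ‖z‖) := by
      calc ‖z‖^2 = RCLike.re ((inner 𝕜 x (p.2.2 : H) : 𝕜)) := key
        _ ≤ ‖x‖ * ‖(p.2.2 : H)‖ := hcs
        _ ≤ ‖x‖ * (C * ‖z‖) := by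
            apply mul_le_mul_of_nonneg_left hw'norm (norm_nonneg _)
    rcases eq_or_ne z 0 with hz0 | hz0
    · simp [hz0]; positivity
    · have hzpos : (0:ℝ) < ‖z‖ := norm_pos_iff.2 hz0
      nlinarith
  -- final bound
  have hy'norm : ‖y'‖ ≤ (1 + C) * ‖x‖ := by
    calc ‖y'‖ = ‖x + z‖ := by rw [hy'eq]
      _ ≤ ‖x‖ + ‖z‖ := norm_add_le _ _
      _ ≤ ‖x‖ + C * ‖x‖ := by linarith
      _ = (1 + C) * ‖x‖ := by ring
  have hxpos : (0:ℝ) < ‖x‖ := norm_pos_iff.2 hx0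
  have key2 : ‖x‖^2 ≤ ‖(orthogonalProjectionOnto Tᗮ x : H)‖ * ((1 + C) * ‖x‖) := by
    have h1 : (inner 𝕜 x y' : 𝕜) = (‖x‖ : 𝕜)^2 := by
      rw [hy'eq, inner_add_right, inner_left_of_mem_orthogonal hzS hxS,
        inner_self_eq_norm_sq_to_K]
      ring
    have h2 : (inner 𝕜 x y' : 𝕜) = (inner 𝕜 (orthogonalProjectionOnto Tᗮ x : H) (y' ) : 𝕜) := by
      have hsplit : x = (x - (orthogonalProjectionOnto Tᗮ x : H)) + (orthogonalProjectionOnto Tᗮ x : H) := by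
        abel
      rw [hsplit, inner_add_left,
        inner_left_of_mem_orthogonal hy'T (show x - (orthogonalProjectionOnto Tᗮ x : H) ∈ Tᗮᗮ from Submodule.sub_starProjection_mem_orthogonal (K := Tᗮ) x)]
      rw [← hsplit]
      ring
    have h3 : ‖x‖^2 = RCLike.re ((inner 𝕜 (orthogonalProjectionOnto Tᗮ x : H) (y' ) : 𝕜)) := by
      rw [← h2, h1]
      rw [← RCLike.ofReal_pow, RCLike.ofReal_re]
    calc ‖x‖^2 = RCLike.re ((inner 𝕜 (orthogonalProjectionOnto Tᗮ x : H) (y' ) : 𝕜)) := h3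
      _ ≤ ‖(inner 𝕜 (orthogonalProjectionOnto Tᗮ x : H) (y' ) : 𝕜)‖ := RCLike.re_le_norm _
      _ ≤ ‖(orthogonalProjectionOnto Tᗮ x : H)‖ * ‖y'‖ := norm_inner_le_norm _ _
      _ ≤ ‖(orthogonalProjectionOnto Tᗮ x : H)‖ * ((1 + C) * ‖x‖) := by
          exact mul_le_mul_of_nonneg_left hy'norm (norm_nonneg _)
  rw [le_div_iff₀ hxpos]
  have hPnn : (0:ℝ) ≤ ‖(orthogonalProjectionOnto Tᗮ x : H)‖ := norm_nonneg _
  have h1C : (0:ℝ) < 1 + C := by positivity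
  rw [inv_mul_le_iff₀ h1C] at *
  nlinarith
end

section
/- Let ν := inf{‖P_{T⊥} x‖ / ‖x‖ : x ∈ P_{S⊥}(T⊥), x ≠ 0} and suppose ν > 0. For f ∈ H let x̂_n be the minimal-norm element of {x ∈ S⊥ : P_{S⊥} P_{T⊥}(x + P_S f) = 0}. Then both of the following sharp bounds hold: ‖x̂_n‖ ≤ ‖P_{T⊥} P_S P₀ f‖ / ν and ‖x̂_n‖ ≤ ‖P_S P₀ f‖ · √(1 − ν²) / ν. -/
set_option synthInstance.maxHeartbeats 1000000
set_option maxHeartbeats 2000000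

theorem hlp_eq_self_iff {𝕜 E : Type*} [RCLike 𝕜] [NormedAddCommGroup E] [InnerProductSpace 𝕜 E]
    {K : Submodule 𝕜 E} [K.HasOrthogonalProjection] {v : E} :
    (K.orthogonalProjectionOnto v : E) = v ↔ v ∈ K :=
  K.starProjection_eq_self_iff

theorem hlp_orthogonal_val {𝕜 E : Type*} [RCLike 𝕜] [NormedAddCommGroup E] [InnerProductSpace 𝕜 E]
    {K : Submodule 𝕜 E} [K.HasOrthogonalProjection] (u : E) :
    (Kᗮ.orthogonalProjectionOnto u : E) = u - (K.orthogonalProjectionOnto u : E) :=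
  K.starProjection_orthogonal_val u

theorem hlp_inner_left_eq_right {𝕜 E : Type*} [RCLike 𝕜] [NormedAddCommGroup E]
    [InnerProductSpace 𝕜 E] (K : Submodule 𝕜 E) [K.HasOrthogonalProjection] (u v : E) :
    (inner 𝕜 (K.orthogonalProjectionOnto u : E) v) = inner 𝕜 u (K.orthogonalProjectionOnto v : E) :=
  K.inner_starProjection_left_eq_right u v

theorem hlp_sub_mem_orthogonal {𝕜 E : Type*} [RCLike 𝕜] [NormedAddCommGroup E]
    [InnerProductSpace 𝕜 E] {K : Submodule 𝕜 E} [K.HasOrthogonalProjection] (v : E) :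
    v - (K.orthogonalProjectionOnto v : E) ∈ Kᗮ :=
  K.sub_starProjection_mem_orthogonal v

theorem hlp_add_orthogonal {𝕜 E : Type*} [RCLike 𝕜] [NormedAddCommGroup E]
    [InnerProductSpace 𝕜 E] (K : Submodule 𝕜 E) [K.HasOrthogonalProjection] (w : E) :
    (K.orthogonalProjectionOnto w : E) + (Kᗮ.orthogonalProjectionOnto w : E) = w :=
  K.starProjection_add_starProjection_orthogonal w

/-- with `ν := inf {‖P_{T⊥} x‖/‖x‖ : x ∈ P_{S⊥}(T⊥), x ≠ 0} > 0` and `xn` the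
minimal-norm element of `{x ∈ S⊥ : P_{S⊥} P_{T⊥}(x + P_S f) = 0}`, the sharp bounds
`‖xn‖ ≤ ‖P_{T⊥} P_S P₀ f‖/ν` and `‖xn‖ ≤ ‖P_S P₀ f‖ √(1 − ν²)/ν` hold, where `P₀` is the
orthogonal projection onto `H₀`, the orthogonal complement of the subspace spanned by
`S∩T`, `S⊥∩T`, `S∩T⊥` and `S⊥∩T⊥`. -/
theorem stmt_13 {𝕜 H : Type*} [RCLike 𝕜] [NormedAddCommGroup H] [InnerProductSpace 𝕜 H]
    [CompleteSpace H] (S T : Submodule 𝕜 H)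
    [Submodule.HasOrthogonalProjection S] [Submodule.HasOrthogonalProjection T]
    (ν : ℝ)
    (hν : ν = sInf {r : ℝ | ∃ y ∈ Tᗮ, (Submodule.orthogonalProjectionOnto Sᗮ y : H) ≠ 0 ∧
      r = ‖(Submodule.orthogonalProjectionOnto Tᗮ ((Submodule.orthogonalProjectionOnto Sᗮ y : H)) : H)‖ /
        ‖(Submodule.orthogonalProjectionOnto Sᗮ y : H)‖})
    (hνpos : 0 < ν) (f : H) (xn : H)
    (hxn : xn ∈ Sᗮ ∧
      (Submodule.orthogonalProjectionOnto Sᗮ ((xn + (Submodule.orthogonalProjectionOnto S f : H)) -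
        (Submodule.orthogonalProjectionOnto T (xn + (Submodule.orthogonalProjectionOnto S f : H)) : H)) : H) = 0 ∧
      ∀ x : H, x ∈ Sᗮ →
        (Submodule.orthogonalProjectionOnto Sᗮ ((x + (Submodule.orthogonalProjectionOnto S f : H)) -
          (Submodule.orthogonalProjectionOnto T (x + (Submodule.orthogonalProjectionOnto S f : H)) : H)) : H) = 0 →
        ‖xn‖ ≤ ‖x‖) :
    ‖xn‖ ≤ ‖(Submodule.orthogonalProjectionOnto Tᗮ ((Submodule.orthogonalProjectionOnto S
        ((Submodule.orthogonalProjectionOnto ((S ⊓ T) ⊔ (Sᗮ ⊓ T) ⊔ (S ⊓ Tᗮ) ⊔ (Sᗮ ⊓ Tᗮ))ᗮ f : H)) : H)) : H)‖ / ν ∧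
    ‖xn‖ ≤ ‖(Submodule.orthogonalProjectionOnto S
        ((Submodule.orthogonalProjectionOnto ((S ⊓ T) ⊔ (Sᗮ ⊓ T) ⊔ (S ⊓ Tᗮ) ⊔ (Sᗮ ⊓ Tᗮ))ᗮ f : H)) : H)‖ *
      Real.sqrt (1 - ν ^ 2) / ν := by
  classical
  obtain ⟨hxnS, hfeas0, hmin⟩ := hxn
  set K : Submodule 𝕜 H := (S ⊓ T) ⊔ (Sᗮ ⊓ T) ⊔ (S ⊓ Tᗮ) ⊔ (Sᗮ ⊓ Tᗮ) with hKdef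
  set Q : H → H := fun z => (Submodule.orthogonalProjectionOnto Sᗮ z : H) with hQdef
  set R : H → H := fun z => (Submodule.orthogonalProjectionOnto Tᗮ z : H) with hRdef
  set PSf : H := (Submodule.orthogonalProjectionOnto S f : H) with hPSf
  set g : H := (Submodule.orthogonalProjectionOnto S ((Submodule.orthogonalProjectionOnto Kᗮ f : H)) : H) with hgdef
  -- basic facts
  have hQ_mem : ∀ z : H, Q z ∈ Sᗮ := fun z => SetLike.coe_mem _
  have hR_mem : ∀ z : H, R z ∈ Tᗮ := fun z => SetLike.coe_mem _
  have hQ_id : ∀ z ∈ Sᗮ, Q z = z := fun z hz => hlp_eq_self_iff.mpr hz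
  have hR_id : ∀ z ∈ Tᗮ, R z = z := fun z hz => hlp_eq_self_iff.mpr hz
  have hQ_zero : ∀ z ∈ S, Q z = 0 := fun z hz => by
    show ((Submodule.orthogonalProjectionOnto Sᗮ z : Sᗮ) : H) = 0
    rw [Submodule.orthogonalProjectionOnto_apply_of_mem_orthogonal
      (S.le_orthogonal_orthogonal hz)]
    rfl
  have hR_zero : ∀ z ∈ T, R z = 0 := fun z hz => by
    show ((Submodule.orthogonalProjectionOnto Tᗮ z : Tᗮ) : H) = 0
    rw [Submodule.orthogonalProjectionOnto_apply_of_mem_orthogonal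
      (T.le_orthogonal_orthogonal hz)]
    rfl
  have hQ_subS : ∀ z : H, z - Q z ∈ S := fun z => by
    rw [hQdef]
    simp only [hlp_orthogonal_val, sub_sub_cancel]
    exact SetLike.coe_mem _
  have hR_subT : ∀ z : H, z - R z ∈ T := fun z => by
    rw [hRdef]
    simp only [hlp_orthogonal_val, sub_sub_cancel]
    exact SetLike.coe_mem _
  have hQ_add : ∀ a b : H, Q (a + b) = Q a + Q b := fun a b => by
    simp only [hQdef, map_add, Submodule.coe_add]
  have hR_add : ∀ a b : H, R (a + b) = R a + R b := fun a b => by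
    simp only [hRdef, map_add, Submodule.coe_add]
  have hQ_sub : ∀ a b : H, Q (a - b) = Q a - Q b := fun a b => by
    simp only [hQdef, map_sub, Submodule.coe_sub]
  have hR_sub : ∀ a b : H, R (a - b) = R a - R b := fun a b => by
    simp only [hRdef, map_sub, Submodule.coe_sub]
  have hQ_smul : ∀ (c : 𝕜) (a : H), Q (c • a) = c • Q a := fun c a => by
    simp only [hQdef, map_smul, Submodule.coe_smul]
  have hR_smul : ∀ (c : 𝕜) (a : H), R (c • a) = c • R a := fun c a => by
    simp only [hRdef, map_smul, Submodule.coe_smul]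
  have hQ_adj : ∀ a b : H, (inner 𝕜 (Q a) b : 𝕜) = inner 𝕜 a (Q b) := fun a b => by
    simp only [hQdef]
    exact hlp_inner_left_eq_right Sᗮ a b
  -- constraint as Q ∘ R
  have hconstr : ∀ z : H,
      (Submodule.orthogonalProjectionOnto Sᗮ (z - (Submodule.orthogonalProjectionOnto T z : H)) : H) = Q (R z) := by
    intro z
    have h : z - (Submodule.orthogonalProjectionOnto T z : H) = ((Submodule.orthogonalProjectionOnto Tᗮ z : H)) :=
      (hlp_orthogonal_val z).symm
    rw [hQdef, hRdef]
    simp only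
    rw [h]
  rw [hconstr] at hfeas0
  -- hfeas0 : Q (R (xn + PSf)) = 0
  have hQc : Continuous Q := by
    rw [hQdef]
    exact continuous_subtype_val.comp (Submodule.orthogonalProjectionOnto Sᗮ).continuous
  have hRc : Continuous R := by
    rw [hRdef]
    exact continuous_subtype_val.comp (Submodule.orthogonalProjectionOnto Tᗮ).continuous
  -- the ν bound on the image of Tᗮ under Q
  have hnu_le : ∀ y ∈ Tᗮ, ν * ‖Q y‖ ≤ ‖R (Q y)‖ := by
    intro y hy
    by_cases h0 : Q y = 0
    · rw [h0]
      simp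
    · have hmem : ‖R (Q y)‖ / ‖Q y‖ ∈ {r : ℝ | ∃ y ∈ Tᗮ, (Submodule.orthogonalProjectionOnto Sᗮ y : H) ≠ 0 ∧
          r = ‖(Submodule.orthogonalProjectionOnto Tᗮ ((Submodule.orthogonalProjectionOnto Sᗮ y : H)) : H)‖ /
            ‖(Submodule.orthogonalProjectionOnto Sᗮ y : H)‖} := ⟨y, hy, h0, rfl⟩
      have hbdd : BddBelow {r : ℝ | ∃ y ∈ Tᗮ, (Submodule.orthogonalProjectionOnto Sᗮ y : H) ≠ 0 ∧
          r = ‖(Submodule.orthogonalProjectionOnto Tᗮ ((Submodule.orthogonalProjectionOnto Sᗮ y : H)) : H)‖ /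
            ‖(Submodule.orthogonalProjectionOnto Sᗮ y : H)‖} := by
        refine ⟨0, ?_⟩
        rintro r ⟨y', _, _, rfl⟩
        positivity
      have hle : ν ≤ ‖R (Q y)‖ / ‖Q y‖ := hν ▸ csInf_le hbdd hmem
      have hpos : (0:ℝ) < ‖Q y‖ := norm_pos_iff.mpr h0
      calc ν * ‖Q y‖ ≤ (‖R (Q y)‖ / ‖Q y‖) * ‖Q y‖ := by
            exact mul_le_mul_of_nonneg_right hle (norm_nonneg _)
        _ = ‖R (Q y)‖ := div_mul_cancel₀ _ hpos.ne'
  -- the closure of the image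
  set QL : H →L[𝕜] H := Sᗮ.subtypeL.comp (Submodule.orthogonalProjectionOnto Sᗮ) with hQL
  have hQLQ : ∀ z : H, QL z = Q z := fun z => rfl
  set M : Submodule 𝕜 H := (Tᗮ.map (QL : H →ₗ[𝕜] H)).topologicalClosure with hMdef
  have hMS : M ≤ Sᗮ := by
    apply Submodule.topologicalClosure_minimal
    · rintro _ ⟨y, hy, rfl⟩
      exact hQ_mem y
    · exact S.isClosed_orthogonal
  have hnuM : ∀ x ∈ M, ν * ‖x‖ ≤ ‖R x‖ := by
    intro x hx
    have hsub : (Tᗮ.map (QL : H →ₗ[𝕜] H) : Set H) ⊆ {z : H | ν * ‖z‖ ≤ ‖R z‖} := by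
      rintro _ ⟨y, hy, rfl⟩
      exact hnu_le y hy
    have hcl : IsClosed {z : H | ν * ‖z‖ ≤ ‖R z‖} :=
      isClosed_le (continuous_const.mul continuous_norm) (continuous_norm.comp hRc)
    have hx' : x ∈ closure (Tᗮ.map (QL : H →ₗ[𝕜] H) : Set H) := hx
    exact closure_minimal hsub hcl hx'
  -- M is orthogonal to S ⊓ Tᗮ (indeed to anything killed by Q∘R-adjoint reasoning)
  have hMperp : ∀ s : H, Q s = 0 → ∀ x ∈ M, (inner 𝕜 x s : 𝕜) = 0 := by
    intro s hs x hx
    have hsub : (Tᗮ.map (QL : H →ₗ[𝕜] H) : Set H) ⊆ {z : H | (inner 𝕜 z s : 𝕜) = 0} := by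
      rintro _ ⟨y, hy, rfl⟩
      show (inner 𝕜 (QL y) s : 𝕜) = 0
      rw [hQLQ, hQ_adj, hs, inner_zero_right]
    have hcl : IsClosed {z : H | (inner 𝕜 z s : 𝕜) = 0} :=
      isClosed_eq (Continuous.inner continuous_id continuous_const) continuous_const
    have hx' : x ∈ closure (Tᗮ.map (QL : H →ₗ[𝕜] H) : Set H) := hx
    exact closure_minimal hsub hcl hx'
  -- minimality forces xn ⊥ (Sᗮ ⊓ T)
  have horth : ∀ k : H, k ∈ Sᗮ → k ∈ T → (inner 𝕜 k xn : 𝕜) = 0 := by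
    intro k hkS hkT
    by_cases hk0 : k = 0
    · rw [hk0, inner_zero_left]
    by_contra hne
    have hknorm : (0:ℝ) < ‖k‖ := norm_pos_iff.mpr hk0
    have hkne : (‖k‖:ℝ) ≠ 0 := hknorm.ne'
    set c : 𝕜 := (inner 𝕜 k xn : 𝕜) / ((‖k‖:𝕜) ^ 2) with hc
    set x : H := xn - c • k with hx
    have hxS : x ∈ Sᗮ := Sᗮ.sub_mem hxnS (Sᗮ.smul_mem c hkS)
    have hxfeas : Q (R (x + PSf)) = 0 := by
      have h1 : x + PSf = (xn + PSf) - c • k := by rw [hx]; abel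
      rw [h1, hR_sub, hR_smul, hR_zero k hkT, smul_zero, sub_zero, hfeas0]
    have hle : ‖xn‖ ≤ ‖x‖ := by
      apply hmin x hxS
      rw [hconstr]
      exact hxfeas
    have hip : (inner 𝕜 xn (c • k) : 𝕜) = ((‖(inner 𝕜 k xn : 𝕜)‖^2 / ‖k‖^2 : ℝ) : 𝕜) := by
      rw [inner_smul_right, hc, ← inner_conj_symm xn k, div_mul_eq_mul_div, RCLike.mul_conj]
      push_cast
      ring
    have hipre : RCLike.re (inner 𝕜 xn (c • k) : 𝕜) = ‖(inner 𝕜 k xn : 𝕜)‖^2 / ‖k‖^2 := by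
      rw [hip, RCLike.ofReal_re]
    have hnormc : ‖c‖ = ‖(inner 𝕜 k xn : 𝕜)‖ / ‖k‖^2 := by
      rw [hc, norm_div, norm_pow, RCLike.norm_ofReal, abs_norm]
    have hnc : ‖c • k‖ ^ 2 = ‖(inner 𝕜 k xn : 𝕜)‖^2 / ‖k‖^2 := by
      rw [norm_smul, mul_pow, hnormc, div_pow]
      field_simp
    have hx2 : ‖x‖^2 = ‖xn‖^2 - ‖(inner 𝕜 k xn : 𝕜)‖^2 / ‖k‖^2 := by
      rw [hx, norm_sub_sq (𝕜 := 𝕜), hipre, hnc]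
      ring
    have hle2 : ‖xn‖^2 ≤ ‖x‖^2 := by
      have := mul_self_le_mul_self (norm_nonneg xn) hle
      nlinarith
    have hz : ‖(inner 𝕜 k xn : 𝕜)‖^2 / ‖k‖^2 ≤ 0 := by nlinarith
    have hz2 : ‖(inner 𝕜 k xn : 𝕜)‖^2 ≤ 0 := by
      have h2 : (0:ℝ) < ‖k‖^2 := by positivity
      have := (div_nonpos_iff.mp hz)
      rcases this with ⟨h3, h4⟩ | ⟨h3, h4⟩
      · nlinarith
      · exact h3
    have : ‖(inner 𝕜 k xn : 𝕜)‖ = 0 := by nlinarith [norm_nonneg (inner 𝕜 k xn : 𝕜)]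
    exact hne (norm_eq_zero.mp this)
  -- xn belongs to M
  have hMclosed : IsClosed (M : Set H) := Submodule.isClosed_topologicalClosure _
  haveI : CompleteSpace M := hMclosed.completeSpace_coe
  have hxnM : xn ∈ M := by
    set w : H := xn - (Submodule.orthogonalProjectionOnto M xn : H) with hw
    have hwMo : w ∈ Mᗮ := hlp_sub_mem_orthogonal xn
    have hwS : w ∈ Sᗮ := Sᗮ.sub_mem hxnS (hMS (SetLike.coe_mem _))
    have hwT : w ∈ T := by
      rw [← T.orthogonal_orthogonal, Submodule.mem_orthogonal]
      intro y hy
      have hdec : y = (y - Q y) + Q y := by abel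
      have h1 : (inner 𝕜 (y - Q y) w : 𝕜) = 0 :=
        Submodule.inner_right_of_mem_orthogonal (hQ_subS y) hwS
      have h2 : (inner 𝕜 (Q y) w : 𝕜) = 0 := by
        refine Submodule.inner_right_of_mem_orthogonal ?_ hwMo
        exact Submodule.le_topologicalClosure _ ⟨y, hy, rfl⟩
      calc (inner 𝕜 y w : 𝕜) = inner 𝕜 ((y - Q y) + Q y) w := by rw [← hdec]
        _ = inner 𝕜 (y - Q y) w + inner 𝕜 (Q y) w := inner_add_left _ _ _
        _ = 0 := by rw [h1, h2, add_zero]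
    have hww : (inner 𝕜 w w : 𝕜) = 0 := by
      have h1 : (inner 𝕜 w xn : 𝕜) = 0 := horth w hwS hwT
      have h2 : (inner 𝕜 w ((Submodule.orthogonalProjectionOnto M xn : H)) : 𝕜) = 0 :=
        Submodule.inner_left_of_mem_orthogonal (SetLike.coe_mem _) hwMo
      calc (inner 𝕜 w w : 𝕜) = inner 𝕜 w (xn - (Submodule.orthogonalProjectionOnto M xn : H)) := by rw [← hw]
        _ = inner 𝕜 w xn - inner 𝕜 w ((Submodule.orthogonalProjectionOnto M xn : H)) := inner_sub_right _ _ _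
        _ = 0 := by rw [h1, h2, sub_zero]
    have hw0 : w = 0 := inner_self_eq_zero.mp hww
    have hxe : xn = (Submodule.orthogonalProjectionOnto M xn : H) := by
      have h1 : xn - (Submodule.orthogonalProjectionOnto M xn : H) = 0 := hw ▸ hw0
      exact sub_eq_zero.mp h1
    rw [hxe]
    exact SetLike.coe_mem _
  -- the kernel lemma : Q ∘ R ∘ P_S vanishes on the closure of K
  set PSL : H →L[𝕜] H := S.subtypeL.comp (Submodule.orthogonalProjectionOnto S) with hPSL
  set RL : H →L[𝕜] H := Tᗮ.subtypeL.comp (Submodule.orthogonalProjectionOnto Tᗮ) with hRL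
  set E : H →L[𝕜] H := QL.comp (RL.comp PSL) with hE
  have hEapp : ∀ z : H, E z = Q (R ((Submodule.orthogonalProjectionOnto S z : H))) := fun z => rfl
  have hQ00 : Q 0 = 0 := hQ_zero 0 S.zero_mem
  have hR00 : R 0 = 0 := hR_zero 0 T.zero_mem
  have hKN : K ≤ LinearMap.ker (E : H →ₗ[𝕜] H) := by
    rw [hKdef]
    refine sup_le (sup_le (sup_le ?_ ?_) ?_) ?_
    · rintro v hv
      obtain ⟨hvS, hvT⟩ := Submodule.mem_inf.mp hv
      rw [LinearMap.mem_ker, ContinuousLinearMap.coe_coe, hEapp, hlp_eq_self_iff.mpr hvS,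
        hR_zero v hvT, hQ00]
    · rintro v hv
      obtain ⟨hvS, hvT⟩ := Submodule.mem_inf.mp hv
      have h0 : (Submodule.orthogonalProjectionOnto S v : H) = 0 := by
        rw [Submodule.orthogonalProjectionOnto_apply_of_mem_orthogonal hvS]
        rfl
      rw [LinearMap.mem_ker, ContinuousLinearMap.coe_coe, hEapp, h0, hR00, hQ00]
    · rintro v hv
      obtain ⟨hvS, hvT⟩ := Submodule.mem_inf.mp hv
      rw [LinearMap.mem_ker, ContinuousLinearMap.coe_coe, hEapp, hlp_eq_self_iff.mpr hvS,
        hR_id v hvT, hQ_zero v hvS]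
    · rintro v hv
      obtain ⟨hvS, hvT⟩ := Submodule.mem_inf.mp hv
      have h0 : (Submodule.orthogonalProjectionOnto S v : H) = 0 := by
        rw [Submodule.orthogonalProjectionOnto_apply_of_mem_orthogonal hvS]
        rfl
      rw [LinearMap.mem_ker, ContinuousLinearMap.coe_coe, hEapp, h0, hR00, hQ00]
  have hclosureKN : K.topologicalClosure ≤ LinearMap.ker (E : H →ₗ[𝕜] H) := by
    apply Submodule.topologicalClosure_minimal
    · exact hKN
    · exact ContinuousLinearMap.isClosed_ker E
  have hfk : f - (Submodule.orthogonalProjectionOnto Kᗮ f : H) ∈ Kᗮᗮ :=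
    hlp_sub_mem_orthogonal f
  rw [Submodule.orthogonal_orthogonal_eq_closure] at hfk
  have hEfk : Q (R ((Submodule.orthogonalProjectionOnto S
      (f - (Submodule.orthogonalProjectionOnto Kᗮ f : H)) : H))) = 0 := by
    have h := hclosureKN hfk
    rw [LinearMap.mem_ker, ContinuousLinearMap.coe_coe, hEapp] at h
    exact h
  have hPSsub : (Submodule.orthogonalProjectionOnto S (f - (Submodule.orthogonalProjectionOnto Kᗮ f : H)) : H)
      = PSf - g := by
    rw [map_sub, Submodule.coe_sub]
  have hfeasg : Q (R (xn + g)) = 0 := by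
    have h1 : xn + g = (xn + PSf) - (PSf - g) := by abel
    rw [h1, hR_sub, hQ_sub, hfeas0, ← hPSsub, hEfk, sub_zero]
  -- R (xn + g) = 0
  have hgS : g ∈ S := by rw [hgdef]; exact SetLike.coe_mem _
  have hsT : R (xn + g) ∈ Tᗮ := hR_mem _
  have hsS : R (xn + g) ∈ S := by
    have h0 : Submodule.orthogonalProjectionOnto Sᗮ (R (xn + g)) = 0 := Submodule.coe_eq_zero.mp hfeasg
    have h1 := Submodule.orthogonalProjectionOnto_eq_zero_iff.mp h0
    rwa [S.orthogonal_orthogonal] at h1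
  have hxns : (inner 𝕜 xn (R (xn + g)) : 𝕜) = 0 := hMperp (R (xn + g)) hfeasg xn hxnM
  have hsK : R (xn + g) ∈ K := by
    rw [hKdef]
    exact Submodule.mem_sup_left (Submodule.mem_sup_right
      (Submodule.mem_inf.mpr ⟨hsS, hsT⟩))
  have hgs : (inner 𝕜 g (R (xn + g)) : 𝕜) = 0 := by
    rw [hgdef]
    rw [hlp_inner_left_eq_right S]
    rw [show ((Submodule.orthogonalProjectionOnto S (R (xn + g)) : H)) = R (xn + g) from
      hlp_eq_self_iff.mpr hsS]
    exact Submodule.inner_left_of_mem_orthogonal hsK (SetLike.coe_mem _)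
  have hss : (inner 𝕜 (R (xn + g)) (R (xn + g)) : 𝕜) = 0 := by
    have hdec : xn + g = ((xn + g) - R (xn + g)) + R (xn + g) := by abel
    have h1 : (inner 𝕜 ((xn + g) - R (xn + g)) (R (xn + g)) : 𝕜) = 0 :=
      Submodule.inner_right_of_mem_orthogonal (hR_subT (xn + g)) (hR_mem (xn + g))
    have h2 : (inner 𝕜 (xn + g) (R (xn + g)) : 𝕜) = 0 := by
      rw [inner_add_left, hxns, hgs, add_zero]
    calc (inner 𝕜 (R (xn + g)) (R (xn + g)) : 𝕜)
        = inner 𝕜 (((xn + g) - R (xn + g)) + R (xn + g)) (R (xn + g))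
          - inner 𝕜 ((xn + g) - R (xn + g)) (R (xn + g)) := by
          rw [inner_add_left]; ring
      _ = 0 := by rw [← hdec, h2, h1, sub_zero]
  have hRxg : R (xn + g) = 0 := inner_self_eq_zero.mp hss
  have hRxn : R xn = - R g := by
    have h0 : R xn + R g = 0 := by rw [← hR_add, hRxg]
    exact eq_neg_of_add_eq_zero_left h0
  -- first bound
  have hb1 : ν * ‖xn‖ ≤ ‖R g‖ := by
    have h := hnuM xn hxnM
    rwa [hRxn, norm_neg] at h
  constructor
  · show ‖xn‖ ≤ ‖R g‖ / ν
    rw [le_div_iff₀ hνpos]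
    linarith [hb1, mul_comm ‖xn‖ ν]
  · -- second bound
    show ‖xn‖ ≤ ‖g‖ * Real.sqrt (1 - ν ^ 2) / ν
    by_cases hx0 : xn = 0
    · rw [hx0, norm_zero]
      positivity
    · have hxpos : 0 < ‖xn‖ := norm_pos_iff.mpr hx0
      set pt : H := (Submodule.orthogonalProjectionOnto T xn : H) with hpt
      have hdecT : pt + R xn = xn :=
        hlp_add_orthogonal T xn
      have hptR : (inner 𝕜 pt (R xn) : 𝕜) = 0 := by
        rw [hpt]
        exact Submodule.inner_right_of_mem_orthogonal (SetLike.coe_mem _) (hR_mem xn)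
      have hpyth : ‖xn‖ ^ 2 = ‖pt‖ ^ 2 + ‖R xn‖ ^ 2 := by
        have h := norm_add_sq_eq_norm_sq_add_norm_sq_of_inner_eq_zero pt (R xn) hptR
        rw [hdecT] at h
        rw [pow_two, pow_two, pow_two]
        exact h
      have hRle : ‖R xn‖ ≤ ‖xn‖ := by
        nlinarith [hpyth, norm_nonneg pt, norm_nonneg (R xn), norm_nonneg xn,
          sq_nonneg (‖xn‖ - ‖R xn‖)]
      have hν1 : ν ≤ 1 := by nlinarith [hnuM xn hxnM, hRle, hxpos]
      have h1ν : (0:ℝ) ≤ 1 - ν ^ 2 := by nlinarith [hνpos, hν1]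
      have htT : xn + g ∈ T := by
        have h0 : Submodule.orthogonalProjectionOnto Tᗮ (xn + g) = 0 := Submodule.coe_eq_zero.mp hRxg
        have h1 := Submodule.orthogonalProjectionOnto_eq_zero_iff.mp h0
        rwa [T.orthogonal_orthogonal] at h1
      have hinner0 : (inner 𝕜 xn g : 𝕜) = 0 :=
        Submodule.inner_left_of_mem_orthogonal hgS hxnS
      have hxx : RCLike.re (inner 𝕜 xn (xn + g) : 𝕜) = ‖xn‖ ^ 2 := by
        rw [inner_add_right, hinner0, add_zero, inner_self_eq_norm_sq]
      have hsplit : (inner 𝕜 xn (xn + g) : 𝕜) = inner 𝕜 pt (xn + g) := by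
        nth_rewrite 1 [← hdecT]
        rw [inner_add_left]
        have h0 : (inner 𝕜 (R xn) (xn + g) : 𝕜) = 0 :=
          Submodule.inner_left_of_mem_orthogonal htT (hR_mem xn)
        rw [h0, add_zero]
      have hcs : ‖xn‖ ^ 2 ≤ ‖pt‖ * ‖xn + g‖ := by
        calc ‖xn‖ ^ 2 = RCLike.re (inner 𝕜 pt (xn + g) : 𝕜) := by rw [← hxx, hsplit]
          _ ≤ ‖(inner 𝕜 pt (xn + g) : 𝕜)‖ := RCLike.re_le_norm _
          _ ≤ ‖pt‖ * ‖xn + g‖ := norm_inner_le_norm _ _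
      have hng : ‖xn + g‖ ^ 2 = ‖xn‖ ^ 2 + ‖g‖ ^ 2 := by
        have h := norm_add_sq_eq_norm_sq_add_norm_sq_of_inner_eq_zero xn g hinner0
        rw [pow_two, pow_two, pow_two]
        exact h
      have hPT2 : ‖pt‖ ^ 2 ≤ (1 - ν ^ 2) * ‖xn‖ ^ 2 := by
        nlinarith [hpyth, hnuM xn hxnM, mul_nonneg hνpos.le (norm_nonneg xn),
          norm_nonneg (R xn)]
      have key : (ν * ‖xn‖) ^ 2 ≤ (1 - ν ^ 2) * ‖g‖ ^ 2 := by
        have hcs2 : (‖xn‖ ^ 2) ^ 2 ≤ (‖pt‖ * ‖xn + g‖) ^ 2 :=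
          pow_le_pow_left₀ (sq_nonneg _) hcs 2
        have hexp : (‖pt‖ * ‖xn + g‖) ^ 2 = ‖pt‖ ^ 2 * (‖xn‖ ^ 2 + ‖g‖ ^ 2) := by
          rw [mul_pow, hng]
        nlinarith [hcs2, hexp, hPT2, hxpos, sq_nonneg ‖g‖, sq_nonneg ‖xn‖,
          pow_pos hxpos 2, h1ν, sq_nonneg (‖xn‖ ^ 2 + ‖g‖ ^ 2)]
      have h0' : (0:ℝ) ≤ ν * ‖xn‖ := mul_nonneg hνpos.le (norm_nonneg _)
      have h1' : (0:ℝ) ≤ Real.sqrt (1 - ν ^ 2) * ‖g‖ :=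
        mul_nonneg (Real.sqrt_nonneg _) (norm_nonneg _)
      have hrhs : (Real.sqrt (1 - ν ^ 2) * ‖g‖) ^ 2 = (1 - ν ^ 2) * ‖g‖ ^ 2 := by
        rw [mul_pow, Real.sq_sqrt h1ν]
      have hfin : ν * ‖xn‖ ≤ Real.sqrt (1 - ν ^ 2) * ‖g‖ := by
        have hsq := Real.sqrt_le_sqrt (by nlinarith [key, hrhs] :
          (ν * ‖xn‖) ^ 2 ≤ (Real.sqrt (1 - ν ^ 2) * ‖g‖) ^ 2)
        rwa [Real.sqrt_sq h0', Real.sqrt_sq h1'] at hsq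
      rw [le_div_iff₀ hνpos]
      linarith [hfin, mul_comm ‖xn‖ ν, mul_comm ‖g‖ (Real.sqrt (1 - ν ^ 2))]
end

section
/- Let ν := inf{‖P_{T⊥} x‖ / ‖x‖ : x ∈ P_{S⊥}(T⊥), x ≠ 0}, suppose ν > 0, let f ∈ H, let x̂_n be the minimal-norm element of {x ∈ S⊥ : P_{S⊥} P_{T⊥}(x + P_S f) = 0}, and let f̂_n = x̂_n + P_S f. Then the exact error decomposition ‖f̂_n − f‖² = ‖P_{S⊥∩T} f‖² + ‖P_{S⊥∩T⊥} f‖² + ‖x̂_n − P_{S⊥} P₀ f‖² holds. -/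
set_option synthInstance.maxHeartbeats 1000000
set_option maxHeartbeats 4000000

section Aux

variable {𝕜 H : Type*} [RCLike 𝕜] [NormedAddCommGroup H] [InnerProductSpace 𝕜 H]

local notation "⟪" x ", " y "⟫" => @inner 𝕜 _ _ x y

/-- If `u` has norm no larger than any `u - w` for `w ∈ K`, then `u ⊥ K`. -/
lemma aux_minnorm_inner_zero (K : Submodule 𝕜 H) {u : H}
    (h : ∀ w ∈ K, ‖u‖ ≤ ‖u - w‖) : ∀ w ∈ K, ⟪u, w⟫ = 0 := by
  have h0 : ‖u - 0‖ = ⨅ w : K, ‖u - w‖ := by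
    apply le_antisymm
    · exact le_ciInf fun w => by simpa using h w w.2
    · have hb : BddBelow (Set.range fun w : K => ‖u - (w : H)‖) := by
        refine ⟨0, ?_⟩
        rintro y ⟨z, rfl⟩
        exact norm_nonneg _
      simpa using ciInf_le hb (⟨0, K.zero_mem⟩ : K)
  intro w hw
  have := (Submodule.norm_eq_iInf_iff_inner_eq_zero (K := K) K.zero_mem).mp h0 w hw
  simpa using this

lemma aux_pythagoras3 {u a b : H} (hua : ⟪u, a⟫ = 0) (hub : ⟪u, b⟫ = 0)
    (hab : ⟪a, b⟫ = 0) : ‖u - (a + b)‖ ^ 2 = ‖a‖ ^ 2 + ‖b‖ ^ 2 + ‖u‖ ^ 2 := by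
  have h1 : ⟪u, -(a + b)⟫ = 0 := by rw [inner_neg_right, inner_add_right, hua, hub]; simp
  have h2 : ‖u - (a + b)‖ ^ 2 = ‖u‖ ^ 2 + ‖-(a + b)‖ ^ 2 := by
    rw [sub_eq_add_neg, sq, sq, sq]
    exact norm_add_sq_eq_norm_sq_add_norm_sq_of_inner_eq_zero _ _ h1
  have h3 : ‖a + b‖ ^ 2 = ‖a‖ ^ 2 + ‖b‖ ^ 2 := by
    rw [sq, sq, sq]
    exact norm_add_sq_eq_norm_sq_add_norm_sq_of_inner_eq_zero _ _ hab
  rw [h2, norm_neg, h3]; ring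

lemma orthogonalProjection_eq_self_iff {K : Submodule 𝕜 H} [K.HasOrthogonalProjection] {v : H} :
    (K.orthogonalProjectionOnto v : H) = v ↔ v ∈ K :=
  Submodule.starProjection_eq_self_iff

lemma inner_orthogonalProjection_left_eq_right {K : Submodule 𝕜 H} [K.HasOrthogonalProjection]
    (u v : H) : ⟪(K.orthogonalProjectionOnto u : H), v⟫ = ⟪u, (K.orthogonalProjectionOnto v : H)⟫ :=
  K.inner_starProjection_left_eq_right u v

lemma sub_orthogonalProjection_mem_orthogonal {K : Submodule 𝕜 H} [K.HasOrthogonalProjection]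
    (v : H) : v - (K.orthogonalProjectionOnto v : H) ∈ Kᗮ :=
  Submodule.sub_starProjection_mem_orthogonal v

lemma orthogonalProjection_orthogonal_val {K : Submodule 𝕜 H} [K.HasOrthogonalProjection]
    (u : H) : (Kᗮ.orthogonalProjectionOnto u : H) = u - (K.orthogonalProjectionOnto u : H) :=
  Submodule.starProjection_orthogonal_val u

end Aux

/-- with `ν := inf {‖P_{T⊥} x‖/‖x‖ : x ∈ P_{S⊥}(T⊥), x ≠ 0} > 0`, `xn` the
minimal-norm element of `{x ∈ S⊥ : P_{S⊥} P_{T⊥}(x + P_S f) = 0}` and `fn = xn + P_S f`, the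
exact error decomposition
`‖fn − f‖² = ‖P_{S⊥∩T} f‖² + ‖P_{S⊥∩T⊥} f‖² + ‖xn − P_{S⊥} P₀ f‖²` holds. -/
theorem stmt_14 {𝕜 H : Type*} [RCLike 𝕜] [NormedAddCommGroup H] [InnerProductSpace 𝕜 H]
    [CompleteSpace H] (S T : Submodule 𝕜 H)
    [Submodule.HasOrthogonalProjection S] [Submodule.HasOrthogonalProjection T]
    [Submodule.HasOrthogonalProjection (Sᗮ ⊓ T)] [Submodule.HasOrthogonalProjection (Sᗮ ⊓ Tᗮ)]
    (ν : ℝ)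
    (hν : ν = sInf {r : ℝ | ∃ y ∈ Tᗮ, (Submodule.orthogonalProjectionOnto Sᗮ y : H) ≠ 0 ∧
      r = ‖(Submodule.orthogonalProjectionOnto Tᗮ ((Submodule.orthogonalProjectionOnto Sᗮ y : H)) : H)‖ /
        ‖(Submodule.orthogonalProjectionOnto Sᗮ y : H)‖})
    (hνpos : 0 < ν) (f : H) (xn : H)
    (hxn : xn ∈ Sᗮ ∧
      (Submodule.orthogonalProjectionOnto Sᗮ ((xn + (Submodule.orthogonalProjectionOnto S f : H)) -
        (Submodule.orthogonalProjectionOnto T (xn + (Submodule.orthogonalProjectionOnto S f : H)) : H)) : H) = 0 ∧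
      ∀ x : H, x ∈ Sᗮ →
        (Submodule.orthogonalProjectionOnto Sᗮ ((x + (Submodule.orthogonalProjectionOnto S f : H)) -
          (Submodule.orthogonalProjectionOnto T (x + (Submodule.orthogonalProjectionOnto S f : H)) : H)) : H) = 0 →
        ‖xn‖ ≤ ‖x‖) :
    ‖(xn + (Submodule.orthogonalProjectionOnto S f : H)) - f‖ ^ 2 =
      ‖(Submodule.orthogonalProjectionOnto (Sᗮ ⊓ T) f : H)‖ ^ 2 +
      ‖(Submodule.orthogonalProjectionOnto (Sᗮ ⊓ Tᗮ) f : H)‖ ^ 2 +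
      ‖xn - (Submodule.orthogonalProjectionOnto Sᗮ
        ((Submodule.orthogonalProjectionOnto ((S ⊓ T) ⊔ (Sᗮ ⊓ T) ⊔ (S ⊓ Tᗮ) ⊔ (Sᗮ ⊓ Tᗮ))ᗮ f : H)) : H)‖ ^ 2 := by
  obtain ⟨hxnS, hcon, hmin⟩ := hxn
  set A : Submodule 𝕜 H := S ⊓ T with hA
  set B : Submodule 𝕜 H := Sᗮ ⊓ T with hB
  set C : Submodule 𝕜 H := S ⊓ Tᗮ with hC
  set D : Submodule 𝕜 H := Sᗮ ⊓ Tᗮ with hD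
  set W : Submodule 𝕜 H := A ⊔ B ⊔ C ⊔ D with hW
  set p : H := (Submodule.orthogonalProjectionOnto Wᗮ f : H) with hp
  set q : H := (Submodule.orthogonalProjectionOnto Sᗮ p : H) with hq
  set a : H := (Submodule.orthogonalProjectionOnto B f : H) with ha
  set b : H := (Submodule.orthogonalProjectionOnto D f : H) with hb
  have hBW : B ≤ W := le_sup_left.trans le_sup_left |>.trans' le_sup_right
  have hDW : D ≤ W := le_sup_right
  -- xn ⊥ B, by minimality
  have hxnB : ∀ w ∈ B, (inner 𝕜 xn w : 𝕜) = 0 := by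
    apply aux_minnorm_inner_zero
    intro w hw
    apply hmin (xn - w) (Sᗮ.sub_mem hxnS hw.1)
    have hkey : (xn - w + (Submodule.orthogonalProjectionOnto S f : H)) -
        (Submodule.orthogonalProjectionOnto T (xn - w + (Submodule.orthogonalProjectionOnto S f : H)) : H) =
        (xn + (Submodule.orthogonalProjectionOnto S f : H)) -
        (Submodule.orthogonalProjectionOnto T (xn + (Submodule.orthogonalProjectionOnto S f : H)) : H) := by
      have h1 : xn - w + (Submodule.orthogonalProjectionOnto S f : H) =
          (xn + (Submodule.orthogonalProjectionOnto S f : H)) - w := by abel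
      rw [h1, map_sub, Submodule.coe_sub, orthogonalProjection_eq_self_iff.mpr hw.2]
      abel
    rw [hkey, hcon]
  -- xn ⊥ D, from the constraint
  have hxnD : ∀ z ∈ D, (inner 𝕜 xn z : 𝕜) = 0 := by
    intro z hz
    set y : H := xn + (Submodule.orthogonalProjectionOnto S f : H) with hy
    have h0 : (inner 𝕜 ((Submodule.orthogonalProjectionOnto Sᗮ
        (y - (Submodule.orthogonalProjectionOnto T y : H)) : H)) z : 𝕜) = 0 := by
      rw [hcon, inner_zero_left]
    rw [inner_orthogonalProjection_left_eq_right,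
      orthogonalProjection_eq_self_iff.mpr hz.1, inner_sub_left,
      inner_orthogonalProjection_left_eq_right] at h0
    have hTz : Submodule.orthogonalProjectionOnto T z = 0 := Submodule.orthogonalProjectionOnto_eq_zero_iff.mpr hz.2
    rw [hTz] at h0
    simp only [ZeroMemClass.coe_zero, inner_zero_right, sub_zero, hy, inner_add_left,
      inner_orthogonalProjection_left_eq_right] at h0
    have hSz : Submodule.orthogonalProjectionOnto S z = 0 := Submodule.orthogonalProjectionOnto_eq_zero_iff.mpr hz.1
    rw [hSz] at h0
    simpa using h0
  have hpW : p ∈ Wᗮ := (Submodule.orthogonalProjectionOnto Wᗮ f).2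
  -- q ⊥ (W ∩ Sᗮ)
  have hqW : ∀ z ∈ W, z ∈ Sᗮ → (inner 𝕜 q z : 𝕜) = 0 := by
    intro z hzW hzS
    rw [hq, inner_orthogonalProjection_left_eq_right,
      orthogonalProjection_eq_self_iff.mpr hzS]
    exact inner_eq_zero_symm.mp ((Submodule.mem_orthogonal W p).mp hpW z hzW)
  -- the decomposition map vanishes on the closure of W
  set Phi : H →L[𝕜] H :=
    Sᗮ.subtypeL.comp (Submodule.orthogonalProjectionOnto Sᗮ) - B.subtypeL.comp (Submodule.orthogonalProjectionOnto B)
      - D.subtypeL.comp (Submodule.orthogonalProjectionOnto D) with hPhi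
  have hPhi_apply : ∀ x : H, Phi x = (Submodule.orthogonalProjectionOnto Sᗮ x : H) -
      (Submodule.orthogonalProjectionOnto B x : H) - (Submodule.orthogonalProjectionOnto D x : H) := by
    intro x
    simp [hPhi]
  have hker : W ≤ LinearMap.ker (Phi : H →ₗ[𝕜] H) := by
    have hzero : ∀ g : H, g ∈ W → Phi g = 0 := by
      intro g hg
      have key : ∀ g' : H, g' ∈ A ∨ g' ∈ B ∨ g' ∈ C ∨ g' ∈ D → Phi g' = 0 := by
        rintro g' (hg' | hg' | hg' | hg')
        · rw [hPhi_apply]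
          have h1 : Submodule.orthogonalProjectionOnto Sᗮ g' = 0 :=
            Submodule.orthogonalProjectionOnto_eq_zero_iff.mpr (S.le_orthogonal_orthogonal hg'.1)
          have h2 : Submodule.orthogonalProjectionOnto B g' = 0 :=
            Submodule.orthogonalProjectionOnto_eq_zero_iff.mpr
              ((Submodule.orthogonal_le (inf_le_left : B ≤ Sᗮ))
                (S.le_orthogonal_orthogonal hg'.1))
          have h3 : Submodule.orthogonalProjectionOnto D g' = 0 :=
            Submodule.orthogonalProjectionOnto_eq_zero_iff.mpr
              ((Submodule.orthogonal_le (inf_le_left : D ≤ Sᗮ))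
                (S.le_orthogonal_orthogonal hg'.1))
          rw [h1, h2, h3]; simp
        · rw [hPhi_apply]
          have h1 : (Submodule.orthogonalProjectionOnto Sᗮ g' : H) = g' :=
            orthogonalProjection_eq_self_iff.mpr hg'.1
          have h2 : (Submodule.orthogonalProjectionOnto B g' : H) = g' :=
            orthogonalProjection_eq_self_iff.mpr hg'
          have h3 : Submodule.orthogonalProjectionOnto D g' = 0 :=
            Submodule.orthogonalProjectionOnto_eq_zero_iff.mpr
              ((Submodule.orthogonal_le (inf_le_right : D ≤ Tᗮ))
                (T.le_orthogonal_orthogonal hg'.2))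
          rw [h1, h2, h3]; simp
        · rw [hPhi_apply]
          have h1 : Submodule.orthogonalProjectionOnto Sᗮ g' = 0 :=
            Submodule.orthogonalProjectionOnto_eq_zero_iff.mpr (S.le_orthogonal_orthogonal hg'.1)
          have h2 : Submodule.orthogonalProjectionOnto B g' = 0 :=
            Submodule.orthogonalProjectionOnto_eq_zero_iff.mpr
              ((Submodule.orthogonal_le (inf_le_left : B ≤ Sᗮ))
                (S.le_orthogonal_orthogonal hg'.1))
          have h3 : Submodule.orthogonalProjectionOnto D g' = 0 :=
            Submodule.orthogonalProjectionOnto_eq_zero_iff.mpr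
              ((Submodule.orthogonal_le (inf_le_left : D ≤ Sᗮ))
                (S.le_orthogonal_orthogonal hg'.1))
          rw [h1, h2, h3]; simp
        · rw [hPhi_apply]
          have h1 : (Submodule.orthogonalProjectionOnto Sᗮ g' : H) = g' :=
            orthogonalProjection_eq_self_iff.mpr hg'.1
          have h2 : Submodule.orthogonalProjectionOnto B g' = 0 :=
            Submodule.orthogonalProjectionOnto_eq_zero_iff.mpr
              ((Submodule.orthogonal_le (inf_le_right : B ≤ T)) hg'.2)
          have h3 : (Submodule.orthogonalProjectionOnto D g' : H) = g' :=
            orthogonalProjection_eq_self_iff.mpr hg'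
          rw [h1, h2, h3]; simp
      -- decompose membership in the triple sup
      rw [hW] at hg
      obtain ⟨u₁, hu₁, z₄, hz₄, rfl⟩ := Submodule.mem_sup.mp hg
      obtain ⟨u₂, hu₂, z₃, hz₃, rfl⟩ := Submodule.mem_sup.mp hu₁
      obtain ⟨z₁, hz₁, z₂, hz₂, rfl⟩ := Submodule.mem_sup.mp hu₂
      have e1 := key z₁ (Or.inl hz₁)
      have e2 := key z₂ (Or.inr (Or.inl hz₂))
      have e3 := key z₃ (Or.inr (Or.inr (Or.inl hz₃)))
      have e4 := key z₄ (Or.inr (Or.inr (Or.inr hz₄)))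
      simp [map_add, e1, e2, e3, e4]
    intro g hg
    exact LinearMap.mem_ker.mpr (hzero g hg)
  have hclker : W.topologicalClosure ≤ LinearMap.ker (Phi : H →ₗ[𝕜] H) :=
    W.topologicalClosure_minimal hker (ContinuousLinearMap.isClosed_ker Phi)
  -- f - p is in the closure of W
  have hfp : f - p ∈ W.topologicalClosure := by
    rw [← Submodule.orthogonal_orthogonal_eq_closure]
    exact sub_orthogonalProjection_mem_orthogonal f
  have hPhifp : Phi (f - p) = 0 := hclker hfp
  rw [hPhi_apply] at hPhifp
  -- projections of p onto B and D vanish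
  have hpB : Submodule.orthogonalProjectionOnto B p = 0 :=
    Submodule.orthogonalProjectionOnto_eq_zero_iff.mpr ((Submodule.orthogonal_le hBW) hpW)
  have hpD : Submodule.orthogonalProjectionOnto D p = 0 :=
    Submodule.orthogonalProjectionOnto_eq_zero_iff.mpr ((Submodule.orthogonal_le hDW) hpW)
  have hdecomp : (Submodule.orthogonalProjectionOnto Sᗮ f : H) = a + b + q := by
    have h1 : (Submodule.orthogonalProjectionOnto Sᗮ (f - p) : H) =
        (Submodule.orthogonalProjectionOnto Sᗮ f : H) - q := by
      rw [map_sub, Submodule.coe_sub, hq]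
    have h2 : (Submodule.orthogonalProjectionOnto B (f - p) : H) = a := by
      rw [map_sub, Submodule.coe_sub, hpB, ha]; simp
    have h3 : (Submodule.orthogonalProjectionOnto D (f - p) : H) = b := by
      rw [map_sub, Submodule.coe_sub, hpD, hb]; simp
    rw [h1, h2, h3, sub_sub, sub_sub, ← add_assoc, sub_eq_zero] at hPhifp
    rw [hPhifp]; abel
  -- rewrite the LHS vector
  have hlhs : (xn + (Submodule.orthogonalProjectionOnto S f : H)) - f = (xn - q) - (a + b) := by
    have h5 : f - (Submodule.orthogonalProjectionOnto S f : H) = a + b + q := by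
      rw [← orthogonalProjection_orthogonal_val]; exact hdecomp
    have h7 : (xn + (Submodule.orthogonalProjectionOnto S f : H)) - f =
        xn - (f - (Submodule.orthogonalProjectionOnto S f : H)) := by abel
    rw [h7, h5]; abel
  -- orthogonality facts for Pythagoras
  have haB : a ∈ B := (Submodule.orthogonalProjectionOnto B f).2
  have hbD : b ∈ D := (Submodule.orthogonalProjectionOnto D f).2
  have hua : (inner 𝕜 (xn - q) a : 𝕜) = 0 := by
    rw [inner_sub_left, hxnB a haB, hqW a (hBW haB) haB.1, sub_zero]
  have hub : (inner 𝕜 (xn - q) b : 𝕜) = 0 := by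
    rw [inner_sub_left, hxnD b hbD, hqW b (hDW hbD) hbD.1, sub_zero]
  have hab : (inner 𝕜 a b : 𝕜) = 0 := (Submodule.mem_orthogonal T b).mp hbD.2 a haB.2
  calc ‖(xn + (Submodule.orthogonalProjectionOnto S f : H)) - f‖ ^ 2
      = ‖(xn - q) - (a + b)‖ ^ 2 := by rw [hlhs]
    _ = ‖a‖ ^ 2 + ‖b‖ ^ 2 + ‖xn - q‖ ^ 2 := aux_pythagoras3 hua hub hab
end

section
/- Let ν := inf{‖P_{T⊥} x‖ / ‖x‖ : x ∈ P_{S⊥}(T⊥), x ≠ 0}, suppose ν > 0, let f ∈ H, let x̂_n be the minimal-norm element of {x ∈ S⊥ : P_{S⊥} P_{T⊥}(x + P_S f) = 0}, let f̂ be any sample consistent reconstruction of f, and let M be the orthogonal projection onto (S⊥ ∩ T)⊥. Then ‖M(f̂ − f)‖² = ‖P_{S⊥∩T⊥} f‖² + ‖x̂_n − P_{S⊥} P₀ f‖², and the following sharp bounds hold: ‖x̂_n − P_{S⊥} P₀ f‖ ≤ ‖P_{S⊥} P_{T⊥} P₀ f‖ / ν² and ‖x̂_n − P_{S⊥} P₀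 f‖ ≤ ‖P_{T⊥} P₀ f‖ / ν. -/
set_option synthInstance.maxHeartbeats 1000000

set_option maxHeartbeats 1000000
set_option linter.unusedSectionVars false

section Stmt15Aux

variable {𝕜 H : Type*} [RCLike 𝕜] [NormedAddCommGroup H] [InnerProductSpace 𝕜 H]
  [CompleteSpace H]

local notation "⟪" x ", " y "⟫" => @inner 𝕜 _ _ x y

lemma stmt15_isClosed (W : Submodule 𝕜 H) [Submodule.HasOrthogonalProjection W] :
    IsClosed (W : Set H) :=
  W.orthogonal_orthogonal ▸ Submodule.isClosed_orthogonal Wᗮ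

lemma stmt15_hop_inf (W₁ W₂ : Submodule 𝕜 H) [Submodule.HasOrthogonalProjection W₁]
    [Submodule.HasOrthogonalProjection W₂] : Submodule.HasOrthogonalProjection (W₁ ⊓ W₂) := by
  haveI : CompleteSpace (W₁ ⊓ W₂ : Submodule 𝕜 H) :=
    (IsClosed.inter (stmt15_isClosed W₁) (stmt15_isClosed W₂)).completeSpace_coe
  infer_instance

lemma stmt15_mem_orth_sup {A B : Submodule 𝕜 H} {w : H} (ha : w ∈ Aᗮ) (hb : w ∈ Bᗮ) :
    w ∈ (A ⊔ B)ᗮ := by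
  rw [Submodule.mem_orthogonal] at *
  intro u hu
  rcases Submodule.mem_sup.mp hu with ⟨x, hx, y, hy, rfl⟩
  rw [inner_add_left, ha x hx, hb y hy, add_zero]

lemma stmt15_proj_comm (W : Submodule 𝕜 H) [Submodule.HasOrthogonalProjection W] (x y : H) :
    ⟪(Submodule.orthogonalProjectionOnto W x : H), y⟫ = ⟪x, (Submodule.orthogonalProjectionOnto W y : H)⟫ :=
  Submodule.inner_starProjection_left_eq_right W x y

lemma stmt15_pr_self {W : Submodule 𝕜 H} [Submodule.HasOrthogonalProjection W] {v : H} (h : v ∈ W) :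
    (Submodule.orthogonalProjectionOnto W v : H) = v :=
  Submodule.starProjection_eq_self_iff.mpr h

lemma stmt15_pr_zero {W : Submodule 𝕜 H} [Submodule.HasOrthogonalProjection W] {v : H} (h : v ∈ Wᗮ) :
    (Submodule.orthogonalProjectionOnto W v : H) = 0 := by
  rw [Submodule.orthogonalProjectionOnto_apply_of_mem_orthogonal h]
  rfl

lemma stmt15_pr_add (W : Submodule 𝕜 H) [Submodule.HasOrthogonalProjection W] (x y : H) :
    (Submodule.orthogonalProjectionOnto W (x + y) : H) =
      (Submodule.orthogonalProjectionOnto W x : H) + (Submodule.orthogonalProjectionOnto W y : H) := by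
  rw [map_add]; rfl

lemma stmt15_pr_sub (W : Submodule 𝕜 H) [Submodule.HasOrthogonalProjection W] (x y : H) :
    (Submodule.orthogonalProjectionOnto W (x - y) : H) =
      (Submodule.orthogonalProjectionOnto W x : H) - (Submodule.orthogonalProjectionOnto W y : H) := by
  rw [map_sub]; rfl

lemma stmt15_pr_neg (W : Submodule 𝕜 H) [Submodule.HasOrthogonalProjection W] (x : H) :
    (Submodule.orthogonalProjectionOnto W (-x) : H) = -(Submodule.orthogonalProjectionOnto W x : H) := by
  rw [map_neg]; rfl

lemma stmt15_eq_zero_of_mem_of_mem_orth {W : Submodule 𝕜 H} {v : H} (h1 : v ∈ W)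
    (h2 : v ∈ Wᗮ) : v = 0 := by
  have := (Submodule.mem_orthogonal W v).mp h2 v h1
  exact inner_self_eq_zero.mp this

lemma stmt15_norm_add_sq {x y : H} (h : ⟪x, y⟫ = 0) : ‖x + y‖ ^ 2 = ‖x‖ ^ 2 + ‖y‖ ^ 2 := by
  have := norm_add_sq_eq_norm_sq_add_norm_sq_of_inner_eq_zero x y h
  simpa [pow_two] using this

lemma stmt15_orth_pair {W U V : Submodule 𝕜 H} (h1 : U ≤ W) (h2 : V ≤ Wᗮ) : U ≤ Vᗮ := by
  intro v hv
  rw [Submodule.mem_orthogonal]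
  intro w hw
  exact Submodule.inner_left_of_mem_orthogonal (h1 hv) (h2 hw)

/-- projection invariance of an orthogonal complement -/
lemma stmt15_inv {W V : Submodule 𝕜 H} [Submodule.HasOrthogonalProjection W]
    (h : ∀ v ∈ V, (Submodule.orthogonalProjectionOnto W v : H) ∈ V) :
    ∀ z ∈ Vᗮ, (Submodule.orthogonalProjectionOnto W z : H) ∈ Vᗮ := by
  intro z hz
  rw [Submodule.mem_orthogonal] at hz ⊢
  intro u hu
  rw [← stmt15_proj_comm]
  exact hz _ (h u hu)

/-- projections map the sup of four subspaces into itself, provided each is contained in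
`W` or `Wᗮ`. -/
lemma stmt15_projW_sup4 {W A B C D : Submodule 𝕜 H} [Submodule.HasOrthogonalProjection W]
    (hA : A ≤ W ∨ A ≤ Wᗮ) (hB : B ≤ W ∨ B ≤ Wᗮ) (hC : C ≤ W ∨ C ≤ Wᗮ)
    (hD : D ≤ W ∨ D ≤ Wᗮ) :
    ∀ v ∈ A ⊔ B ⊔ C ⊔ D, (Submodule.orthogonalProjectionOnto W v : H) ∈ A ⊔ B ⊔ C ⊔ D := by
  have key : ∀ (U : Submodule 𝕜 H), U ≤ W ∨ U ≤ Wᗮ → U ≤ A ⊔ B ⊔ C ⊔ D →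
      ∀ v ∈ U, (Submodule.orthogonalProjectionOnto W v : H) ∈ A ⊔ B ⊔ C ⊔ D := by
    intro U hU hle v hv
    rcases hU with h | h
    · rw [stmt15_pr_self (h hv)]; exact hle hv
    · rw [stmt15_pr_zero (h hv)]; exact zero_mem _
  intro v hv
  rcases Submodule.mem_sup.mp hv with ⟨w, hw, dd, hdd, rfl⟩
  rcases Submodule.mem_sup.mp hw with ⟨w2, hw2, cc, hcc, rfl⟩
  rcases Submodule.mem_sup.mp hw2 with ⟨aa, haa, bb, hbb, rfl⟩
  rw [stmt15_pr_add, stmt15_pr_add, stmt15_pr_add]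
  have leA : A ≤ A ⊔ B ⊔ C ⊔ D := le_sup_of_le_left (le_sup_of_le_left le_sup_left)
  have leB : B ≤ A ⊔ B ⊔ C ⊔ D := le_sup_of_le_left (le_sup_of_le_left le_sup_right)
  have leC : C ≤ A ⊔ B ⊔ C ⊔ D := le_sup_of_le_left le_sup_right
  have leD : D ≤ A ⊔ B ⊔ C ⊔ D := le_sup_right
  exact add_mem (add_mem (add_mem (key A hA leA aa haa) (key B hB leB bb hbb))
    (key C hC leC cc hcc)) (key D hD leD dd hdd)

/-- decomposition: projection onto the complement of an orthogonal 4-sup. -/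
lemma stmt15_proj_orth_sup4 {A B C D : Submodule 𝕜 H} [Submodule.HasOrthogonalProjection A]
    [Submodule.HasOrthogonalProjection B] [Submodule.HasOrthogonalProjection C] [Submodule.HasOrthogonalProjection D]
    (hAB : A ≤ Bᗮ) (hAC : A ≤ Cᗮ) (hAD : A ≤ Dᗮ) (hBC : B ≤ Cᗮ) (hBD : B ≤ Dᗮ)
    (hCD : C ≤ Dᗮ) (v : H) :
    (Submodule.orthogonalProjectionOnto (A ⊔ B ⊔ C ⊔ D)ᗮ v : H) =
      v - (Submodule.orthogonalProjectionOnto A v : H) - (Submodule.orthogonalProjectionOnto B v : H)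
        - (Submodule.orthogonalProjectionOnto C v : H) - (Submodule.orthogonalProjectionOnto D v : H) := by
  have symm : ∀ {U V : Submodule 𝕜 H}, U ≤ Vᗮ → V ≤ Uᗮ := by
    intro U V h u hu
    rw [Submodule.mem_orthogonal]
    intro w hw
    exact (Submodule.mem_orthogonal' V w).mp (h hw) u hu
  have h_eq : ∀ (U : Submodule 𝕜 H) (_ : Submodule.HasOrthogonalProjection U), ∀ u ∈ U,
      ⟪u, (Submodule.orthogonalProjectionOnto U v : H)⟫ = ⟪u, v⟫ := by
    intro U _ u hu
    rw [← stmt15_proj_comm, stmt15_pr_self hu]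
  have h_zero : ∀ (U V : Submodule 𝕜 H) (_ : Submodule.HasOrthogonalProjection V), U ≤ Vᗮ → ∀ u ∈ U,
      ⟪u, (Submodule.orthogonalProjectionOnto V v : H)⟫ = 0 := by
    intro U V _ hUV u hu
    exact Submodule.inner_left_of_mem_orthogonal (Submodule.coe_mem _) (hUV hu)
  set a := (Submodule.orthogonalProjectionOnto A v : H)
  set b := (Submodule.orthogonalProjectionOnto B v : H)
  set c := (Submodule.orthogonalProjectionOnto C v : H)
  set d := (Submodule.orthogonalProjectionOnto D v : H)
  have habcd : a + b + c + d ∈ ((A ⊔ B ⊔ C ⊔ D)ᗮ)ᗮ := by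
    apply Submodule.le_orthogonal_orthogonal _
    have leA : A ≤ A ⊔ B ⊔ C ⊔ D := le_sup_of_le_left (le_sup_of_le_left le_sup_left)
    have leB : B ≤ A ⊔ B ⊔ C ⊔ D := le_sup_of_le_left (le_sup_of_le_left le_sup_right)
    have leC : C ≤ A ⊔ B ⊔ C ⊔ D := le_sup_of_le_left le_sup_right
    have leD : D ≤ A ⊔ B ⊔ C ⊔ D := le_sup_right
    exact add_mem (add_mem (add_mem (leA (Submodule.coe_mem _)) (leB (Submodule.coe_mem _)))
      (leC (Submodule.coe_mem _))) (leD (Submodule.coe_mem _))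
  have hw : v - a - b - c - d ∈ (A ⊔ B ⊔ C ⊔ D)ᗮ := by
    apply stmt15_mem_orth_sup (stmt15_mem_orth_sup (stmt15_mem_orth_sup ?_ ?_) ?_) ?_
    · rw [Submodule.mem_orthogonal]
      intro u hu
      rw [inner_sub_right, inner_sub_right, inner_sub_right, inner_sub_right,
        h_eq A ‹_› u hu, h_zero A B ‹_› hAB u hu, h_zero A C ‹_› hAC u hu,
        h_zero A D ‹_› hAD u hu]
      ring
    · rw [Submodule.mem_orthogonal]
      intro u hu
      rw [inner_sub_right, inner_sub_right, inner_sub_right, inner_sub_right,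
        h_eq B ‹_› u hu, h_zero B A ‹_› (symm hAB) u hu, h_zero B C ‹_› hBC u hu,
        h_zero B D ‹_› hBD u hu]
      ring
    · rw [Submodule.mem_orthogonal]
      intro u hu
      rw [inner_sub_right, inner_sub_right, inner_sub_right, inner_sub_right,
        h_eq C ‹_› u hu, h_zero C A ‹_› (symm hAC) u hu, h_zero C B ‹_› (symm hBC) u hu,
        h_zero C D ‹_› hCD u hu]
      ring
    · rw [Submodule.mem_orthogonal]
      intro u hu
      rw [inner_sub_right, inner_sub_right, inner_sub_right, inner_sub_right,
        h_eq D ‹_› u hu, h_zero D A ‹_› (symm hAD) u hu, h_zero D B ‹_› (symm hBD) u hu,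
        h_zero D C ‹_› (symm hCD) u hu]
      ring
  refine Submodule.eq_starProjection_of_mem_orthogonal hw ?_
  have : v - (v - a - b - c - d) = a + b + c + d := by abel
  rw [this]
  exact habcd


open Filter Topology in
/-- the ν-inequality extended to the closure of `P_{S⊥}(T⊥)` -/
lemma stmt15_nu_bound (S T : Submodule 𝕜 H) [Submodule.HasOrthogonalProjection S]
    [Submodule.HasOrthogonalProjection T] {ν : ℝ}
    (hν : ν = sInf {r : ℝ | ∃ y ∈ Tᗮ, (Submodule.orthogonalProjectionOnto Sᗮ y : H) ≠ 0 ∧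
      r = ‖(Submodule.orthogonalProjectionOnto Tᗮ ((Submodule.orthogonalProjectionOnto Sᗮ y : H)) : H)‖ /
        ‖(Submodule.orthogonalProjectionOnto Sᗮ y : H)‖})
    {u : H} (huS : u ∈ Sᗮ) (huB : u ∈ (Sᗮ ⊓ T)ᗮ) :
    ν * ‖u‖ ≤ ‖(Submodule.orthogonalProjectionOnto Tᗮ u : H)‖ := by
  set P : H →L[𝕜] H := Sᗮ.subtypeL.comp (Submodule.orthogonalProjectionOnto Sᗮ) with hP
  have hPapp : ∀ y : H, P y = (Submodule.orthogonalProjectionOnto Sᗮ y : H) := fun _ => rfl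
  set V : Submodule 𝕜 H := Tᗮ.map (P : H →ₗ[𝕜] H) with hV
  have hbdd : BddBelow {r : ℝ | ∃ y ∈ Tᗮ, (Submodule.orthogonalProjectionOnto Sᗮ y : H) ≠ 0 ∧
      r = ‖(Submodule.orthogonalProjectionOnto Tᗮ ((Submodule.orthogonalProjectionOnto Sᗮ y : H)) : H)‖ /
        ‖(Submodule.orthogonalProjectionOnto Sᗮ y : H)‖} := by
    refine ⟨0, ?_⟩
    rintro r ⟨y, hy, hne, rfl⟩
    positivity
  have hpt : ∀ w ∈ V, ν * ‖w‖ ≤ ‖(Submodule.orthogonalProjectionOnto Tᗮ w : H)‖ := by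
    rintro w ⟨y, hy, rfl⟩
    show ν * ‖P y‖ ≤ _
    rw [hPapp]
    by_cases h0 : (Submodule.orthogonalProjectionOnto Sᗮ y : H) = 0
    · rw [h0]
      simp
    · have hmem : ‖(Submodule.orthogonalProjectionOnto Tᗮ ((Submodule.orthogonalProjectionOnto Sᗮ y : H)) : H)‖ /
          ‖(Submodule.orthogonalProjectionOnto Sᗮ y : H)‖ ∈ {r : ℝ | ∃ y ∈ Tᗮ,
          (Submodule.orthogonalProjectionOnto Sᗮ y : H) ≠ 0 ∧
          r = ‖(Submodule.orthogonalProjectionOnto Tᗮ ((Submodule.orthogonalProjectionOnto Sᗮ y : H)) : H)‖ /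
            ‖(Submodule.orthogonalProjectionOnto Sᗮ y : H)‖} := ⟨y, hy, h0, rfl⟩
      have hle := csInf_le hbdd hmem
      rw [← hν] at hle
      have hpos : (0:ℝ) < ‖(Submodule.orthogonalProjectionOnto Sᗮ y : H)‖ := by
        simpa [norm_pos_iff] using h0
      calc ν * ‖(Submodule.orthogonalProjectionOnto Sᗮ y : H)‖
          ≤ (‖(Submodule.orthogonalProjectionOnto Tᗮ ((Submodule.orthogonalProjectionOnto Sᗮ y : H)) : H)‖ /
            ‖(Submodule.orthogonalProjectionOnto Sᗮ y : H)‖) * ‖(Submodule.orthogonalProjectionOnto Sᗮ y : H)‖ := by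
            exact mul_le_mul_of_nonneg_right hle hpos.le
        _ = ‖(Submodule.orthogonalProjectionOnto Tᗮ ((Submodule.orthogonalProjectionOnto Sᗮ y : H)) : H)‖ :=
            div_mul_cancel₀ _ hpos.ne'
  have hcl : u ∈ closure (V : Set H) := by
    rw [← Submodule.topologicalClosure_coe, ← Submodule.orthogonal_orthogonal_eq_closure]
    show u ∈ Vᗮᗮ
    rw [Submodule.mem_orthogonal]
    intro z hz
    have hPzT : P z ∈ T := by
      rw [← T.orthogonal_orthogonal, Submodule.mem_orthogonal]
      intro y hy
      calc ⟪y, P z⟫ = ⟪(Submodule.orthogonalProjectionOnto Sᗮ y : H), z⟫ := by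
            rw [hPapp]; exact (stmt15_proj_comm Sᗮ y z).symm
        _ = 0 := (Submodule.mem_orthogonal V z).mp hz _ ⟨y, hy, rfl⟩
    have hPzB : P z ∈ Sᗮ ⊓ T := Submodule.mem_inf.mpr ⟨Submodule.coe_mem _, hPzT⟩
    calc ⟪z, u⟫ = ⟪z, (Submodule.orthogonalProjectionOnto Sᗮ u : H)⟫ := by rw [stmt15_pr_self huS]
      _ = ⟪(Submodule.orthogonalProjectionOnto Sᗮ z : H), u⟫ := (stmt15_proj_comm Sᗮ z u).symm
      _ = 0 := Submodule.inner_right_of_mem_orthogonal hPzB huB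
  rcases mem_closure_iff_seq_limit.mp hcl with ⟨seq, hseq, hlim⟩
  set Q : H →L[𝕜] H := Tᗮ.subtypeL.comp (Submodule.orthogonalProjectionOnto Tᗮ) with hQ
  have h1 : Tendsto (fun n => ν * ‖seq n‖) atTop (𝓝 (ν * ‖u‖)) :=
    (((continuous_norm).tendsto u).comp hlim).const_mul ν
  have h2 : Tendsto (fun n => ‖(Submodule.orthogonalProjectionOnto Tᗮ (seq n) : H)‖) atTop
      (𝓝 ‖(Submodule.orthogonalProjectionOnto Tᗮ u : H)‖) := by
    have : Continuous fun x : H => ‖Q x‖ := continuous_norm.comp Q.continuous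
    exact (this.tendsto u).comp hlim
  exact le_of_tendsto_of_tendsto' h1 h2 fun n => hpt _ (hseq n)

/-- the two inner-product estimates -/
lemma stmt15_key_inner (S T : Submodule 𝕜 H) [Submodule.HasOrthogonalProjection S]
    [Submodule.HasOrthogonalProjection T] {u g : H} (huS : u ∈ Sᗮ)
    (hPQu : (Submodule.orthogonalProjectionOnto Sᗮ ((Submodule.orthogonalProjectionOnto Tᗮ u : H)) : H)
        = -(Submodule.orthogonalProjectionOnto Sᗮ ((Submodule.orthogonalProjectionOnto Tᗮ g : H)) : H)) :
    ‖(Submodule.orthogonalProjectionOnto Tᗮ u : H)‖ ^ 2 ≤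
      ‖(Submodule.orthogonalProjectionOnto Sᗮ ((Submodule.orthogonalProjectionOnto Tᗮ g : H)) : H)‖ * ‖u‖ ∧
    ‖(Submodule.orthogonalProjectionOnto Tᗮ u : H)‖ ≤ ‖(Submodule.orthogonalProjectionOnto Tᗮ g : H)‖ := by
  set Qu := (Submodule.orthogonalProjectionOnto Tᗮ u : H) with hQu
  set Qg := (Submodule.orthogonalProjectionOnto Tᗮ g : H) with hQg
  set PQg := (Submodule.orthogonalProjectionOnto Sᗮ Qg : H) with hPQg
  have h1 : ‖Qu‖ ^ 2 = RCLike.re ⟪u, Qu⟫ := by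
    have e : ⟪Qu, Qu⟫ = ⟪u, Qu⟫ := by
      conv_lhs => rw [hQu, stmt15_proj_comm Tᗮ u Qu, stmt15_pr_self (Submodule.coe_mem _)]
    rw [← e, inner_self_eq_norm_sq]
  have h2 : ⟪u, Qu⟫ = -⟪u, PQg⟫ := by
    calc ⟪u, Qu⟫ = ⟪(Submodule.orthogonalProjectionOnto Sᗮ u : H), Qu⟫ := by rw [stmt15_pr_self huS]
      _ = ⟪u, (Submodule.orthogonalProjectionOnto Sᗮ Qu : H)⟫ := stmt15_proj_comm Sᗮ u Qu
      _ = ⟪u, -PQg⟫ := by rw [hPQu]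
      _ = -⟪u, PQg⟫ := by rw [inner_neg_right]
  have h3 : ⟪u, PQg⟫ = ⟪Qu, Qg⟫ := by
    calc ⟪u, PQg⟫ = ⟪(Submodule.orthogonalProjectionOnto Sᗮ u : H), Qg⟫ :=
          (stmt15_proj_comm Sᗮ u Qg).symm
      _ = ⟪u, Qg⟫ := by rw [stmt15_pr_self huS]
      _ = ⟪u, (Submodule.orthogonalProjectionOnto Tᗮ Qg : H)⟫ := by
          rw [stmt15_pr_self (Submodule.coe_mem _)]
      _ = ⟪Qu, Qg⟫ := (stmt15_proj_comm Tᗮ u Qg).symm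
  constructor
  · rw [h1, h2]
    calc RCLike.re (-⟪u, PQg⟫) ≤ ‖-⟪u, PQg⟫‖ := RCLike.re_le_norm _
      _ = ‖⟪u, PQg⟫‖ := norm_neg _
      _ ≤ ‖u‖ * ‖PQg‖ := norm_inner_le_norm _ _
      _ = ‖PQg‖ * ‖u‖ := mul_comm _ _
  · have hsq : ‖Qu‖ ^ 2 ≤ ‖Qu‖ * ‖Qg‖ := by
      rw [h1, h2, h3]
      calc RCLike.re (-⟪Qu, Qg⟫) ≤ ‖-⟪Qu, Qg⟫‖ := RCLike.re_le_norm _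
        _ = ‖⟪Qu, Qg⟫‖ := norm_neg _
        _ ≤ ‖Qu‖ * ‖Qg‖ := norm_inner_le_norm _ _
    nlinarith [norm_nonneg Qu, norm_nonneg Qg]

end Stmt15Aux

/-- with `ν := inf {‖P_{T⊥} x‖/‖x‖ : x ∈ P_{S⊥}(T⊥), x ≠ 0} > 0`, `xn` the
minimal-norm element of `{x ∈ S⊥ : P_{S⊥} P_{T⊥}(x + P_S f) = 0}`, `fhat` any sample consistent
reconstruction of `f`, and `M` the orthogonal projection onto `(S⊥ ∩ T)⊥`, one has
`‖M(fhat − f)‖² = ‖P_{S⊥∩T⊥} f‖² + ‖xn − P_{S⊥} P₀ f‖²`, together with the sharp bounds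
`‖xn − P_{S⊥} P₀ f‖ ≤ ‖P_{S⊥} P_{T⊥} P₀ f‖/ν²` and `‖xn − P_{S⊥} P₀ f‖ ≤ ‖P_{T⊥} P₀ f‖/ν`. -/
theorem stmt_15 {𝕜 H : Type*} [RCLike 𝕜] [NormedAddCommGroup H] [InnerProductSpace 𝕜 H]
    [CompleteSpace H] (S T : Submodule 𝕜 H)
    [Submodule.HasOrthogonalProjection S] [Submodule.HasOrthogonalProjection T]
    [Submodule.HasOrthogonalProjection (Sᗮ ⊓ Tᗮ)]
    (ν : ℝ)
    (hν : ν = sInf {r : ℝ | ∃ y ∈ Tᗮ, (Submodule.orthogonalProjectionOnto Sᗮ y : H) ≠ 0 ∧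
      r = ‖(Submodule.orthogonalProjectionOnto Tᗮ ((Submodule.orthogonalProjectionOnto Sᗮ y : H)) : H)‖ /
        ‖(Submodule.orthogonalProjectionOnto Sᗮ y : H)‖})
    (hνpos : 0 < ν) (f : H) (xn : H)
    (hxn : xn ∈ Sᗮ ∧
      (Submodule.orthogonalProjectionOnto Sᗮ ((xn + (Submodule.orthogonalProjectionOnto S f : H)) -
        (Submodule.orthogonalProjectionOnto T (xn + (Submodule.orthogonalProjectionOnto S f : H)) : H)) : H) = 0 ∧
      ∀ x : H, x ∈ Sᗮ →
        (Submodule.orthogonalProjectionOnto Sᗮ ((x + (Submodule.orthogonalProjectionOnto S f : H)) -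
          (Submodule.orthogonalProjectionOnto T (x + (Submodule.orthogonalProjectionOnto S f : H)) : H)) : H) = 0 →
        ‖xn‖ ≤ ‖x‖)
    (fhat : H)
    (hconsist : (Submodule.orthogonalProjectionOnto S fhat : H) = (Submodule.orthogonalProjectionOnto S f : H))
    (hmin : (Submodule.orthogonalProjectionOnto Sᗮ (fhat - (Submodule.orthogonalProjectionOnto T fhat : H)) : H) = 0) :
    ‖(Submodule.orthogonalProjectionOnto (Sᗮ ⊓ T)ᗮ (fhat - f) : H)‖ ^ 2 =
      ‖(Submodule.orthogonalProjectionOnto (Sᗮ ⊓ Tᗮ) f : H)‖ ^ 2 +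
      ‖xn - (Submodule.orthogonalProjectionOnto Sᗮ
        ((Submodule.orthogonalProjectionOnto ((S ⊓ T) ⊔ (Sᗮ ⊓ T) ⊔ (S ⊓ Tᗮ) ⊔ (Sᗮ ⊓ Tᗮ))ᗮ f : H)) : H)‖ ^ 2 ∧
    ‖xn - (Submodule.orthogonalProjectionOnto Sᗮ
        ((Submodule.orthogonalProjectionOnto ((S ⊓ T) ⊔ (Sᗮ ⊓ T) ⊔ (S ⊓ Tᗮ) ⊔ (Sᗮ ⊓ Tᗮ))ᗮ f : H)) : H)‖ ≤
      ‖(Submodule.orthogonalProjectionOnto Sᗮ ((Submodule.orthogonalProjectionOnto Tᗮ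
        ((Submodule.orthogonalProjectionOnto ((S ⊓ T) ⊔ (Sᗮ ⊓ T) ⊔ (S ⊓ Tᗮ) ⊔ (Sᗮ ⊓ Tᗮ))ᗮ f : H)) : H)) : H)‖ /
        ν ^ 2 ∧
    ‖xn - (Submodule.orthogonalProjectionOnto Sᗮ
        ((Submodule.orthogonalProjectionOnto ((S ⊓ T) ⊔ (Sᗮ ⊓ T) ⊔ (S ⊓ Tᗮ) ⊔ (Sᗮ ⊓ Tᗮ))ᗮ f : H)) : H)‖ ≤
      ‖(Submodule.orthogonalProjectionOnto Tᗮ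
        ((Submodule.orthogonalProjectionOnto ((S ⊓ T) ⊔ (Sᗮ ⊓ T) ⊔ (S ⊓ Tᗮ) ⊔ (Sᗮ ⊓ Tᗮ))ᗮ f : H)) : H)‖ / ν := by
  
  obtain ⟨hxnS, hxnC, hxnMin⟩ := hxn
  haveI : Submodule.HasOrthogonalProjection (S ⊓ T) := stmt15_hop_inf S T
  haveI : Submodule.HasOrthogonalProjection (Sᗮ ⊓ T) := stmt15_hop_inf Sᗮ T
  haveI : Submodule.HasOrthogonalProjection (S ⊓ Tᗮ) := stmt15_hop_inf S Tᗮ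
  set A := S ⊓ T with hA
  set B := Sᗮ ⊓ T with hB
  set C := S ⊓ Tᗮ with hC
  set D := Sᗮ ⊓ Tᗮ with hD
  set K := A ⊔ B ⊔ C ⊔ D with hK
  -- basic inclusions
  have hAS : A ≤ S := inf_le_left
  have hAT : A ≤ T := inf_le_right
  have hBS : B ≤ Sᗮ := inf_le_left
  have hBT : B ≤ T := inf_le_right
  have hCS : C ≤ S := inf_le_left
  have hCT : C ≤ Tᗮ := inf_le_right
  have hDS : D ≤ Sᗮ := inf_le_left
  have hDT : D ≤ Tᗮ := inf_le_right
  have hAB : A ≤ Bᗮ := stmt15_orth_pair hAS hBS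
  have hAC : A ≤ Cᗮ := stmt15_orth_pair hAT hCT
  have hAD : A ≤ Dᗮ := stmt15_orth_pair hAS hDS
  have hBC : B ≤ Cᗮ := stmt15_orth_pair hBT hCT
  have hBD : B ≤ Dᗮ := stmt15_orth_pair hBT hDT
  have hCD : C ≤ Dᗮ := stmt15_orth_pair hCS hDS
  have hDB : D ≤ Bᗮ := stmt15_orth_pair hDT (hBT.trans (Submodule.le_orthogonal_orthogonal T))
  have leA : A ≤ K := le_sup_of_le_left (le_sup_of_le_left le_sup_left)
  have leB : B ≤ K := le_sup_of_le_left (le_sup_of_le_left le_sup_right)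
  have leC : C ≤ K := le_sup_of_le_left le_sup_right
  have leD : D ≤ K := le_sup_right
  have hSS' : S ≤ Sᗮᗮ := Submodule.le_orthogonal_orthogonal S
  have hTT' : T ≤ Tᗮᗮ := Submodule.le_orthogonal_orthogonal T
  -- decomposition of projections onto Kᗮ
  have hdec : ∀ v : H, (Submodule.orthogonalProjectionOnto Kᗮ v : H) =
      v - (Submodule.orthogonalProjectionOnto A v : H) - (Submodule.orthogonalProjectionOnto B v : H)
        - (Submodule.orthogonalProjectionOnto C v : H) - (Submodule.orthogonalProjectionOnto D v : H) :=
    stmt15_proj_orth_sup4 hAB hAC hAD hBC hBD hCD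
  -- invariance of Kᗮ under the four projections
  have hinvS : ∀ z ∈ Kᗮ, (Submodule.orthogonalProjectionOnto S z : H) ∈ Kᗮ :=
    stmt15_inv (stmt15_projW_sup4 (Or.inl hAS) (Or.inr hBS) (Or.inl hCS) (Or.inr hDS))
  have hinvT : ∀ z ∈ Kᗮ, (Submodule.orthogonalProjectionOnto T z : H) ∈ Kᗮ :=
    stmt15_inv (stmt15_projW_sup4 (Or.inl hAT) (Or.inl hBT) (Or.inr hCT) (Or.inr hDT))
  have hinvS' : ∀ z ∈ Kᗮ, (Submodule.orthogonalProjectionOnto Sᗮ z : H) ∈ Kᗮ :=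
    stmt15_inv (stmt15_projW_sup4 (Or.inr (hAS.trans hSS')) (Or.inl hBS)
      (Or.inr (hCS.trans hSS')) (Or.inl hDS))
  have hinvT' : ∀ z ∈ Kᗮ, (Submodule.orthogonalProjectionOnto Tᗮ z : H) ∈ Kᗮ :=
    stmt15_inv (stmt15_projW_sup4 (Or.inr (hAT.trans hTT')) (Or.inr (hBT.trans hTT'))
      (Or.inl hCT) (Or.inl hDT))
  -- names for the pieces of f
  set PSf := (Submodule.orthogonalProjectionOnto S f : H) with hPSfdef
  set f₀ := (Submodule.orthogonalProjectionOnto Kᗮ f : H) with hf₀def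
  set a := (Submodule.orthogonalProjectionOnto A f : H) with hadef
  set b := (Submodule.orthogonalProjectionOnto B f : H) with hbdef
  set c := (Submodule.orthogonalProjectionOnto C f : H) with hcdef
  set d := (Submodule.orthogonalProjectionOnto D f : H) with hddef
  have haA : a ∈ A := by rw [hadef]; exact Submodule.coe_mem _
  have hbB : b ∈ B := by rw [hbdef]; exact Submodule.coe_mem _
  have hcC : c ∈ C := by rw [hcdef]; exact Submodule.coe_mem _
  have hdD : d ∈ D := by rw [hddef]; exact Submodule.coe_mem _
  have hf₀K : f₀ ∈ Kᗮ := by rw [hf₀def]; exact Submodule.coe_mem _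
  have hf : f = a + b + c + d + f₀ := by
    rw [hf₀def, hdec f, ← hadef, ← hbdef, ← hcdef, ← hddef]; abel
  -- the double projection
  set PQ : H → H :=
    fun z => (Submodule.orthogonalProjectionOnto Sᗮ ((Submodule.orthogonalProjectionOnto Tᗮ z : H)) : H) with hPQdef
  have hPQapp : ∀ z : H, PQ z =
      (Submodule.orthogonalProjectionOnto Sᗮ ((Submodule.orthogonalProjectionOnto Tᗮ z : H)) : H) := fun _ => rfl
  have hPQadd : ∀ x y : H, PQ (x + y) = PQ x + PQ y := by
    intro x y; rw [hPQapp, hPQapp, hPQapp, stmt15_pr_add, stmt15_pr_add]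
  have hPQsub : ∀ x y : H, PQ (x - y) = PQ x - PQ y := by
    intro x y; rw [hPQapp, hPQapp, hPQapp, stmt15_pr_sub, stmt15_pr_sub]
  have hPQB : ∀ z ∈ B, PQ z = 0 := by
    intro z hz
    rw [hPQapp, stmt15_pr_zero (hTT' (hBT hz))]
    simp
  have hPQD : ∀ z ∈ D, PQ z = z := by
    intro z hz
    rw [hPQapp, stmt15_pr_self (hDT hz), stmt15_pr_self (hDS hz)]
  have hPQK : ∀ z ∈ Kᗮ, PQ z ∈ Kᗮ := by
    intro z hz
    rw [hPQapp]
    exact hinvS' _ (hinvT' _ hz)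
  -- projection of f onto S
  have hPSf : PSf = a + c + (Submodule.orthogonalProjectionOnto S f₀ : H) := by
    rw [hPSfdef]
    conv_lhs => rw [hf]
    rw [stmt15_pr_add, stmt15_pr_add, stmt15_pr_add, stmt15_pr_add,
      stmt15_pr_self (hAS haA), stmt15_pr_zero (hBS hbB), stmt15_pr_self (hCS hcC),
      stmt15_pr_zero (hDS hdD)]
    abel
  have hPQPSf : PQ PSf = PQ (Submodule.orthogonalProjectionOnto S f₀ : H) := by
    rw [hPSf, hPQadd, hPQadd]
    have h1 : PQ a = 0 := by
      rw [hPQapp, stmt15_pr_zero (hTT' (hAT haA))]; simp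
    have h2 : PQ c = 0 := by
      rw [hPQapp, stmt15_pr_self (hCT hcC), stmt15_pr_zero (hSS' (hCS hcC))]
    rw [h1, h2]
    abel
  -- key analysis of solutions of the consistency equation
  have hsol : ∀ z : H, z ∈ Sᗮ → PQ (z + PSf) = 0 →
      ((Submodule.orthogonalProjectionOnto D z : H) = 0 ∧
       z - (Submodule.orthogonalProjectionOnto B z : H) ∈ Kᗮ ∧
       z - (Submodule.orthogonalProjectionOnto B z : H) ∈ Sᗮ ∧
       PQ (z - (Submodule.orthogonalProjectionOnto B z : H)) = -PQ (Submodule.orthogonalProjectionOnto S f₀ : H)) := by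
    intro z hzS hz
    have hzA : (Submodule.orthogonalProjectionOnto A z : H) = 0 :=
      stmt15_pr_zero ((Submodule.orthogonal_le hAS) hzS)
    have hzC : (Submodule.orthogonalProjectionOnto C z : H) = 0 :=
      stmt15_pr_zero ((Submodule.orthogonal_le hCS) hzS)
    set bz := (Submodule.orthogonalProjectionOnto B z : H) with hbzdef
    set dz := (Submodule.orthogonalProjectionOnto D z : H) with hdzdef
    have hbzB : bz ∈ B := by rw [hbzdef]; exact Submodule.coe_mem _
    have hdzD : dz ∈ D := by rw [hdzdef]; exact Submodule.coe_mem _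
    set z₀ := (Submodule.orthogonalProjectionOnto Kᗮ z : H) with hz₀def
    have hz₀K : z₀ ∈ Kᗮ := by rw [hz₀def]; exact Submodule.coe_mem _
    have hzdecomp : z₀ = z - bz - dz := by rw [hz₀def, hdec z, hzA, hzC]; abel
    have hzsum : z = bz + dz + z₀ := by rw [hzdecomp]; abel
    have hPQz : PQ z = dz + PQ z₀ := by
      conv_lhs => rw [hzsum]
      rw [hPQadd, hPQadd, hPQB bz hbzB, hPQD dz hdzD]
      abel
    have h0 : dz + (PQ z₀ + PQ (Submodule.orthogonalProjectionOnto S f₀ : H)) = 0 := by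
      rw [hPQadd, hPQz, hPQPSf] at hz
      rw [← hz]; abel
    have hmem : PQ z₀ + PQ (Submodule.orthogonalProjectionOnto S f₀ : H) ∈ Kᗮ :=
      add_mem (hPQK _ hz₀K) (hPQK _ (hinvS _ hf₀K))
    have hdz0 : dz = 0 := by
      have h1 : dz = -(PQ z₀ + PQ (Submodule.orthogonalProjectionOnto S f₀ : H)) :=
        eq_neg_of_add_eq_zero_left h0
      have h2 : dz ∈ Kᗮ := h1 ▸ neg_mem hmem
      exact stmt15_eq_zero_of_mem_of_mem_orth hdzD ((Submodule.orthogonal_le leD) h2)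
    have hPQz₀ : PQ z₀ = -PQ (Submodule.orthogonalProjectionOnto S f₀ : H) := by
      rw [hdz0, zero_add] at h0
      exact eq_neg_of_add_eq_zero_left h0
    have hzbz : z - bz = z₀ := by rw [hzdecomp, hdz0]; abel
    exact ⟨hdz0, hzbz ▸ hz₀K, sub_mem hzS (hBS hbzB), by rw [hzbz]; exact hPQz₀⟩
  have hPQ' : ∀ y : H, PQ y =
      (Submodule.orthogonalProjectionOnto Sᗮ (y - (Submodule.orthogonalProjectionOnto T y : H)) : H) := by
    intro y
    rw [hPQapp]
    exact congrArg (fun w => (Submodule.orthogonalProjectionOnto Sᗮ w : H))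
      (Submodule.starProjection_orthogonal_val (K := T) y)
  -- the constraint satisfied by xn
  have hxnC' : PQ (xn + PSf) = 0 := by
    rw [hPQ']
    exact hxnC
  obtain ⟨hdxn, hxn₀K, hxn₀S, hPQxn₀⟩ := hsol xn hxnS hxnC'
  set bxn := (Submodule.orthogonalProjectionOnto B xn : H) with hbxndef
  have hbxnB : bxn ∈ B := by rw [hbxndef]; exact Submodule.coe_mem _
  -- minimality forces bxn = 0
  have hbxn0 : bxn = 0 := by
    have hxn₀sol : (Submodule.orthogonalProjectionOnto Sᗮ (((xn - bxn) + PSf) -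
        (Submodule.orthogonalProjectionOnto T ((xn - bxn) + PSf) : H)) : H) = 0 := by
      have : PQ ((xn - bxn) + PSf) = 0 := by
        rw [hPQadd, hPQxn₀, hPQPSf]; abel
      rw [hPQ'] at this
      exact this
    have hle := hxnMin (xn - bxn) hxn₀S hxn₀sol
    have hinner : (inner 𝕜 bxn (xn - bxn) : 𝕜) = 0 :=
      Submodule.inner_right_of_mem_orthogonal (leB hbxnB) hxn₀K
    have hsq : ‖xn‖ ^ 2 = ‖bxn‖ ^ 2 + ‖xn - bxn‖ ^ 2 := by
      have : xn = bxn + (xn - bxn) := by abel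
      conv_lhs => rw [this]
      exact stmt15_norm_add_sq hinner
    have h1 : ‖bxn‖ ^ 2 ≤ 0 := by nlinarith [norm_nonneg xn, norm_nonneg (xn - bxn)]
    have h2 : ‖bxn‖ = 0 := by nlinarith [norm_nonneg bxn, sq_nonneg ‖bxn‖]
    exact norm_eq_zero.mp h2
  have hxnK : xn ∈ Kᗮ := by
    have := hxn₀K; rw [hbxn0, sub_zero] at this; exact this
  have hPQxn : PQ xn = -PQ (Submodule.orthogonalProjectionOnto S f₀ : H) := by
    have := hPQxn₀; rw [hbxn0, sub_zero] at this; exact this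
  -- the vector u
  set u := xn - (Submodule.orthogonalProjectionOnto Sᗮ f₀ : H) with hudef
  have hPf₀K : (Submodule.orthogonalProjectionOnto Sᗮ f₀ : H) ∈ Kᗮ := hinvS' _ hf₀K
  have huS : u ∈ Sᗮ := sub_mem hxnS (Submodule.coe_mem _)
  have huK : u ∈ Kᗮ := sub_mem hxnK hPf₀K
  have huB : u ∈ Bᗮ := (Submodule.orthogonal_le leB) huK
  have hsplitf₀ : (Submodule.orthogonalProjectionOnto S f₀ : H) + (Submodule.orthogonalProjectionOnto Sᗮ f₀ : H) = f₀ :=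
    Submodule.starProjection_add_starProjection_orthogonal (K := S) f₀
  have hPQu : PQ u = -PQ f₀ := by
    have h1 : PQ f₀ = PQ (Submodule.orthogonalProjectionOnto S f₀ : H) + PQ (Submodule.orthogonalProjectionOnto Sᗮ f₀ : H) := by
      conv_lhs => rw [← hsplitf₀]
      exact hPQadd _ _
    rw [hudef, hPQsub, hPQxn, h1]
    abel
  -- the bounds
  have hnu : ν * ‖u‖ ≤ ‖(Submodule.orthogonalProjectionOnto Tᗮ u : H)‖ := stmt15_nu_bound S T hν huS huB
  have hkey := stmt15_key_inner S T (g := f₀) huS (by rw [← hPQapp, ← hPQapp, hPQu])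
  have hbound2 : ‖u‖ ≤
      ‖(Submodule.orthogonalProjectionOnto Sᗮ ((Submodule.orthogonalProjectionOnto Tᗮ f₀ : H)) : H)‖ / ν ^ 2 := by
    by_cases hu0 : ‖u‖ = 0
    · rw [hu0]; positivity
    · have hupos : 0 < ‖u‖ := lt_of_le_of_ne (norm_nonneg u) (Ne.symm hu0)
      rw [le_div_iff₀ (by positivity)]
      have hsq : (ν * ‖u‖) ^ 2 ≤ ‖(Submodule.orthogonalProjectionOnto Tᗮ u : H)‖ ^ 2 :=
        pow_le_pow_left₀ (by positivity) hnu 2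
      nlinarith [hsq, hkey.1, hupos, hνpos,
        norm_nonneg (Submodule.orthogonalProjectionOnto Sᗮ ((Submodule.orthogonalProjectionOnto Tᗮ f₀ : H)) : H)]
  have hbound3 : ‖u‖ ≤ ‖(Submodule.orthogonalProjectionOnto Tᗮ f₀ : H)‖ / ν := by
    rw [le_div_iff₀ hνpos]
    calc ‖u‖ * ν = ν * ‖u‖ := mul_comm _ _
      _ ≤ ‖(Submodule.orthogonalProjectionOnto Tᗮ u : H)‖ := hnu
      _ ≤ ‖(Submodule.orthogonalProjectionOnto Tᗮ f₀ : H)‖ := hkey.2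
  -- part 1 : the sample consistent reconstruction
  set x := (Submodule.orthogonalProjectionOnto Sᗮ fhat : H) with hxdef
  have hfhat : fhat = PSf + x := by
    conv_lhs => rw [← Submodule.starProjection_add_starProjection_orthogonal (K := S) fhat,
      Submodule.starProjection_apply, Submodule.starProjection_apply]
    rw [hconsist]
  have hxSol : PQ (x + PSf) = 0 := by
    have hsum : x + PSf = fhat := by rw [hfhat]; abel
    rw [hsum, hPQ']
    exact hmin
  obtain ⟨hdx, hx₀K, hx₀S, hPQx₀⟩ := hsol x (Submodule.coe_mem _) hxSol
  set bx := (Submodule.orthogonalProjectionOnto B x : H) with hbxdef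
  have hbxB : bx ∈ B := by rw [hbxdef]; exact Submodule.coe_mem _
  -- uniqueness : x - bx = xn
  have hxeq : x - bx = xn := by
    set v := (x - bx) - xn with hvdef
    have hvS : v ∈ Sᗮ := sub_mem hx₀S hxnS
    have hvK : v ∈ Kᗮ := sub_mem hx₀K hxnK
    have hPQv : PQ v = 0 := by rw [hvdef, hPQsub, hPQx₀, hPQxn]; abel
    have hQv0 : (Submodule.orthogonalProjectionOnto Tᗮ v : H) = 0 := by
      have hQvS : (Submodule.orthogonalProjectionOnto Tᗮ v : H) ∈ S := by
        rw [← S.orthogonal_orthogonal]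
        rw [hPQapp] at hPQv
        have : Submodule.orthogonalProjectionOnto Sᗮ ((Submodule.orthogonalProjectionOnto Tᗮ v : H)) = 0 :=
          Subtype.ext (by rw [hPQv]; rfl)
        exact Submodule.orthogonalProjectionOnto_eq_zero_iff.mp this
      have hQvC : (Submodule.orthogonalProjectionOnto Tᗮ v : H) ∈ C :=
        Submodule.mem_inf.mpr ⟨hQvS, Submodule.coe_mem _⟩
      have hQvK : (Submodule.orthogonalProjectionOnto Tᗮ v : H) ∈ Kᗮ := hinvT' _ hvK
      exact stmt15_eq_zero_of_mem_of_mem_orth hQvC ((Submodule.orthogonal_le leC) hQvK)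
    have hvT : v ∈ T := by
      rw [← T.orthogonal_orthogonal]
      exact Submodule.orthogonalProjectionOnto_eq_zero_iff.mp (Subtype.ext (by rw [hQv0]; rfl))
    have hvB : v ∈ B := Submodule.mem_inf.mpr ⟨hvS, hvT⟩
    have hv0 : v = 0 :=
      stmt15_eq_zero_of_mem_of_mem_orth hvB ((Submodule.orthogonal_le leB) hvK)
    have := hv0
    rw [hvdef] at this
    exact sub_eq_zero.mp this
  -- decomposition of the error
  have hsplitf₀' : (Submodule.orthogonalProjectionOnto Sᗮ f₀ : H) = f₀ - (Submodule.orthogonalProjectionOnto S f₀ : H) :=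
    eq_sub_of_add_eq' hsplitf₀
  have hg : fhat - f = (bx - b) + (u - d) := by
    have hx' : x = xn + bx := by rw [← hxeq]; abel
    calc fhat - f = (a + c + (Submodule.orthogonalProjectionOnto S f₀ : H)) + (xn + bx)
          - (a + b + c + d + f₀) := by rw [← hPSf, ← hx', ← hf, hfhat]
      _ = (bx - b) + ((xn - (f₀ - (Submodule.orthogonalProjectionOnto S f₀ : H))) - d) := by abel
      _ = (bx - b) + (u - d) := by rw [← hsplitf₀', ← hudef]
  have hM : (Submodule.orthogonalProjectionOnto Bᗮ (fhat - f) : H) = u - d := by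
    apply Submodule.eq_starProjection_of_mem_orthogonal
    · exact sub_mem huB (hDB hdD)
    · have h1 : fhat - f - (u - d) = bx - b := by rw [hg]; abel
      rw [h1]
      exact Submodule.le_orthogonal_orthogonal B (sub_mem hbxB hbB)
  have hud : (inner 𝕜 u (-d) : 𝕜) = 0 := by
    rw [inner_neg_right, Submodule.inner_left_of_mem_orthogonal (leD hdD) huK, neg_zero]
  have hpart1 : ‖(Submodule.orthogonalProjectionOnto Bᗮ (fhat - f) : H)‖ ^ 2 = ‖d‖ ^ 2 + ‖u‖ ^ 2 := by
    rw [hM, sub_eq_add_neg, stmt15_norm_add_sq hud, norm_neg]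
    ring
  exact ⟨hpart1, hbound2, hbound3⟩
end

section
/- Let f ∈ H, let f̂ be a sample consistent reconstruction of f, and set t̂ = P_T f̂. Then t̂ ∈ T, t̂ satisfies P_T P_S (t̂ − f) = 0 (i.e., t̂ is a strictly guided reconstruction of f), and t̂ − (f − P_{S∩T⊥} f) ∈ S⊥, i.e., t̂ is the oblique projection of the reduced signal f − P_{S∩T⊥} f onto T along S⊥ (equivalently, P_S t̂ = P_S f − P_{S∩T⊥} f). -/
/-- if `fhat` is a sample consistent reconstruction of `f` and `that = P_T fhat`,
then `that ∈ T`, `P_T P_S (that − f) = 0` (`that` is a strictly guided reconstruction of `f`),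
and `that − (f − P_{S∩T⊥} f) ∈ S⊥`, i.e. `P_S that = P_S f − P_{S∩T⊥} f`. -/
theorem stmt_16 {𝕜 H : Type*} [RCLike 𝕜] [NormedAddCommGroup H] [InnerProductSpace 𝕜 H]
    [CompleteSpace H] (S T : Submodule 𝕜 H)
    [Submodule.HasOrthogonalProjection S] [Submodule.HasOrthogonalProjection T]
    [Submodule.HasOrthogonalProjection (S ⊓ Tᗮ)]
    (f fhat : H)
    (hconsist : (Submodule.orthogonalProjectionOnto S fhat : H) = (Submodule.orthogonalProjectionOnto S f : H))
    (hmin : (Submodule.orthogonalProjectionOnto Sᗮ (fhat - (Submodule.orthogonalProjectionOnto T fhat : H)) : H) = 0) :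
    (Submodule.orthogonalProjectionOnto T fhat : H) ∈ T ∧
    (Submodule.orthogonalProjectionOnto T
      ((Submodule.orthogonalProjectionOnto S ((Submodule.orthogonalProjectionOnto T fhat : H) - f) : H)) : H) = 0 ∧
    (Submodule.orthogonalProjectionOnto T fhat : H) - (f - (Submodule.orthogonalProjectionOnto (S ⊓ Tᗮ) f : H)) ∈ Sᗮ ∧
    (Submodule.orthogonalProjectionOnto S ((Submodule.orthogonalProjectionOnto T fhat : H)) : H) =
      (Submodule.orthogonalProjectionOnto S f : H) - (Submodule.orthogonalProjectionOnto (S ⊓ Tᗮ) f : H) := by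
  set t : H := (Submodule.orthogonalProjectionOnto T fhat : H) with ht
  have htT : t ∈ T := (Submodule.orthogonalProjectionOnto T fhat).2
  -- fhat - t ∈ S
  have hS : fhat - t ∈ S := by
    have h0 : Submodule.orthogonalProjectionOnto Sᗮ (fhat - t) = 0 := by
      exact_mod_cast hmin
    have := Submodule.orthogonalProjectionOnto_eq_zero_iff.mp h0
    rwa [Submodule.orthogonal_orthogonal] at this
  -- fhat - t ∈ Tᗮ
  have hTperp : fhat - t ∈ Tᗮ := Submodule.sub_starProjection_mem_orthogonal (K := T) fhat
  -- f - fhat ∈ Sᗮ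
  have hfsub : f - fhat ∈ Sᗮ := by
    have h1 : f - (Submodule.orthogonalProjectionOnto S f : H) ∈ Sᗮ := Submodule.sub_starProjection_mem_orthogonal (K := S) f
    have h2 : fhat - (Submodule.orthogonalProjectionOnto S fhat : H) ∈ Sᗮ := Submodule.sub_starProjection_mem_orthogonal (K := S) fhat
    have h3 := Sᗮ.sub_mem h1 h2
    have : (f - (Submodule.orthogonalProjectionOnto S f : H)) - (fhat - (Submodule.orthogonalProjectionOnto S fhat : H))
        = f - fhat := by rw [hconsist]; abel
    rwa [this] at h3
  have hSle : Sᗮ ≤ (S ⊓ Tᗮ)ᗮ := Submodule.orthogonal_le inf_le_left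
  have hTle : T ≤ (S ⊓ Tᗮ)ᗮ :=
    le_trans (Submodule.le_orthogonal_orthogonal T) (Submodule.orthogonal_le inf_le_right)
  -- key: P_{S∩Tᗮ} f = fhat - t
  have hkey : (Submodule.orthogonalProjectionOnto (S ⊓ Tᗮ) f : H) = fhat - t := by
    refine Submodule.eq_starProjection_of_mem_orthogonal (u := f) ⟨hS, hTperp⟩ ?_
    have : f - (fhat - t) = (f - fhat) + t := by abel
    rw [this]
    exact ((S ⊓ Tᗮ)ᗮ).add_mem (hSle hfsub) (hTle htT)
  -- P_S t = P_S f - (fhat - t)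
  have h4 : (Submodule.orthogonalProjectionOnto S t : H) =
      (Submodule.orthogonalProjectionOnto S f : H) - (fhat - t) := by
    have htt : t = fhat - (fhat - t) := (sub_sub_cancel _ _).symm
    calc (Submodule.orthogonalProjectionOnto S t : H)
        = (Submodule.orthogonalProjectionOnto S (fhat - (fhat - t)) : H) := by rw [← htt]
      _ = (Submodule.orthogonalProjectionOnto S fhat : H) - (Submodule.orthogonalProjectionOnto S (fhat - t) : H) := by
          rw [map_sub]; rfl
      _ = (Submodule.orthogonalProjectionOnto S f : H) - (fhat - t) := by
          rw [hconsist, ← Submodule.starProjection_apply S (fhat - t), Submodule.starProjection_eq_self_iff.mpr hS]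
  refine ⟨htT, ?_, ?_, ?_⟩
  · -- P_T (P_S (t - f)) = 0
    have hmem : (Submodule.orthogonalProjectionOnto S (t - f) : H) ∈ Tᗮ := by
      have : (Submodule.orthogonalProjectionOnto S (t - f) : H) =
          (Submodule.orthogonalProjectionOnto S t : H) - (Submodule.orthogonalProjectionOnto S f : H) := by
        rw [map_sub]; rfl
      rw [this, h4]
      have : (Submodule.orthogonalProjectionOnto S f : H) - (fhat - t) -
          (Submodule.orthogonalProjectionOnto S f : H) = -(fhat - t) := by abel
      rw [this]
      exact Tᗮ.neg_mem hTperp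
    have := Submodule.orthogonalProjectionOnto_apply_of_mem_orthogonal hmem
    rw [this]; rfl
  · rw [hkey]
    have : t - (f - (fhat - t)) = -(f - fhat) := by abel
    rw [this]
    exact Sᗮ.neg_mem hfsub
  · rw [h4, hkey]
end

section
/- Let f ∈ H, let f̂ be a sample consistent reconstruction of f, let 0 < α ≤ 1, let ρ = (1 − α)/α, and set f̂_α = α f̂ + (1 − α) P_T f̂. Then f̂_α satisfies the regularized reconstruction equation (P_S + ρ P_{T⊥}) f̂_α = P_S f; in particular, every point of the reconstruction interval between f̂ and P_T f̂ (except the endpoint P_T f̂) solves the regularization problem for the corresponding value of ρ > 0. -/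
/-- if `fhat` is a sample consistent reconstruction of `f`, `0 < α ≤ 1`,
`ρ = (1 − α)/α` and `fα = α • fhat + (1 − α) • P_T fhat`, then `fα` satisfies the regularized
reconstruction equation `(P_S + ρ P_{T⊥}) fα = P_S f`. -/
theorem stmt_17 {𝕜 H : Type*} [RCLike 𝕜] [NormedAddCommGroup H] [InnerProductSpace 𝕜 H]
    [CompleteSpace H] (S T : Submodule 𝕜 H)
    [Submodule.HasOrthogonalProjection S] [Submodule.HasOrthogonalProjection T]
    (f fhat : H)
    (hconsist : (Submodule.orthogonalProjectionOnto S fhat : H) = (Submodule.orthogonalProjectionOnto S f : H))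
    (hmin : (Submodule.orthogonalProjectionOnto Sᗮ (fhat - (Submodule.orthogonalProjectionOnto T fhat : H)) : H) = 0)
    (α : ℝ) (hα0 : 0 < α) (hα1 : α ≤ 1) (ρ : ℝ) (hρ : ρ = (1 - α) / α) :
    (Submodule.orthogonalProjectionOnto S
        ((α : 𝕜) • fhat + ((1 - α : ℝ) : 𝕜) • (Submodule.orthogonalProjectionOnto T fhat : H)) : H) +
      ((ρ : ℝ) : 𝕜) • (Submodule.orthogonalProjectionOnto Tᗮ
        ((α : 𝕜) • fhat + ((1 - α : ℝ) : 𝕜) • (Submodule.orthogonalProjectionOnto T fhat : H)) : H) =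
      (Submodule.orthogonalProjectionOnto S f : H) := by
  set w : H := fhat - (Submodule.orthogonalProjectionOnto T fhat : H) with hwdef
  set p : H := (Submodule.orthogonalProjectionOnto S fhat : H) with hpdef
  have hw : w ∈ S := by
    have h0 : Submodule.orthogonalProjectionOnto Sᗮ w = 0 := by
      exact Subtype.ext (by simpa using hmin)
    have := Submodule.orthogonalProjectionOnto_eq_zero_iff.mp h0
    rwa [Submodule.orthogonal_orthogonal] at this
  have hPSw : (Submodule.orthogonalProjectionOnto S w : H) = w :=
    Submodule.starProjection_eq_self_iff.mpr hw
  have hPSt : (Submodule.orthogonalProjectionOnto S ((Submodule.orthogonalProjectionOnto T fhat : H)) : H) = p - w := by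
    have : (Submodule.orthogonalProjectionOnto S (fhat - w) : H) = p - w := by
      rw [map_sub]; push_cast; rw [hPSw, hpdef]
    simpa [hwdef] using this
  have hPT0 : (Submodule.orthogonalProjectionOnto Tᗮ ((Submodule.orthogonalProjectionOnto T fhat : H)) : H) = 0 := by
    have : Submodule.orthogonalProjectionOnto Tᗮ ((Submodule.orthogonalProjectionOnto T fhat : H)) = 0 :=
      Submodule.orthogonalProjectionOnto_eq_zero_iff.mpr
        (Submodule.le_orthogonal_orthogonal T (Submodule.orthogonalProjectionOnto T fhat).2)
    rw [this]; rfl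
  have hPTf : (Submodule.orthogonalProjectionOnto Tᗮ fhat : H) = w := by
    simpa [hwdef] using Submodule.starProjection_orthogonal_val (K := T) fhat
  have hα : (α : 𝕜) ≠ 0 := by
    exact_mod_cast (RCLike.ofReal_ne_zero (K := 𝕜)).mpr hα0.ne'
  have hρα : ((ρ : ℝ) : 𝕜) * (α : 𝕜) = ((1 - α : ℝ) : 𝕜) := by
    have : ρ * α = 1 - α := by
      rw [hρ]; field_simp
    push_cast [← this]; ring
  rw [← hconsist]
  simp only [map_add, map_smul, Submodule.coe_add, Submodule.coe_smul, hPSt, hPT0, hPTf]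
  rw [smul_zero, add_zero, smul_smul, hρα, ← hpdef]
  have h1 : (α : 𝕜) + ((1 - α : ℝ) : 𝕜) = 1 := by push_cast; ring
  calc (α : 𝕜) • p + ((1 - α : ℝ) : 𝕜) • (p - w) + ((1 - α : ℝ) : 𝕜) • w
      = ((α : 𝕜) + ((1 - α : ℝ) : 𝕜)) • p := by
        rw [smul_sub, add_smul]; abel
    _ = p := by rw [h1, one_smul]
end

section
/- Let ν := inf{‖P_{T⊥} x‖ / ‖x‖ : x ∈ P_{S⊥}(T⊥), x ≠ 0}, suppose ν > 0, let f ∈ H, and let x̂_n be the minimal-norm element of {x ∈ S⊥ : P_{S⊥} P_{T⊥}(x + P_S f) = 0}. Define the projection-onto-convex-sets (Richardson) iteration by x₀ = 0 and x_m = x_{m−1} − P_{S⊥} P_{T⊥} x_{m−1} − P_{S⊥} P_{T⊥} P_S f for m ≥ 1. Then for all m ≥ 0 the iterates satisfy ‖x_m − x̂_n‖ ≤ (1 − ν²)^m ‖x̂_n‖. -/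
namespace Stmt19Aux

open Submodule

variable {𝕜 H : Type*} [RCLike 𝕜] [NormedAddCommGroup H] [InnerProductSpace 𝕜 H]

noncomputable def pj (K : Submodule 𝕜 H) [HasOrthogonalProjection K] : H →L[𝕜] H :=
  K.subtypeL ∘L orthogonalProjection K

lemma pj_apply (K : Submodule 𝕜 H) [HasOrthogonalProjection K] (u : H) :
    pj K u = (orthogonalProjection K u : H) := rfl

lemma pj_mem (K : Submodule 𝕜 H) [HasOrthogonalProjection K] (u : H) : pj K u ∈ K :=
  (orthogonalProjection K u).2

lemma pj_self (K : Submodule 𝕜 H) [HasOrthogonalProjection K] {u : H} (hu : u ∈ K) :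
    pj K u = u := starProjection_eq_self_iff.mpr hu

lemma pj_sym (K : Submodule 𝕜 H) [HasOrthogonalProjection K] (u v : H) :
    (inner 𝕜 (pj K u) v : 𝕜) = inner 𝕜 u (pj K v) :=
  inner_starProjection_left_eq_right _ u v

lemma pj_idem (K : Submodule 𝕜 H) [HasOrthogonalProjection K] (u : H) :
    pj K (pj K u) = pj K u := pj_self K (pj_mem K u)

lemma pj_orthogonal_sub (K : Submodule 𝕜 H) [HasOrthogonalProjection K] (u : H) :
    pj Kᗮ u = u - pj K u := starProjection_orthogonal_val u

lemma pyth (K : Submodule 𝕜 H) [HasOrthogonalProjection K] (u : H) :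
    ‖u‖ ^ 2 = ‖pj K u‖ ^ 2 + ‖pj Kᗮ u‖ ^ 2 :=
  norm_sq_eq_add_norm_sq_projection u K

variable (S T : Submodule 𝕜 H) [HasOrthogonalProjection S] [HasOrthogonalProjection T]

noncomputable def M0 : Submodule 𝕜 H := Tᗮ.map (pj Sᗮ : H →ₗ[𝕜] H)

noncomputable def Mcl : Submodule 𝕜 H := (M0 S T).topologicalClosure

lemma mem_M0 (u : H) : pj Sᗮ (pj Tᗮ u) ∈ M0 S T := ⟨pj Tᗮ u, pj_mem _ _, rfl⟩

lemma M0_le_Mcl : M0 S T ≤ Mcl S T := Submodule.le_topologicalClosure _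

lemma M0_le : M0 S T ≤ Sᗮ := by rintro u ⟨y, hy, rfl⟩; exact pj_mem _ y

lemma Mcl_le : Mcl S T ≤ Sᗮ :=
  Submodule.topologicalClosure_minimal _ (M0_le S T) S.isClosed_orthogonal

lemma nu_bound {ν : ℝ} (hK0 : ∀ y ∈ Tᗮ, ν * ‖pj Sᗮ y‖ ≤ ‖pj Tᗮ (pj Sᗮ y)‖) :
    ∀ u ∈ Mcl S T, ν * ‖u‖ ≤ ‖pj Tᗮ u‖ := by
  intro u hu
  have hcl : IsClosed {w : H | ν * ‖w‖ ≤ ‖pj Tᗮ w‖} :=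
    isClosed_le (continuous_const.mul continuous_norm) (pj Tᗮ).continuous.norm
  have hsub : ((M0 S T : Submodule 𝕜 H) : Set H) ⊆ {w : H | ν * ‖w‖ ≤ ‖pj Tᗮ w‖} := by
    rintro w ⟨y, hy, rfl⟩; exact hK0 y hy
  have hu' : u ∈ closure ((M0 S T : Submodule 𝕜 H) : Set H) := by
    rw [← Submodule.topologicalClosure_coe]; exact hu
  exact hcl.closure_subset_iff.mpr hsub hu'

lemma contraction {c : ℝ} (hc0 : 0 ≤ c)
    (hPTsq : ∀ u ∈ Mcl S T, ‖pj T u‖ ^ 2 ≤ c * ‖u‖ ^ 2) :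
    ∀ u ∈ Mcl S T, ‖u - pj Sᗮ (pj Tᗮ u)‖ ≤ c * ‖u‖ := by
  intro u hu
  have huS : u ∈ Sᗮ := Mcl_le S T hu
  set v : H := pj Sᗮ (pj T u) with hv
  have hveq : u - pj Sᗮ (pj Tᗮ u) = v := by
    rw [pj_orthogonal_sub T u, map_sub, pj_self Sᗮ huS]; abel
  have hvM : v ∈ Mcl S T := by
    rw [← hveq]; exact (Mcl S T).sub_mem hu (M0_le_Mcl S T (mem_M0 S T u))
  have hvS : v ∈ Sᗮ := pj_mem _ _
  have h1 : (inner 𝕜 v v : 𝕜) = inner 𝕜 (pj T u) (pj T v) := by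
    have e1 : (inner 𝕜 v v : 𝕜) = inner 𝕜 (pj T u) v := by
      rw [hv, pj_sym Sᗮ (pj T u) v]
      rw [pj_self Sᗮ hvS]
    have e2 : (inner 𝕜 (pj T u) v : 𝕜) = inner 𝕜 u (pj T v) := pj_sym T u v
    have e3 : (inner 𝕜 (pj T u) (pj T v) : 𝕜) = inner 𝕜 u (pj T v) := by
      rw [pj_sym T u (pj T v), pj_idem T v]
    rw [e1, e2, ← e3]
  have h2 : ‖v‖ ^ 2 ≤ ‖pj T u‖ * ‖pj T v‖ := by
    have hA : ‖v‖ ^ 2 = ‖(inner 𝕜 v v : 𝕜)‖ := by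
      rw [inner_self_eq_norm_sq_to_K]
      simp [abs_of_nonneg (sq_nonneg ‖v‖)]
    rw [hA, h1]
    exact norm_inner_le_norm _ _
  have ha := hPTsq u hu
  have hb := hPTsq v hvM
  rw [hveq]
  rcases eq_or_lt_of_le (norm_nonneg v) with h | h
  · nlinarith [norm_nonneg u]
  · have s1 : ‖pj T u‖ ^ 2 * ‖pj T v‖ ^ 2 ≤ (c * ‖u‖ ^ 2) * (c * ‖v‖ ^ 2) :=
      mul_le_mul ha hb (sq_nonneg _) (by positivity)
    have s2 : (‖v‖ ^ 2) ^ 2 ≤ (‖pj T u‖ * ‖pj T v‖) ^ 2 :=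
      pow_le_pow_left₀ (sq_nonneg _) h2 2
    have s3 : ‖v‖ ^ 2 ≤ (c * ‖u‖) ^ 2 := by nlinarith [mul_pos h h]
    nlinarith [mul_nonneg hc0 (norm_nonneg u)]

lemma xn_mem [CompleteSpace H] {xn : H} (hxnS : xn ∈ Sᗮ)
    (hmin : ∀ p : H, p ∈ T → p ∈ Sᗮ → ‖xn‖ ≤ ‖xn - p‖) : xn ∈ Mcl S T := by
  rw [Mcl, ← Submodule.orthogonal_orthogonal_eq_closure, Submodule.mem_orthogonal]
  intro z hz
  set w : H := pj Sᗮ z with hw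
  have hwS : w ∈ Sᗮ := pj_mem _ _
  have hw_inner : (inner 𝕜 z xn : 𝕜) = inner 𝕜 w xn := by
    rw [hw, pj_sym Sᗮ z xn, pj_self Sᗮ hxnS]
  have hwT : w ∈ T := by
    rw [← Submodule.orthogonal_orthogonal T, Submodule.mem_orthogonal]
    intro y hy
    have h1 : (inner 𝕜 (pj Sᗮ y) z : 𝕜) = 0 :=
      (Submodule.mem_orthogonal _ z).1 hz _ ⟨y, hy, rfl⟩
    rw [hw, ← pj_sym Sᗮ y z]
    exact h1
  have hzero : (inner 𝕜 xn w : 𝕜) = 0 := by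
    by_cases hw0 : w = 0
    · simp [hw0]
    · have hmin' : ∀ p ∈ (𝕜 ∙ w), ‖xn‖ ≤ ‖xn - p‖ := by
        intro p hp
        obtain ⟨a, rfl⟩ := Submodule.mem_span_singleton.1 hp
        exact hmin _ (T.smul_mem _ hwT) (Sᗮ.smul_mem _ hwS)
      have h0K : (0 : H) ∈ (𝕜 ∙ w) := Submodule.zero_mem _
      have hinf : ‖xn - 0‖ = ⨅ q : (𝕜 ∙ w), ‖xn - q‖ := by
        apply le_antisymm
        · exact le_ciInf fun q => by simpa using hmin' q q.2
        · have hbdd : BddBelow (Set.range fun q : (𝕜 ∙ w) => ‖xn - (q : H)‖) := by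
            refine ⟨0, ?_⟩
            rintro r ⟨q, rfl⟩
            exact norm_nonneg _
          simpa using ciInf_le hbdd (⟨0, h0K⟩ : (𝕜 ∙ w))
      have hfin := (norm_eq_iInf_iff_inner_eq_zero (𝕜 ∙ w) h0K).1 hinf w
        (Submodule.mem_span_singleton_self w)
      simpa using hfin
  rw [hw_inner, inner_eq_zero_symm]
  exact hzero

end Stmt19Aux
open Stmt19Aux in
/-- with `ν := inf {‖P_{T⊥} x‖/‖x‖ : x ∈ P_{S⊥}(T⊥), x ≠ 0} > 0` and `xn` the
minimal-norm element of `{x ∈ S⊥ : P_{S⊥} P_{T⊥}(x + P_S f) = 0}`, the POCS (Richardson)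
iteration `x₀ = 0`, `x_m = x_{m−1} − P_{S⊥} P_{T⊥} x_{m−1} − P_{S⊥} P_{T⊥} P_S f` satisfies
`‖x_m − xn‖ ≤ (1 − ν²)^m ‖xn‖` for all `m ≥ 0`. -/
theorem stmt_19 {𝕜 H : Type*} [RCLike 𝕜] [NormedAddCommGroup H] [InnerProductSpace 𝕜 H]
    [CompleteSpace H] (S T : Submodule 𝕜 H)
    [Submodule.HasOrthogonalProjection S] [Submodule.HasOrthogonalProjection T]
    (ν : ℝ)
    (hν : ν = sInf {r : ℝ | ∃ y ∈ Tᗮ, (Submodule.orthogonalProjectionOnto Sᗮ y : H) ≠ 0 ∧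
      r = ‖(Submodule.orthogonalProjectionOnto Tᗮ ((Submodule.orthogonalProjectionOnto Sᗮ y : H)) : H)‖ /
        ‖(Submodule.orthogonalProjectionOnto Sᗮ y : H)‖})
    (hνpos : 0 < ν) (f : H) (xn : H)
    (hxn : xn ∈ Sᗮ ∧
      (Submodule.orthogonalProjectionOnto Sᗮ ((xn + (Submodule.orthogonalProjectionOnto S f : H)) -
        (Submodule.orthogonalProjectionOnto T (xn + (Submodule.orthogonalProjectionOnto S f : H)) : H)) : H) = 0 ∧
      ∀ x : H, x ∈ Sᗮ →
        (Submodule.orthogonalProjectionOnto Sᗮ ((x + (Submodule.orthogonalProjectionOnto S f : H)) -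
          (Submodule.orthogonalProjectionOnto T (x + (Submodule.orthogonalProjectionOnto S f : H)) : H)) : H) = 0 →
        ‖xn‖ ≤ ‖x‖)
    (x : ℕ → H) (hx0 : x 0 = 0)
    (hxiter : ∀ m : ℕ, x (m + 1) =
      x m - (Submodule.orthogonalProjectionOnto Sᗮ ((Submodule.orthogonalProjectionOnto Tᗮ (x m) : H)) : H) -
        (Submodule.orthogonalProjectionOnto Sᗮ
          ((Submodule.orthogonalProjectionOnto Tᗮ ((Submodule.orthogonalProjectionOnto S f : H)) : H)) : H)) :
    ∀ m : ℕ, ‖x m - xn‖ ≤ (1 - ν ^ 2) ^ m * ‖xn‖ := by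
  obtain ⟨hxnS, hxneq0, hxnmin0⟩ := hxn
  set g : H := (Submodule.orthogonalProjectionOnto S f : H) with hg
  have hxneq : pj Sᗮ ((xn + g) - pj T (xn + g)) = 0 := hxneq0
  have hxnmin : ∀ y : H, y ∈ Sᗮ → pj Sᗮ ((y + g) - pj T (y + g)) = 0 → ‖xn‖ ≤ ‖y‖ := hxnmin0
  have hxiter' : ∀ m : ℕ, x (m + 1) = x m - pj Sᗮ (pj Tᗮ (x m)) - pj Sᗮ (pj Tᗮ g) := hxiter
  set N : Set ℝ := {r : ℝ | ∃ y ∈ Tᗮ, pj Sᗮ y ≠ 0 ∧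
    r = ‖pj Tᗮ (pj Sᗮ y)‖ / ‖pj Sᗮ y‖} with hN
  have hν' : ν = sInf N := hν
  have hQTnorm : ∀ u : H, ‖pj Tᗮ u‖ ≤ ‖u‖ := fun u => by
    nlinarith [pyth T u, norm_nonneg (pj T u), norm_nonneg (pj Tᗮ u), norm_nonneg u]
  have hbdd : BddBelow N := ⟨0, by rintro r ⟨y, hy, h0, rfl⟩; positivity⟩
  have hνle : ∀ r ∈ N, ν ≤ r := fun r hr => hν' ▸ csInf_le hbdd hr
  have hne : N.Nonempty := by
    by_contra hcon
    rw [Set.not_nonempty_iff_eq_empty] at hcon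
    rw [hcon, Real.sInf_empty] at hν'
    linarith
  have hν1 : ν ≤ 1 := by
    obtain ⟨r, hr⟩ := hne
    refine le_trans (hνle r hr) ?_
    obtain ⟨y, hy, h0, rfl⟩ := hr
    rw [div_le_one (norm_pos_iff.mpr h0)]
    exact hQTnorm _
  set c : ℝ := 1 - ν ^ 2 with hc
  have hc0 : 0 ≤ c := by nlinarith
  have hK0 : ∀ y ∈ Tᗮ, ν * ‖pj Sᗮ y‖ ≤ ‖pj Tᗮ (pj Sᗮ y)‖ := by
    intro y hy
    by_cases h0 : pj Sᗮ y = 0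
    · simp [h0]
    · have hrN : ‖pj Tᗮ (pj Sᗮ y)‖ / ‖pj Sᗮ y‖ ∈ N := ⟨y, hy, h0, rfl⟩
      have hle := hνle _ hrN
      have hp : (0:ℝ) < ‖pj Sᗮ y‖ := norm_pos_iff.mpr h0
      calc ν * ‖pj Sᗮ y‖ ≤ (‖pj Tᗮ (pj Sᗮ y)‖ / ‖pj Sᗮ y‖) * ‖pj Sᗮ y‖ :=
            mul_le_mul_of_nonneg_right hle hp.le
        _ = ‖pj Tᗮ (pj Sᗮ y)‖ := div_mul_cancel₀ _ hp.ne'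
  have hK := nu_bound S T hK0
  have hPTsq : ∀ u ∈ Mcl S T, ‖pj T u‖ ^ 2 ≤ c * ‖u‖ ^ 2 := by
    intro u hu
    nlinarith [pyth T u, hK u hu, norm_nonneg (pj Tᗮ u), norm_nonneg u,
      mul_nonneg hνpos.le (norm_nonneg u)]
  have hcontr := contraction S T hc0 hPTsq
  have hminTS : ∀ p : H, p ∈ T → p ∈ Sᗮ → ‖xn‖ ≤ ‖xn - p‖ := by
    intro p hpT hpS
    apply hxnmin _ (Sᗮ.sub_mem hxnS hpS)
    have e : xn - p + g = (xn + g) - p := by abel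
    have e3 : pj T (xn + g - p) = pj T (xn + g) - p := by
      rw [map_sub, pj_self T hpT]
    rw [e, e3]
    have e2 : xn + g - p - (pj T (xn + g) - p) = (xn + g) - pj T (xn + g) := by abel
    rw [e2]
    exact hxneq
  have hxnM : xn ∈ Mcl S T := xn_mem S T hxnS hminTS
  have hsol : pj Sᗮ (pj Tᗮ g) = - pj Sᗮ (pj Tᗮ xn) := by
    have h2 : (xn + g) - pj T (xn + g) = pj Tᗮ (xn + g) := (pj_orthogonal_sub T _).symm
    rw [h2, map_add, map_add] at hxneq
    rw [add_comm] at hxneq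
    exact eq_neg_of_add_eq_zero_left hxneq
  have hrec : ∀ m : ℕ, x (m + 1) - xn = (x m - xn) - pj Sᗮ (pj Tᗮ (x m - xn)) := by
    intro m
    rw [hxiter' m, hsol, map_sub (pj Tᗮ), map_sub (pj Sᗮ)]
    abel
  have key : ∀ m : ℕ, (x m - xn) ∈ Mcl S T ∧ ‖x m - xn‖ ≤ c ^ m * ‖xn‖ := by
    intro m
    induction m with
    | zero =>
      constructor
      · rw [hx0]
        simpa using (Mcl S T).neg_mem hxnM
      · simp [hx0]
    | succ m ih =>
      obtain ⟨ihm, ihb⟩ := ih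
      have hmem : x (m + 1) - xn ∈ Mcl S T := by
        rw [hrec m]
        exact (Mcl S T).sub_mem ihm (M0_le_Mcl S T (mem_M0 S T _))
      refine ⟨hmem, ?_⟩
      rw [hrec m]
      calc ‖(x m - xn) - pj Sᗮ (pj Tᗮ (x m - xn))‖ ≤ c * ‖x m - xn‖ := hcontr _ ihm
        _ ≤ c * (c ^ m * ‖xn‖) := mul_le_mul_of_nonneg_left ihb hc0
        _ = c ^ (m + 1) * ‖xn‖ := by ring
  exact fun m => (key m).2
end
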